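/- arXiv:1101.1412 — 6 statements merged into one kernel-verified Lean document; each statement's English description precedes it below -/
import Mathlib

section
/- Let G be a finite digraph and e an edge of G such that the terminal vertex of e has in-degree 1. Then for any vertex v of G distinct from the terminal vertex of e, the number of directed spanning subtrees of G/e (the graph with e contracted) with origin v equals the number of directed spanning subtrees of G with origin v. -/
/-- A digraph: a (multi)graph in which multiple edges and loops are allowed,
together with an orientation.  An edge `e` runs from `src e` to `tgt e`. -/
structure MultiDigraph (V E : Type) where
  src : E → V
  tgt : E → V

namespace MultiDigraph

variable {V E : Type}

/-- One step from `a` to `b` along an edge belonging to `T`. -/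
def step (G : MultiDigraph V E) (T : Set E) (a b : V) : Prop :=
  ∃ e ∈ T, G.src e = a ∧ G.tgt e = b

/-- Reachability by a directed path using only edges of `T`. -/
def reach (G : MultiDigraph V E) (T : Set E) : V → V → Prop :=
  Relation.ReflTransGen (G.step T)

/-- `T` is a directed spanning subtree of `G` with origin `u`: no edge of `T`
ends at `u`, every other vertex is the terminal vertex of exactly one edge of
`T`, and every vertex is reachable from `u` through `T` (which forces
connectedness and the absence of cycles). -/
def IsSpanTree (G : MultiDigraph V E) (u : V) (T : Set E) : Prop :=
  (∀ e ∈ T, G.tgt e ≠ u) ∧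
  (∀ w, w ≠ u → ∃! e, e ∈ T ∧ G.tgt e = w) ∧
  (∀ w, G.reach T u w)

/-- The number of directed spanning subtrees of `G` with origin `u`. -/
noncomputable def treeCount (G : MultiDigraph V E) (u : V) : ℕ :=
  Set.ncard {T : Set E | G.IsSpanTree u T}

/-- The digraph `G \ e` obtained by deleting the edge `e`. -/
def delete (G : MultiDigraph V E) (e : E) : MultiDigraph V {f : E // f ≠ e} :=
  ⟨fun f => G.src f.1, fun f => G.tgt f.1⟩

/-- The digraph `G / e` obtained by contracting the edge `e` to a point:
the two endpoints of `e` are identified and `e` is removed. -/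
def contract (G : MultiDigraph V E) (e : E) :
    MultiDigraph (Quot fun a b => a = G.src e ∧ b = G.tgt e) {f : E // f ≠ e} :=
  ⟨fun f => Quot.mk _ (G.src f.1), fun f => Quot.mk _ (G.tgt f.1)⟩

end MultiDigraph

section Aux

open MultiDigraph

variable {V E : Type} {G : MultiDigraph V E} {e : E}

/-- Explicit description of the equivalence generated by contracting `e`. -/
private lemma quot_mk_eq_iff (a b : V) :
    (Quot.mk (fun a b => a = G.src e ∧ b = G.tgt e) a =
     Quot.mk (fun a b => a = G.src e ∧ b = G.tgt e) b) ↔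
    (a = b ∨ (a = G.src e ∧ b = G.tgt e) ∨ (a = G.tgt e ∧ b = G.src e)) := by
  have main : ∀ a b : V, Relation.EqvGen (fun a b => a = G.src e ∧ b = G.tgt e) a b →
      (a = b ∨ (a = G.src e ∧ b = G.tgt e) ∨ (a = G.tgt e ∧ b = G.src e)) := by
    intro a b h'
    induction h' with
    | rel x y hxy => exact Or.inr (Or.inl hxy)
    | refl x => exact Or.inl rfl
    | symm x y _ ih =>
        rcases ih with rfl | ⟨rfl, rfl⟩ | ⟨rfl, rfl⟩ <;> tauto
    | trans x y z _ _ ih1 ih2 =>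
        rcases ih1 with rfl | ⟨rfl, rfl⟩ | ⟨rfl, rfl⟩ <;>
          rcases ih2 with h | ⟨h1, h2⟩ | ⟨h1, h2⟩ <;> tauto
  constructor
  · intro h
    exact main a b (Quot.eq.mp h)
  · rintro (rfl | ⟨rfl, rfl⟩ | ⟨rfl, rfl⟩)
    · rfl
    · exact Quot.sound ⟨rfl, rfl⟩
    · exact (Quot.sound ⟨rfl, rfl⟩).symm

/-- `e` is the unique edge into `G.tgt e`. -/
private lemma uniq_edge (hdeg : {f : E | G.tgt f = G.tgt e}.ncard = 1)
    {f : E} (hf : G.tgt f = G.tgt e) : f = e := by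
  obtain ⟨a, ha⟩ := Set.ncard_eq_one.mp hdeg
  have h1 : f ∈ {f : E | G.tgt f = G.tgt e} := hf
  have h2 : e ∈ {f : E | G.tgt f = G.tgt e} := rfl
  rw [ha] at h1 h2
  rw [Set.mem_singleton_iff] at h1 h2
  rw [h1, h2]

/-- Every spanning tree contains `e`. -/
private lemma mem_of_tree (hdeg : {f : E | G.tgt f = G.tgt e}.ncard = 1)
    {v : V} (hv : v ≠ G.tgt e) {T : Set E} (hT : G.IsSpanTree v T) : e ∈ T := by
  obtain ⟨f, ⟨hfT, hft⟩, _⟩ := hT.2.1 (G.tgt e) (Ne.symm hv)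
  have := uniq_edge hdeg hft
  rwa [this] at hfT

/-- If a spanning tree of `G` exists (with origin `v ≠ G.tgt e`), `e` is not a loop. -/
private lemma noloop (hdeg : {f : E | G.tgt f = G.tgt e}.ncard = 1)
    {v : V} (hv : v ≠ G.tgt e) {T : Set E} (hT : G.IsSpanTree v T) :
    G.src e ≠ G.tgt e := by
  intro hst
  have key : ∀ w, G.reach T v w → w ≠ G.tgt e := by
    intro w hw
    induction hw with
    | refl => exact hv
    | tail _ hstep ih =>
        rename_i b c hvb
        intro hc
        obtain ⟨f, hfT, hsrc, htgt⟩ := hstep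
        have hfe : f = e := uniq_edge hdeg (by rw [htgt, hc])
        exact ih (by rw [← hsrc, hfe, hst])
  exact key _ (hT.2.2 (G.tgt e)) rfl

/-- If a spanning tree of `G/e` exists (origin `[v]`, `v ≠ G.tgt e`), `e` is not a loop. -/
private lemma noloop' (hdeg : {f : E | G.tgt f = G.tgt e}.ncard = 1)
    {v : V} (hv : v ≠ G.tgt e) {T' : Set {f : E // f ≠ e}}
    (hT' : (G.contract e).IsSpanTree (Quot.mk _ v) T') :
    G.src e ≠ G.tgt e := by
  intro hst
  have htv : (Quot.mk _ (G.tgt e) : Quot fun a b => a = G.src e ∧ b = G.tgt e)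
      ≠ Quot.mk _ v := by
    intro hq
    rcases (quot_mk_eq_iff _ _).mp hq with h | ⟨h1, h2⟩ | ⟨h1, h2⟩
    · exact hv h.symm
    · exact hv h2
    · exact hv (h2.trans hst)
  obtain ⟨f, ⟨hfT, htgt⟩, _⟩ := hT'.2.1 _ htv
  have htgt' := (quot_mk_eq_iff _ _).mp htgt
  have : G.tgt f.1 = G.tgt e := by
    rcases htgt' with h | ⟨h1, h2⟩ | ⟨h1, h2⟩
    · exact h
    · exact h1.trans hst
    · exact h1
  exact f.2 (uniq_edge hdeg this)

/-- Spanning trees of `G` induce spanning trees of `G/e`. -/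
private lemma phi_tree (hdeg : {f : E | G.tgt f = G.tgt e}.ncard = 1)
    {v : V} (hv : v ≠ G.tgt e) {T : Set E} (hT : G.IsSpanTree v T) :
    (G.contract e).IsSpanTree (Quot.mk _ v) {f : {f : E // f ≠ e} | f.1 ∈ T} := by
  have hst : G.src e ≠ G.tgt e := noloop hdeg hv hT
  have heT : e ∈ T := mem_of_tree hdeg hv hT
  refine ⟨?_, ?_, ?_⟩
  · rintro ⟨f, hfe⟩ hfT h
    have h' := (quot_mk_eq_iff _ _).mp h
    rcases h' with h | ⟨h1, h2⟩ | ⟨h1, h2⟩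
    · exact hT.1 f hfT h
    · exact hv h2
    · exact hfe (uniq_edge hdeg h1)
  · intro w' hw'
    obtain ⟨w, rfl⟩ := Quot.exists_rep w'
    by_cases hwt : w = G.tgt e ∨ w = G.src e
    · -- `w'` is the merged vertex; the unique tree edge into it ends at `src e`.
      have hsv : G.src e ≠ v := by
        rintro rfl
        apply hw'
        refine (quot_mk_eq_iff _ _).mpr ?_
        rcases hwt with rfl | rfl
        · exact Or.inr (Or.inr ⟨rfl, rfl⟩)
        · exact Or.inl rfl
      obtain ⟨f0, ⟨hf0T, hf0t⟩, hf0u⟩ := hT.2.1 (G.src e) hsv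
      have hf0e : f0 ≠ e := by rintro rfl; exact hst hf0t.symm
      refine ⟨⟨f0, hf0e⟩, ⟨hf0T, ?_⟩, ?_⟩
      · refine (quot_mk_eq_iff (G.tgt f0) w).mpr ?_
        rcases hwt with rfl | rfl
        · exact Or.inr (Or.inl ⟨hf0t, rfl⟩)
        · exact Or.inl hf0t
      · rintro ⟨f, hfe⟩ ⟨hfT, hft⟩
        have hft' := (quot_mk_eq_iff _ _).mp hft
        have : G.tgt f = G.src e := by
          rcases hwt with rfl | rfl
          · rcases hft' with h | ⟨h1, h2⟩ | ⟨h1, h2⟩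
            · exact absurd (uniq_edge hdeg h) hfe
            · exact h1
            · exact absurd (uniq_edge hdeg h1) hfe
          · rcases hft' with h | ⟨h1, h2⟩ | ⟨h1, h2⟩
            · exact h
            · exact h1
            · exact absurd (uniq_edge hdeg h1) hfe
        have := hf0u f ⟨hfT, this⟩
        exact Subtype.ext this
    · push_neg at hwt
      have hwv : w ≠ v := by
        rintro rfl
        exact hw' rfl
      obtain ⟨f0, ⟨hf0T, hf0t⟩, hf0u⟩ := hT.2.1 w hwv
      have hf0e : f0 ≠ e := by rintro rfl; exact hwt.1 hf0t.symm
      refine ⟨⟨f0, hf0e⟩,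
        ⟨hf0T, (quot_mk_eq_iff (G.tgt f0) w).mpr (Or.inl hf0t)⟩, ?_⟩
      rintro ⟨f, hfe⟩ ⟨hfT, hft⟩
      have hft' := (quot_mk_eq_iff _ _).mp hft
      have : G.tgt f = w := by
        rcases hft' with h | ⟨h1, h2⟩ | ⟨h1, h2⟩
        · exact h
        · exact absurd h2 hwt.1
        · exact absurd h2 hwt.2
      exact Subtype.ext (hf0u f ⟨hfT, this⟩)
  · intro w'
    obtain ⟨w, rfl⟩ := Quot.exists_rep w'
    have key : ∀ w, G.reach T v w →
        (G.contract e).reach {f : {f : E // f ≠ e} | f.1 ∈ T}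
          (Quot.mk _ v) (Quot.mk _ w) := by
      intro w hw
      induction hw with
      | refl => exact Relation.ReflTransGen.refl
      | tail _ hstep ih =>
          rename_i b c hvb
          obtain ⟨f, hfT, hsrc, htgt⟩ := hstep
          by_cases hfe : f = e
          · have : (Quot.mk _ b : Quot fun a b => a = G.src e ∧ b = G.tgt e)
                = Quot.mk _ c :=
              (quot_mk_eq_iff b c).mpr
                (Or.inr (Or.inl ⟨by rw [← hsrc, hfe], by rw [← htgt, hfe]⟩))
            exact this ▸ ih
          · exact ih.tail ⟨⟨f, hfe⟩, hfT,
              congrArg (Quot.mk _) hsrc, congrArg (Quot.mk _) htgt⟩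
    exact key w (hT.2.2 w)

/-- Spanning trees of `G/e` induce spanning trees of `G` (add back `e`). -/
private lemma psi_tree (hdeg : {f : E | G.tgt f = G.tgt e}.ncard = 1)
    {v : V} (hv : v ≠ G.tgt e) {T' : Set {f : E // f ≠ e}}
    (hT' : (G.contract e).IsSpanTree (Quot.mk _ v) T') :
    G.IsSpanTree v (insert e (Subtype.val '' T')) := by
  have hst : G.src e ≠ G.tgt e := noloop' hdeg hv hT'
  have hnot_t : ∀ g ∈ T', G.tgt (g : {f : E // f ≠ e}).1 ≠ G.tgt e := by
    intro g _ h
    exact g.2 (uniq_edge hdeg h)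
  refine ⟨?_, ?_, ?_⟩
  · rintro f (rfl | ⟨g, hgT, rfl⟩)
    · exact Ne.symm hv
    · intro h
      exact hT'.1 g hgT ((quot_mk_eq_iff _ _).mpr (Or.inl h))
  · intro w hw
    by_cases hwt : w = G.tgt e
    · subst hwt
      refine ⟨e, ⟨Set.mem_insert _ _, rfl⟩, ?_⟩
      rintro f ⟨_, hft⟩
      exact uniq_edge hdeg hft
    · have hwv : (Quot.mk _ w : Quot fun a b => a = G.src e ∧ b = G.tgt e)
          ≠ Quot.mk _ v := by
        intro hq
        rcases (quot_mk_eq_iff _ _).mp hq with h | ⟨h1, h2⟩ | ⟨h1, h2⟩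
        · exact hw h
        · exact hv h2
        · exact hwt h1
      obtain ⟨g0, ⟨hg0T, hg0t⟩, hg0u⟩ := hT'.2.1 _ hwv
      have hg0t' : G.tgt g0.1 = w := by
        rcases (quot_mk_eq_iff _ _).mp hg0t with h | ⟨h1, h2⟩ | ⟨h1, h2⟩
        · exact h
        · exact absurd h2 hwt
        · exact absurd h1 (hnot_t g0 hg0T)
      refine ⟨g0.1, ⟨Set.mem_insert_of_mem _ ⟨g0, hg0T, rfl⟩, hg0t'⟩, ?_⟩
      rintro f ⟨(rfl | ⟨g, hgT, rfl⟩), hft⟩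
      · exact absurd hft.symm hwt
      · have : g = g0 := hg0u g ⟨hgT, (quot_mk_eq_iff _ _).mpr (Or.inl hft)⟩
        rw [this]
  · -- reachability
    have heT : e ∈ insert e (Subtype.val '' T') := Set.mem_insert _ _
    have key : ∀ w' , (G.contract e).reach T' (Quot.mk _ v) w' →
        ∀ w, Quot.mk _ w = w' → G.reach (insert e (Subtype.val '' T')) v w := by
      intro w' hw'
      induction hw' with
      | refl =>
          intro w hw
          rcases (quot_mk_eq_iff _ _).mp hw with rfl | ⟨h1, h2⟩ | ⟨h1, h2⟩
          · exact Relation.ReflTransGen.refl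
          · exact absurd h2 hv
          · -- w = tgt e, v = src e : one step via e
            exact Relation.ReflTransGen.single ⟨e, heT, h2.symm, h1.symm⟩
      | tail _ hstep ih =>
          rename_i b' c' hvb
          obtain ⟨g, hgT, hsrc, htgt⟩ := hstep
          intro w hw
          have hsg : G.reach (insert e (Subtype.val '' T')) v (G.src g.1) :=
            ih _ hsrc
          have htg : G.reach (insert e (Subtype.val '' T')) v (G.tgt g.1) :=
            hsg.tail ⟨g.1, Set.mem_insert_of_mem _ ⟨g, hgT, rfl⟩, rfl, rfl⟩
          rcases (quot_mk_eq_iff _ _).mp (hw.trans htgt.symm) with h | ⟨h1, h2⟩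
            | ⟨h1, h2⟩
          · exact h ▸ htg
          · exact absurd h2 (hnot_t g hgT)
          · -- w = tgt e, tgt g = src e : reach src e then step via e
            subst h1
            exact (h2 ▸ htg).tail ⟨e, heT, rfl, rfl⟩
    exact fun w => key _ (hT'.2.2 (Quot.mk _ w)) w rfl

end Aux

/-- **Contracting an edge whose terminal vertex has in-degree 1.**
If the terminal vertex of the edge `e` of a finite digraph `G` has in-degree
`1`, then for any vertex `v` distinct from the terminal vertex of `e`, the
number of directed spanning subtrees of `G / e` with origin (the image of)
`v` equals the number of directed spanning subtrees of `G` with origin `v`. -/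
theorem treeCount_contract_of_indegree_one {V E : Type} [Finite V] [Finite E]
    (G : MultiDigraph V E) (e : E)
    (hdeg : {f : E | G.tgt f = G.tgt e}.ncard = 1)
    (v : V) (hv : v ≠ G.tgt e) :
    (G.contract e).treeCount (Quot.mk _ v) = G.treeCount v := by
  classical
  have hinj : Function.Injective
      (fun T' : Set {f : E // f ≠ e} => insert e (Subtype.val '' T')) := by
    intro T1 T2 h
    ext g
    have : ∀ T : Set {f : E // f ≠ e}, g.1 ∈ insert e (Subtype.val '' T) ↔ g ∈ T := by
      intro T
      simp only [Set.mem_insert_iff, Set.mem_image]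
      constructor
      · rintro (h | ⟨g', hg', hgg'⟩)
        · exact absurd h g.2
        · rwa [← Subtype.ext hgg'.symm] at hg'
      · intro h; exact Or.inr ⟨g, h, rfl⟩
    have h' : insert e (Subtype.val '' T1) = insert e (Subtype.val '' T2) := h
    rw [← this T1, ← this T2, h']
  have himg : {T : Set E | G.IsSpanTree v T} =
      (fun T' : Set {f : E // f ≠ e} => insert e (Subtype.val '' T')) ''
        {T' : Set {f : E // f ≠ e} | (G.contract e).IsSpanTree (Quot.mk _ v) T'} := by
    ext T
    constructor
    · intro hT
      refine ⟨{f : {f : E // f ≠ e} | f.1 ∈ T}, phi_tree hdeg hv hT, ?_⟩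
      have heT : e ∈ T := mem_of_tree hdeg hv hT
      ext f
      simp only [Set.mem_insert_iff, Set.mem_image, Set.mem_setOf_eq]
      constructor
      · rintro (rfl | ⟨g, hg, rfl⟩)
        · exact heT
        · exact hg
      · intro hf
        by_cases hfe : f = e
        · exact Or.inl hfe
        · exact Or.inr ⟨⟨f, hfe⟩, hf, rfl⟩
    · rintro ⟨T', hT', rfl⟩
      exact psi_tree hdeg hv hT'
  rw [MultiDigraph.treeCount, MultiDigraph.treeCount, himg,
    Set.ncard_image_of_injective _ hinj]
end

section
/- Let G be a finite planar digraph embedded in the 2-sphere such that for every region r of the complement of G in the sphere, the boundary of r is a (directed) cycle. Then G is O-connected: for any two vertices u, v there is a directed path from u to v. -/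
namespace MultiDigraph

variable {V E : Type}

/-- `G` is `O`-connected: any vertex can be reached from any other by a
directed path. -/
def OConnected (G : MultiDigraph V E) : Prop :=
  ∀ u v : V, G.reach Set.univ u v

end MultiDigraph

/-- The 2-sphere. -/
abbrev Sphere2 : Type := Metric.sphere (0 : EuclideanSpace ℝ (Fin 3)) 1

/-- An embedding of a digraph into the 2-sphere: vertices go to distinct
points, each edge is realised by an arc joining the images of its endpoints,
arcs are injective (except that the two endpoints of a loop coincide),
interiors of arcs avoid vertices, and distinct arcs meet only at vertices. -/
structure SphereEmbedding {V E : Type} (G : MultiDigraph V E) where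
  vmap : V → Sphere2
  emap : E → C(unitInterval, Sphere2)
  vmap_inj : Function.Injective vmap
  emap_zero : ∀ e, emap e 0 = vmap (G.src e)
  emap_one : ∀ e, emap e 1 = vmap (G.tgt e)
  emap_inj : ∀ e, ∀ s t : unitInterval, emap e s = emap e t →
    s = t ∨ (s = 0 ∧ t = 1) ∨ (s = 1 ∧ t = 0)
  emap_interior : ∀ e, ∀ s : unitInterval, s ≠ 0 → s ≠ 1 →
    emap e s ∉ Set.range vmap
  emap_disjoint : ∀ e f, e ≠ f → ∀ s t : unitInterval,
    emap e s = emap f t → emap e s ∈ Set.range vmap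

/-- The subset of the sphere occupied by the embedded graph. -/
def SphereEmbedding.image {V E : Type} {G : MultiDigraph V E}
    (emb : SphereEmbedding G) : Set Sphere2 :=
  Set.range emb.vmap ∪ ⋃ e : E, Set.range fun t => emb.emap e t


open Set Metric
open scoped RealInnerProductSpace


noncomputable section

namespace SphereGeo

abbrev E3 : Type := EuclideanSpace ℝ (Fin 3)

lemma norm_one (x : Sphere2) : ‖(x : E3)‖ = 1 := by
  have := x.2
  rwa [mem_sphere_zero_iff_norm] at this

lemma dist_eq (x y : Sphere2) : dist x y = ‖(x : E3) - y‖ := by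
  rw [Subtype.dist_eq, dist_eq_norm]

lemma dist_sq (x y : Sphere2) : (dist x y)^2 = 2 - 2 * ⟪(x : E3), y⟫ := by
  rw [dist_eq, norm_sub_sq_real, norm_one, norm_one]; ring

lemma dist_lt_iff (x y : Sphere2) {r : ℝ} (hr : 0 < r) :
    dist x y < r ↔ 1 - r^2/2 < ⟪(x : E3), y⟫ := by
  have h := dist_sq x y
  constructor
  · intro hlt
    have h2 : (dist x y)^2 < r^2 := by
      have := dist_nonneg (x := x) (y := y)
      nlinarith
    nlinarith
  · intro hi
    have h2 : (dist x y)^2 < r^2 := by nlinarith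
    have := dist_nonneg (x := x) (y := y)
    nlinarith


/-- normalized convex combination -/
def combo (a b : E3) (s : ℝ) : E3 := (1 - s) • a + s • b

lemma combo_cont (a b : E3) : Continuous (combo a b) := by
  unfold combo; fun_prop

lemma combo_inner (a b z : E3) (s : ℝ) :
    ⟪combo a b s, z⟫ = (1 - s) * ⟪a, z⟫ + s * ⟪b, z⟫ := by
  unfold combo
  rw [inner_add_left, real_inner_smul_left, real_inner_smul_left]

lemma combo_norm_le (a b : E3) (ha : ‖a‖ = 1) (hb : ‖b‖ = 1) {s : ℝ}
    (h0 : 0 ≤ s) (h1 : s ≤ 1) : ‖combo a b s‖ ≤ 1 := by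
  unfold combo
  calc ‖(1 - s) • a + s • b‖ ≤ ‖(1 - s) • a‖ + ‖s • b‖ := norm_add_le _ _
    _ = |1 - s| * ‖a‖ + |s| * ‖b‖ := by rw [norm_smul, norm_smul]; simp [Real.norm_eq_abs]
    _ = 1 := by rw [ha, hb, abs_of_nonneg (by linarith), abs_of_nonneg h0]; ring

lemma combo_inner_ge (a b z : E3) {α β : ℝ} (hα : α ≤ ⟪a, z⟫) (hβ : β ≤ ⟪b, z⟫)
    {s : ℝ} (h0 : 0 ≤ s) (h1 : s ≤ 1) :
    min α β ≤ ⟪combo a b s, z⟫ := by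
  rw [combo_inner]
  have h2 : min α β ≤ α := min_le_left _ _
  have h3 : min α β ≤ β := min_le_right _ _
  nlinarith

/-- the normalized point -/
def npt (v : E3) (hv : ‖v‖ ≠ 0) : Sphere2 :=
  ⟨‖v‖⁻¹ • v, by
    rw [mem_sphere_zero_iff_norm, norm_smul, norm_inv, norm_norm]
    field_simp⟩

lemma npt_coe (v : E3) (hv : ‖v‖ ≠ 0) : (npt v hv : E3) = ‖v‖⁻¹ • v := rfl

lemma norm_ne_zero_of_inner (v z : E3) {c : ℝ} (hc : 0 < c) (hv : c ≤ ⟪v, z⟫) :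
    ‖v‖ ≠ 0 := by
  intro h
  rw [norm_eq_zero] at h
  subst h
  simp only [inner_zero_left] at hv
  linarith

lemma npt_inner_ge (v z : E3) (hn : ‖v‖ ≤ 1) {c : ℝ} (hc : 0 < c) (hv : c ≤ ⟪v, z⟫) :
    c ≤ ⟪(npt v (norm_ne_zero_of_inner v z hc hv) : E3), z⟫ := by
  rw [npt_coe, real_inner_smul_left]
  have h0 : 0 < ‖v‖ := lt_of_le_of_ne (norm_nonneg v) (Ne.symm (norm_ne_zero_of_inner v z hc hv))
  have h1 : 1 ≤ ‖v‖⁻¹ := by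
    exact (one_le_inv₀ h0).2 hn
  nlinarith

/-- The projected-segment path between two points of the sphere with inner
products > 1/2 against z. -/
lemma exists_path (z : E3) (a b : Sphere2)
    (ha : 1/2 < ⟪(a : E3), z⟫) (hb : 1/2 < ⟪(b : E3), z⟫) :
    ∃ γ : Path a b, ∀ t : unitInterval,
      (min ⟪(a : E3), z⟫ ⟪(b : E3), z⟫ ≤ ⟪((γ t : Sphere2) : E3), z⟫) ∧
      ∃ s : ℝ, 0 ≤ s ∧ s ≤ 1 ∧ ((γ t : Sphere2) : E3)
        = ‖combo (a : E3) b s‖⁻¹ • combo (a : E3) b s := by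
  set α := ⟪(a : E3), z⟫ with hα
  set β := ⟪(b : E3), z⟫ with hβ
  have hm : 0 < min α β := by
    rcases min_cases α β with ⟨h, _⟩ | ⟨h, _⟩ <;> rw [h] <;> linarith
  have key : ∀ s : ℝ, 0 ≤ s → s ≤ 1 → min α β ≤ ⟪combo (a : E3) b s, z⟫ :=
    fun s h0 h1 => combo_inner_ge _ _ _ le_rfl le_rfl h0 h1
  have hne : ∀ s : ℝ, 0 ≤ s → s ≤ 1 → ‖combo (a : E3) b s‖ ≠ 0 := fun s h0 h1 =>
    norm_ne_zero_of_inner _ z hm (key s h0 h1)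
  have hcont : Continuous fun t : unitInterval =>
      (‖combo (a : E3) b (t : ℝ)‖⁻¹ • combo (a : E3) b (t : ℝ) : E3) := by
    apply Continuous.fun_smul
    · apply Continuous.inv₀
      · exact (combo_cont _ _).norm.comp continuous_subtype_val
      · intro t; exact hne t t.2.1 t.2.2
    · exact (combo_cont _ _).comp continuous_subtype_val
  have hmem : ∀ t : unitInterval,
      (‖combo (a : E3) b (t : ℝ)‖⁻¹ • combo (a : E3) b (t : ℝ) : E3)
        ∈ Metric.sphere (0 : E3) 1 := by
    intro t
    rw [mem_sphere_zero_iff_norm, norm_smul, norm_inv, norm_norm]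
    field_simp [hne t t.2.1 t.2.2]
  have h0' : (‖combo (a : E3) b ((0 : unitInterval) : ℝ)‖⁻¹ •
      combo (a : E3) b ((0 : unitInterval) : ℝ) : E3) = (a : E3) := by
    show ‖combo (a : E3) b (0:ℝ)‖⁻¹ • combo (a : E3) b (0:ℝ) = (a : E3)
    unfold combo
    simp [norm_one a]
  have h1' : (‖combo (a : E3) b ((1 : unitInterval) : ℝ)‖⁻¹ •
      combo (a : E3) b ((1 : unitInterval) : ℝ) : E3) = (b : E3) := by
    show ‖combo (a : E3) b (1:ℝ)‖⁻¹ • combo (a : E3) b (1:ℝ) = (b : E3)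
    unfold combo
    simp [norm_one b]
  refine ⟨{ toFun := fun t => ⟨_, hmem t⟩
            continuous_toFun := hcont.subtype_mk _
            source' := Subtype.ext h0'
            target' := Subtype.ext h1' }, ?_⟩
  intro t
  constructor
  · show min α β ≤ ⟪(‖combo (a : E3) b (t : ℝ)‖⁻¹ • combo (a : E3) b (t : ℝ) : E3), z⟫
    have hle : ‖combo (a : E3) b (t : ℝ)‖ ≤ 1 :=
      combo_norm_le _ _ (norm_one a) (norm_one b) t.2.1 t.2.2
    have := npt_inner_ge (combo (a : E3) b (t : ℝ)) z hle hm (key _ t.2.1 t.2.2)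
    rwa [npt_coe] at this
  · exact ⟨(t : ℝ), t.2.1, t.2.2, rfl⟩

instance : CompleteSpace Sphere2 := Metric.isClosed_sphere.completeSpace_coe

example : BaireSpace Sphere2 := inferInstance

instance : ConnectedSpace Sphere2 := by
  apply Subtype.connectedSpace
  apply isConnected_sphere ?_ _ (zero_le_one)
  have h : Module.finrank ℝ (EuclideanSpace ℝ (Fin 3)) = 3 := finrank_euclideanSpace_fin
  rw [← Module.finrank_eq_rank']
  exact_mod_cast by omega

lemma exists_unit_normal (W : Submodule ℝ E3) (hW : W ≠ ⊤) :
    ∃ n : E3, ‖n‖ = 1 ∧ ∀ w ∈ W, ⟪w, n⟫ = 0 := by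
  have hbot : Wᗮ ≠ ⊥ := by
    intro h
    exact hW (Submodule.orthogonal_eq_bot_iff.mp h)
  obtain ⟨n0, hn0W, hn0⟩ := Submodule.ne_bot_iff _ |>.mp hbot
  have hnorm_n0 : ‖n0‖ ≠ 0 := norm_ne_zero_iff.mpr hn0
  refine ⟨‖n0‖⁻¹ • n0, ?_, ?_⟩
  · rw [norm_smul, norm_inv, norm_norm]; field_simp
  · intro w hw
    have h1 : ⟪w, n0⟫ = 0 := (Submodule.mem_orthogonal _ _).mp hn0W w hw
    rw [real_inner_smul_right, h1, mul_zero]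

lemma dense_compl_subspace (W : Submodule ℝ E3) (hW : W ≠ ⊤) :
    Dense {x : Sphere2 | (x : E3) ∉ W} := by
  obtain ⟨n, hnn, horth⟩ := exists_unit_normal W hW
  rw [Metric.dense_iff]
  intro p ε hε
  by_cases hp : (p : E3) ∉ W
  · exact ⟨p, Metric.mem_ball_self hε, hp⟩
  push_neg at hp
  obtain ⟨t, ht_def⟩ : ∃ t : ℝ, t = min (ε/4) 1 := ⟨_, rfl⟩
  have ht0 : 0 < t := by rw [ht_def]; positivity
  have ht1 : t ≤ 1 := by rw [ht_def]; exact min_le_right _ _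
  have htε : t ≤ ε/4 := by rw [ht_def]; exact min_le_left _ _
  obtain ⟨v, hv_def⟩ : ∃ v : E3, v = (p : E3) + t • n := ⟨_, rfl⟩
  have hpn : ⟪(p : E3), n⟫ = 0 := horth _ hp
  have hvsq : ‖v‖^2 = 1 + t^2 := by
    rw [hv_def, norm_add_sq_real, real_inner_smul_right, hpn, norm_one p, norm_smul]
    simp only [Real.norm_eq_abs, abs_of_pos ht0, hnn]
    ring
  have hv1 : 1 ≤ ‖v‖ := by nlinarith [norm_nonneg v]
  have hvne : ‖v‖ ≠ 0 := by intro h; rw [h] at hv1; linarith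
  have hvpos : 0 < ‖v‖ := by linarith
  refine ⟨npt v hvne, ?_, ?_⟩
  · -- distance estimate
    rw [Metric.mem_ball, dist_eq, npt_coe]
    have hexp : ‖v‖⁻¹ • v - (p : E3) = (‖v‖⁻¹ - 1) • (p : E3) + (‖v‖⁻¹ * t) • n := by
      rw [hv_def, smul_add, smul_smul, sub_smul, one_smul]
      abel
    rw [hexp]
    have hvi1 : ‖v‖⁻¹ ≤ 1 := by
      rw [inv_le_one_iff₀]; right; exact hv1
    have hvipos : 0 < ‖v‖⁻¹ := by positivity
    have hb1 : ‖((‖v‖⁻¹ - 1) • (p : E3))‖ ≤ t := by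
      rw [norm_smul, norm_one p, Real.norm_eq_abs, abs_of_nonpos (by linarith)]
      have h1 : 1 - ‖v‖⁻¹ = (‖v‖ - 1) * ‖v‖⁻¹ := by field_simp
      have h2 : ‖v‖ - 1 ≤ t^2 := by nlinarith
      nlinarith
    have hb2 : ‖((‖v‖⁻¹ * t) • n)‖ ≤ t := by
      rw [norm_smul, hnn, Real.norm_eq_abs, abs_of_pos (by positivity)]
      nlinarith
    calc ‖(‖v‖⁻¹ - 1) • (p : E3) + (‖v‖⁻¹ * t) • n‖
        ≤ ‖((‖v‖⁻¹ - 1) • (p : E3))‖ + ‖((‖v‖⁻¹ * t) • n)‖ := norm_add_le _ _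
      _ ≤ t + t := add_le_add hb1 hb2
      _ < ε := by linarith
  · -- not in W
    intro hmem
    have h0 := horth _ hmem
    rw [npt_coe, real_inner_smul_left, hv_def, inner_add_left, real_inner_smul_left, hpn,
      real_inner_self_eq_norm_sq, hnn, ← hv_def] at h0
    have h2 : ‖v‖⁻¹ * (0 + t * 1^2) ≠ 0 := by positivity
    exact h2 h0

lemma mem_ball_iff_inner (z w : Sphere2) {r : ℝ} (h0 : 0 < r) :
    w ∈ Metric.ball z r ↔ 1 - r^2/2 < ⟪(w : E3), (z : E3)⟫ := by
  rw [Metric.mem_ball, dist_lt_iff _ _ h0]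

lemma half_lt_of_mem_ball {z w : Sphere2} {r : ℝ} (h0 : 0 < r) (h1 : r ≤ 1)
    (hw : w ∈ Metric.ball z r) : 1/2 < ⟪(w : E3), (z : E3)⟫ := by
  rw [mem_ball_iff_inner z w h0] at hw
  nlinarith

lemma isPathConnected_ball (z : Sphere2) {r : ℝ} (h0 : 0 < r) (h1 : r ≤ 1) :
    IsPathConnected (Metric.ball z (r:ℝ) : Set Sphere2) := by
  refine ⟨z, Metric.mem_ball_self h0, ?_⟩
  intro y hy
  have hzz : 1/2 < ⟪(z : E3), (z : E3)⟫ := by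
    rw [real_inner_self_eq_norm_sq, norm_one]; norm_num
  have hyz : 1/2 < ⟪(y : E3), (z : E3)⟫ := half_lt_of_mem_ball h0 h1 hy
  obtain ⟨γ, hγ⟩ := exists_path (z : E3) z y hzz hyz
  refine ⟨γ, fun t => ?_⟩
  rw [mem_ball_iff_inner z _ h0]
  have h2 := (hγ t).1
  have h3 : 1 - r^2/2 < min ⟪(z : E3), (z : E3)⟫ ⟪(y : E3), (z : E3)⟫ := by
    rw [lt_min_iff]
    constructor
    · rw [real_inner_self_eq_norm_sq, norm_one]; nlinarith
    · rw [← mem_ball_iff_inner z y h0]; exact hy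
  linarith

lemma span_pair_ne_top (a q : E3) : Submodule.span ℝ ({a, q} : Set E3) ≠ ⊤ := by
  classical
  have hcard : ({a, q} : Set E3).toFinset.card < Module.finrank ℝ E3 := by
    have h3 : Module.finrank ℝ E3 = 3 := finrank_euclideanSpace_fin
    rw [h3, Set.toFinset_insert, Set.toFinset_singleton]
    calc (insert a {q} : Finset E3).card ≤ ({q} : Finset E3).card + 1 :=
          Finset.card_insert_le _ _
      _ < 3 := by simp
  exact (span_lt_top_of_card_lt_finrank hcard).ne

lemma isPathConnected_ball_diff (z q : Sphere2) {r : ℝ} (h0 : 0 < r) (h1 : r ≤ 1)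
    (hne : ((Metric.ball z r \ {q}) : Set Sphere2).Nonempty) :
    IsPathConnected ((Metric.ball z r \ {q}) : Set Sphere2) := by
  obtain ⟨a₀, ha₀⟩ := hne
  refine ⟨a₀, ha₀, ?_⟩
  intro b hb
  -- enough to join any point of the set to a generic "hub" w.
  have key : ∀ a : Sphere2, a ∈ Metric.ball z r \ {q} →
      ∀ w : Sphere2, w ∈ Metric.ball z r → (w : E3) ∉ Submodule.span ℝ {(a : E3), (q : E3)} →
      JoinedIn (Metric.ball z r \ {q}) a w := by
    intro a ha w hw hwspan
    have haq : a ≠ q := by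
      intro h; exact ha.2 (by simp [h])
    have haz : 1/2 < ⟪(a : E3), (z : E3)⟫ := half_lt_of_mem_ball h0 h1 ha.1
    have hwz : 1/2 < ⟪(w : E3), (z : E3)⟫ := half_lt_of_mem_ball h0 h1 hw
    obtain ⟨γ, hγ⟩ := exists_path (z : E3) a w haz hwz
    refine ⟨γ, fun t => ?_⟩
    obtain ⟨hmin, s, hs0, hs1, heq⟩ := hγ t
    constructor
    · rw [mem_ball_iff_inner z _ h0]
      have h3 : 1 - r^2/2 < min ⟪(a : E3), (z : E3)⟫ ⟪(w : E3), (z : E3)⟫ := by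
        rw [lt_min_iff]
        exact ⟨(mem_ball_iff_inner z a h0).mp ha.1, (mem_ball_iff_inner z w h0).mp hw⟩
      linarith
    · simp only [Set.mem_singleton_iff]
      intro hqt
      rw [hqt] at heq
      -- (q : E3) = ‖m‖⁻¹ • m with m = combo a w s
      have hm : 1/2 < ⟪combo (a : E3) (w : E3) s, (z:E3)⟫ := by
        have := combo_inner_ge (a : E3) (w : E3) (z : E3) le_rfl le_rfl hs0 hs1
        have hmin2 : (1:ℝ)/2 < min ⟪(a : E3), (z : E3)⟫ ⟪(w : E3), (z : E3)⟫ :=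
          lt_min haz hwz
        linarith
      have hmne : ‖combo (a : E3) (w : E3) s‖ ≠ 0 :=
        norm_ne_zero_of_inner _ _ (by norm_num : (0:ℝ) < 1/2) hm.le
      have hmeq : combo (a : E3) (w : E3) s
          = ‖combo (a : E3) (w : E3) s‖ • (q : E3) := by
        rw [heq, smul_smul]
        field_simp
        rw [one_smul]
      by_cases hs : s = 0
      · rw [hs] at hmeq
        unfold combo at hmeq
        simp only [sub_zero, one_smul, zero_smul, add_zero] at hmeq
        unfold combo at hmne
        rw [hs] at hmne
        simp only [sub_zero, one_smul, zero_smul, add_zero] at hmne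
        rw [norm_one a] at hmeq
        exact haq (Subtype.ext (by rw [hmeq, one_smul]))
      · apply hwspan
        have hsne : (s:ℝ) ≠ 0 := hs
        have hw_eq : (w : E3) = s⁻¹ • (‖combo (a : E3) (w : E3) s‖ • (q : E3)
            - (1 - s) • (a : E3)) := by
          rw [← hmeq]
          unfold combo
          rw [smul_sub, smul_add, smul_smul s⁻¹ s, inv_mul_cancel₀ hsne, one_smul]
          abel
        rw [hw_eq]
        apply Submodule.smul_mem
        apply Submodule.sub_mem
        · exact Submodule.smul_mem _ _ (Submodule.subset_span (by simp))
        · exact Submodule.smul_mem _ _ (Submodule.subset_span (by simp))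
  -- choose the hub
  have hdense : Dense ({x : Sphere2 | (x : E3) ∉ Submodule.span ℝ {(a₀ : E3), (q : E3)}}
      ∩ {x : Sphere2 | (x : E3) ∉ Submodule.span ℝ {(b : E3), (q : E3)}}) := by
    have hW1 := dense_compl_subspace _ (span_pair_ne_top (a₀ : E3) (q : E3))
    have hW2 := dense_compl_subspace _ (span_pair_ne_top (b : E3) (q : E3))
    have hopen : ∀ W : Submodule ℝ E3, IsOpen {x : Sphere2 | (x : E3) ∉ W} := by
      intro W
      have : IsClosed ((W : Set E3)) := Submodule.closed_of_finiteDimensional W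
      exact (this.preimage continuous_subtype_val).isOpen_compl
    exact hW1.inter_of_isOpen_left hW2 (hopen _)
  obtain ⟨w, hwball, hw1, hw2⟩ : ∃ w : Sphere2, w ∈ Metric.ball z r ∧
      (w : E3) ∉ Submodule.span ℝ {(a₀ : E3), (q : E3)} ∧
      (w : E3) ∉ Submodule.span ℝ {(b : E3), (q : E3)} := by
    obtain ⟨w, hw, hwb⟩ := hdense.exists_mem_open Metric.isOpen_ball
      ⟨z, Metric.mem_ball_self h0⟩
    exact ⟨w, hwb, hw.1, hw.2⟩
  have j1 := key a₀ ha₀ w hwball hw1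
  have j2 := key b hb w hwball hw2
  exact j1.trans j2.symm

/-- Core lemma: the injective continuous image of a compact set of parameters
cannot contain a metric ball of the sphere. -/
lemma no_ball_in_arc (g : C(unitInterval, Sphere2)) (K : Set unitInterval)
    (hK : IsCompact K) (hinj : Set.InjOn g K) (p : Sphere2) {r : ℝ} (hr : 0 < r)
    (hsub : Metric.ball p r ⊆ g '' K) : False := by
  classical
  -- shrink the radius
  obtain ⟨r', hr'0, hr'1, hr'le⟩ : ∃ r' : ℝ, 0 < r' ∧ r' ≤ 1 ∧ r' ≤ r :=
    ⟨min r 1, by positivity, min_le_right _ _, min_le_left _ _⟩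
  have hsub' : Metric.ball p r' ⊆ g '' K :=
    fun x hx => hsub (Metric.ball_subset_ball hr'le hx)
  set B : Set Sphere2 := Metric.ball p r' with hB
  haveI : CompactSpace K := isCompact_iff_compactSpace.mp hK
  set f : K → Sphere2 := fun t => g t.1 with hf
  have hfc : Continuous f := g.continuous.comp continuous_subtype_val
  have hfinj : Function.Injective f := by
    intro a b hab
    exact Subtype.ext (hinj a.2 b.2 hab)
  have hemb : Topology.IsInducing f := (hfc.isClosedEmbedding hfinj).toIsInducing
  set T : Set K := f ⁻¹' B with hT
  have hfT : f '' T = B := by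
    apply Set.Subset.antisymm
    · exact Set.image_preimage_subset f B
    · intro b hb
      obtain ⟨t, ht, hgt⟩ := hsub' hb
      exact ⟨⟨t, ht⟩, by simpa [hT, hf, hgt] using hb, hgt⟩
  -- a second point of the ball
  obtain ⟨x₂, hx₂B, hx₂⟩ : ∃ x₂ : Sphere2, x₂ ∈ B ∧ x₂ ≠ p := by
    have hd := dense_compl_subspace _ (span_pair_ne_top (p : E3) (p : E3))
    obtain ⟨w, hwmem, hwball⟩ := hd.exists_mem_open Metric.isOpen_ball
      ⟨p, Metric.mem_ball_self hr'0⟩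
    refine ⟨w, hwball, fun h => hwmem ?_⟩
    rw [h]
    exact Submodule.subset_span (by simp)
  have hpB : p ∈ B := Metric.mem_ball_self hr'0
  obtain ⟨τ₁, hτ₁T, hfτ₁⟩ : ∃ τ₁, τ₁ ∈ T ∧ f τ₁ = p := by
    obtain ⟨t, ht, h⟩ := (hfT ▸ hpB : p ∈ f '' T); exact ⟨t, ht, h⟩
  obtain ⟨τ₂, hτ₂T, hfτ₂⟩ : ∃ τ₂, τ₂ ∈ T ∧ f τ₂ = x₂ := by
    obtain ⟨t, ht, h⟩ := (hfT ▸ hx₂B : x₂ ∈ f '' T); exact ⟨t, ht, h⟩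
  -- map everything to ℝ
  set φ : K → ℝ := fun t => ((t : unitInterval) : ℝ) with hφ
  have hφc : Continuous φ := by unfold φ; fun_prop
  have hφinj : Function.Injective φ := by
    intro a b hab
    exact Subtype.ext (Subtype.ext hab)
  -- T is preconnected
  have hBpc : IsPreconnected B :=
    (isPathConnected_ball p hr'0 hr'1).isConnected.isPreconnected
  have hTpc : IsPreconnected T := hemb.isPreconnected_image.mp (by rwa [hfT])
  have hSpc : IsPreconnected (φ '' T) := hTpc.image φ hφc.continuousOn
  have hSoc : Set.OrdConnected (φ '' T) := hSpc.ordConnected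
  set s₁ : ℝ := φ τ₁ with hs₁
  set s₂ : ℝ := φ τ₂ with hs₂
  have hs₁S : s₁ ∈ φ '' T := ⟨τ₁, hτ₁T, rfl⟩
  have hs₂S : s₂ ∈ φ '' T := ⟨τ₂, hτ₂T, rfl⟩
  have hsne : s₁ ≠ s₂ := by
    intro h
    apply hx₂
    rw [← hfτ₂, ← hfτ₁, hφinj h]
  set sm : ℝ := (s₁ + s₂)/2 with hsm
  have hsmS : sm ∈ φ '' T := by
    rcases lt_or_gt_of_ne hsne with h | h
    · exact hSoc.out hs₁S hs₂S ⟨by linarith, by linarith⟩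
    · exact hSoc.out hs₂S hs₁S ⟨by linarith, by linarith⟩
  obtain ⟨τm, hτmT, hφτm⟩ := hsmS
  have hmnei : τm ≠ τ₁ ∧ τm ≠ τ₂ := by
    constructor <;> intro h <;> rw [h] at hφτm <;>
      [(have : s₁ = s₂ := by rw [← hs₁] at hφτm; linarith);
       (have : s₁ = s₂ := by rw [← hs₂] at hφτm; linarith)] <;> exact hsne this
  set q : Sphere2 := f τm with hq
  have hqB : q ∈ B := hτmT
  -- the punctured ball
  have hB'ne : ((B \ {q}) : Set Sphere2).Nonempty := by
    refine ⟨p, hpB, ?_⟩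
    simp only [Set.mem_singleton_iff]
    intro h
    exact hmnei.1 (hfinj (by rw [hfτ₁, h]))
  have hB'pc : IsPreconnected (B \ {q}) :=
    (isPathConnected_ball_diff p q hr'0 hr'1 hB'ne).isConnected.isPreconnected
  have hfT' : f '' (T \ {τm}) = B \ {q} := by
    rw [Set.image_diff hfinj, hfT, Set.image_singleton]
  have hT'pc : IsPreconnected (T \ {τm}) := hemb.isPreconnected_image.mp (by rwa [hfT'])
  have hS'pc : IsPreconnected (φ '' (T \ {τm})) := hT'pc.image φ hφc.continuousOn
  have hφT' : φ '' (T \ {τm}) = φ '' T \ {sm} := by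
    rw [Set.image_diff hφinj, Set.image_singleton, hφτm]
  have hS'oc : Set.OrdConnected (φ '' T \ {sm}) := hφT' ▸ hS'pc.ordConnected
  have hs₁S' : s₁ ∈ φ '' T \ {sm} := by
    refine ⟨hs₁S, ?_⟩
    simp only [Set.mem_singleton_iff]
    intro h; rw [← h] at hsm; rw [hsm] at *; exact hsne (by linarith)
  have hs₂S' : s₂ ∈ φ '' T \ {sm} := by
    refine ⟨hs₂S, ?_⟩
    simp only [Set.mem_singleton_iff]
    intro h; rw [← h] at hsm; rw [hsm] at *; exact hsne (by linarith)
  have hsmS' : sm ∈ φ '' T \ {sm} := by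
    rcases lt_or_gt_of_ne hsne with h | h
    · exact hS'oc.out hs₁S' hs₂S' ⟨by linarith, by linarith⟩
    · exact hS'oc.out hs₂S' hs₁S' ⟨by linarith, by linarith⟩
  exact hsmS'.2 rfl

/-- An arc (injective except possibly matching endpoints) has empty interior. -/
lemma arc_interior_empty (g : C(unitInterval, Sphere2))
    (hinj : ∀ s t, g s = g t → s = t ∨ (s = 0 ∧ t = 1) ∨ (s = 1 ∧ t = 0)) :
    interior (Set.range g) = ∅ := by
  rw [Set.eq_empty_iff_forall_notMem]
  intro p hp
  obtain ⟨r, hr0, hrsub⟩ := Metric.mem_nhds_iff.mp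
    (mem_interior_iff_mem_nhds.mp hp)
  set J₁ : Set unitInterval := {t | (t : ℝ) ≤ 1/2} with hJ₁
  set J₂ : Set unitInterval := {t | 1/2 ≤ (t : ℝ)} with hJ₂
  have hJ₁c : IsClosed J₁ := isClosed_le continuous_subtype_val continuous_const
  have hJ₂c : IsClosed J₂ := isClosed_le continuous_const continuous_subtype_val
  have hJ₁k : IsCompact J₁ := hJ₁c.isCompact
  have hJ₂k : IsCompact J₂ := hJ₂c.isCompact
  have hcover : Set.range g ⊆ g '' J₁ ∪ g '' J₂ := by
    rintro x ⟨t, rfl⟩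
    rcases le_total (t : ℝ) (1/2) with h | h
    · exact Or.inl ⟨t, h, rfl⟩
    · exact Or.inr ⟨t, h, rfl⟩
  have hinj₁ : Set.InjOn g J₁ := by
    intro a ha b hb hab
    rcases hinj a b hab with h | ⟨h1, h2⟩ | ⟨h1, h2⟩
    · exact h
    · exfalso; rw [hJ₁] at hb; rw [h2] at hb
      simp only [Set.mem_setOf_eq, Set.Icc.coe_one] at hb; linarith
    · exfalso; rw [hJ₁] at ha; rw [h1] at ha
      simp only [Set.mem_setOf_eq, Set.Icc.coe_one] at ha; linarith
  have hinj₂ : Set.InjOn g J₂ := by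
    intro a ha b hb hab
    rcases hinj a b hab with h | ⟨h1, h2⟩ | ⟨h1, h2⟩
    · exact h
    · exfalso; rw [hJ₂] at ha; rw [h1] at ha
      simp only [Set.mem_setOf_eq, Set.Icc.coe_zero] at ha; linarith
    · exfalso; rw [hJ₂] at hb; rw [h2] at hb
      simp only [Set.mem_setOf_eq, Set.Icc.coe_zero] at hb; linarith
  have hball : Metric.ball p r ⊆ g '' J₁ ∪ g '' J₂ := fun x hx => hcover (hrsub hx)
  by_cases hcase : (Metric.ball p r \ g '' J₂).Nonempty
  · obtain ⟨p', hp'⟩ := hcase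
    have hopen : IsOpen (Metric.ball p r \ g '' J₂) :=
      Metric.isOpen_ball.sdiff (hJ₂k.image g.continuous).isClosed
    obtain ⟨r₁, hr₁0, hr₁sub⟩ := Metric.mem_nhds_iff.mp (hopen.mem_nhds hp')
    exact no_ball_in_arc g J₁ hJ₁k hinj₁ p' hr₁0 (fun x hx =>
      ((hball ((hr₁sub hx).1)).resolve_right (fun hc => (hr₁sub hx).2 hc)))
  · push_neg at hcase
    rw [Set.diff_eq_empty] at hcase
    exact no_ball_in_arc g J₂ hJ₂k hinj₂ p hr0 hcase

/-- A preconnected set avoiding the frontier of `C` and meeting `C` lies in `C`. -/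
lemma preconnected_subset_of_avoid_frontier {X : Type*} [TopologicalSpace X]
    {V C : Set X} (hV : IsPreconnected V) (hdisj : V ∩ frontier C = ∅)
    (hne : (V ∩ C).Nonempty) : V ⊆ C := by
  have hsub : V ⊆ interior C ∪ (closure C)ᶜ := by
    intro v hv
    have hvf : v ∉ frontier C := fun h => (Set.eq_empty_iff_forall_notMem.mp hdisj v) ⟨hv, h⟩
    by_cases hvc : v ∈ closure C
    · left
      by_contra hvi
      exact hvf ⟨hvc, hvi⟩
    · right; exact hvc
  have hAne : (V ∩ interior C).Nonempty := by
    obtain ⟨w, hwV, hwC⟩ := hne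
    refine ⟨w, hwV, ?_⟩
    have hwf : w ∉ frontier C := fun h => (Set.eq_empty_iff_forall_notMem.mp hdisj w) ⟨hwV, h⟩
    by_contra hwi
    exact hwf ⟨subset_closure hwC, hwi⟩
  by_cases hBne : (V ∩ (closure C)ᶜ).Nonempty
  · obtain ⟨x, hx⟩ := hV (interior C) (closure C)ᶜ isOpen_interior (isClosed_closure).isOpen_compl
      hsub hAne hBne
    exact absurd (interior_subset_closure hx.2.1) hx.2.2
  · rw [Set.not_nonempty_iff_eq_empty] at hBne
    intro v hv
    have : v ∈ interior C ∪ (closure C)ᶜ := hsub hv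
    rcases this with h | h
    · exact interior_subset h
    · exact absurd (Set.eq_empty_iff_forall_notMem.mp hBne v) (fun hc => hc ⟨hv, h⟩)

end SphereGeo


section GraphPart
set_option linter.unusedSectionVars false

open SphereGeo MultiDigraph Set

variable {V E : Type} [Fintype V] [Fintype E] {G : MultiDigraph V E}

/-- The arc of an edge. -/
def earc (emb : SphereEmbedding G) (e : E) : Set Sphere2 :=
  Set.range fun t => emb.emap e t

lemma earc_compact (emb : SphereEmbedding G) (e : E) : IsCompact (earc emb e) :=
  isCompact_range (emb.emap e).continuous

lemma earc_closed (emb : SphereEmbedding G) (e : E) : IsClosed (earc emb e) :=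
  (earc_compact emb e).isClosed

lemma embImage_eq (emb : SphereEmbedding G) :
    emb.image = Set.range emb.vmap ∪ ⋃ e : E, earc emb e := rfl

lemma embImage_closed (emb : SphereEmbedding G) : IsClosed emb.image := by
  rw [embImage_eq]
  exact (Set.finite_range _).isClosed.union (isClosed_iUnion_of_finite (earc_closed emb))

lemma earc_interior_empty (emb : SphereEmbedding G) (e : E) :
    interior (earc emb e) = ∅ :=
  arc_interior_empty (emb.emap e) (emb.emap_inj e)

lemma embImage_compl_dense (emb : SphereEmbedding G) : Dense emb.imageᶜ := by
  classical
  have hhelp : emb.imageᶜ =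
      ⋂ i : V ⊕ E, Sum.elim (fun v => ({emb.vmap v}ᶜ : Set Sphere2))
        (fun e => (earc emb e)ᶜ) i := by
    ext x
    simp only [embImage_eq, Set.mem_compl_iff, Set.mem_union, Set.mem_range, Set.mem_iUnion,
      Set.mem_iInter, not_or, not_exists]
    constructor
    · rintro ⟨h1, h2⟩ (v | e)
      · simpa using fun h => h1 v h.symm
      · simpa using h2 e
    · intro h
      constructor
      · intro v hv
        have := h (Sum.inl v)
        simp only [Sum.elim_inl, Set.mem_compl_iff, Set.mem_singleton_iff] at this
        exact this hv.symm
      · intro e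
        have := h (Sum.inr e)
        simpa using this
  rw [hhelp]
  apply dense_iInter_of_isOpen
  · rintro (v | e)
    · exact isClosed_singleton.isOpen_compl
    · exact (earc_closed emb e).isOpen_compl
  · rintro (v | e)
    · simp only [Sum.elim_inl]
      have hd := dense_compl_subspace
        (Submodule.span ℝ {((emb.vmap v : Sphere2) : SphereGeo.E3), (emb.vmap v : SphereGeo.E3)})
        (span_pair_ne_top _ _)
      apply hd.mono
      intro x hx
      simp only [Set.mem_setOf_eq] at hx
      simp only [Set.mem_compl_iff, Set.mem_singleton_iff]
      intro hxe
      exact hx (by rw [hxe]; exact Submodule.subset_span (by simp))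
    · simp only [Sum.elim_inr]
      rw [← interior_eq_empty_iff_dense_compl]
      exact earc_interior_empty emb e

lemma param_endpoint (emb : SphereEmbedding G) {e : E} {t : unitInterval}
    (h : emb.emap e t ∈ Set.range emb.vmap) : t = 0 ∨ t = 1 := by
  by_contra hc
  push_neg at hc
  exact emb.emap_interior e t hc.1 hc.2 h

lemma arc_eq_vmap (emb : SphereEmbedding G) {e : E} {t : unitInterval} {w : V}
    (h : emb.emap e t = emb.vmap w) :
    (w = G.src e ∧ t = 0) ∨ (w = G.tgt e ∧ t = 1) := by
  rcases param_endpoint emb ⟨w, h.symm⟩ with h0 | h1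
  · left
    refine ⟨?_, h0⟩
    apply emb.vmap_inj
    rw [← h, h0, emb.emap_zero]
  · right
    refine ⟨?_, h1⟩
    apply emb.vmap_inj
    rw [← h, h1, emb.emap_one]

lemma mem_image_arc (emb : SphereEmbedding G) (e : E) (t : unitInterval) :
    emb.emap e t ∈ emb.image :=
  Or.inr (Set.mem_iUnion.mpr ⟨e, ⟨t, rfl⟩⟩)


open Fin.NatCast in
lemma cycle_propagate {n : ℕ} (c : Fin (n + 1) → E)
    (hc : ∀ i, G.tgt (c i) = G.src (c (i + 1))) (R : Set V)
    (hstep : ∀ e, G.src e ∈ R → G.tgt e ∈ R) {i₀ : Fin (n + 1)}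
    (h₀ : G.src (c i₀) ∈ R) : ∀ j, G.src (c j) ∈ R := by
  have key : ∀ k : ℕ, G.src (c (i₀ + (k : Fin (n + 1)))) ∈ R := by
    intro k
    induction k with
    | zero => simpa using h₀
    | succ k ih =>
      have h1 : ((k + 1 : ℕ) : Fin (n + 1)) = (k : Fin (n + 1)) + 1 := by push_cast; ring
      rw [h1, ← add_assoc, ← hc (i₀ + (k : Fin (n + 1)))]
      exact hstep _ ih
  intro j
  have h2 : i₀ + (((j - i₀ : Fin (n + 1)) : ℕ) : Fin (n + 1)) = j := by
    rw [Fin.cast_val_eq_self]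
    exact add_sub_cancel i₀ j
  rw [← h2]
  exact key _

/-- T2 : every edge lies on the boundary cycle of some region. -/
lemma edge_on_cycle (emb : SphereEmbedding G)
    (hregions : ∀ x : Sphere2, x ∉ emb.image →
      ∃ (n : ℕ) (c : Fin (n + 1) → E), Function.Injective c ∧
        (∀ i : Fin (n + 1), G.tgt (c i) = G.src (c (i + 1))) ∧
        frontier (connectedComponentIn emb.imageᶜ x) =
          ⋃ i : Fin (n + 1), Set.range fun t => emb.emap (c i) t)
    (w0 : V) (e₀ : E) :
    ∃ (n : ℕ) (c : Fin (n + 1) → E),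
      (∀ i : Fin (n + 1), G.tgt (c i) = G.src (c (i + 1))) ∧ ∃ i₀, c i₀ = e₀ := by
  classical
  set th : unitInterval := ⟨1/2, by norm_num⟩ with hth
  set m : Sphere2 := emb.emap e₀ th with hm
  set F : Set Sphere2 := Set.range emb.vmap ∪ ⋃ f : {f : E // f ≠ e₀}, earc emb f.1 with hF
  have hFc : IsClosed F :=
    (Set.finite_range _).isClosed.union (isClosed_iUnion_of_finite fun f => earc_closed emb f.1)
  have hFne : F.Nonempty := ⟨emb.vmap w0, Or.inl ⟨w0, rfl⟩⟩
  have hth0 : th ≠ 0 := by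
    intro h
    have := congrArg (Subtype.val) h
    norm_num [hth] at this
  have hth1 : th ≠ 1 := by
    intro h
    have := congrArg (Subtype.val) h
    norm_num [hth] at this
  have hmF : m ∉ F := by
    rintro (hv | harc)
    · exact emb.emap_interior e₀ th hth0 hth1 hv
    · obtain ⟨f, ⟨t, ht⟩⟩ := Set.mem_iUnion.mp harc
      have := emb.emap_disjoint e₀ f.1 (Ne.symm f.2) th t ht.symm
      exact emb.emap_interior e₀ th hth0 hth1 this
  set δ0 : ℝ := Metric.infDist m F with hδ0def
  have hδ0 : 0 < δ0 := (hFc.notMem_iff_infDist_pos hFne).mp hmF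
  set δ : ℝ := min δ0 1 with hδdef
  have hδpos : 0 < δ := lt_min hδ0 one_pos
  have hδ1 : δ ≤ 1 := min_le_right _ _
  have hδδ0 : δ ≤ δ0 := min_le_left _ _
  -- a point off the image close to m
  obtain ⟨x, hxc, hxball⟩ := (embImage_compl_dense emb).exists_mem_open Metric.isOpen_ball
    ⟨m, Metric.mem_ball_self (by positivity : (0:ℝ) < δ/4)⟩
  have hx : x ∉ emb.image := hxc
  obtain ⟨n, c, hcinj, hcyc, hfront⟩ := hregions x hx
  refine ⟨n, c, hcyc, ?_⟩
  by_contra hno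
  push_neg at hno
  -- then the frontier avoids the arc of e₀, so a ball around x misses the image
  have hfrF : frontier (connectedComponentIn emb.imageᶜ x) ⊆ F := by
    rw [hfront]
    intro z hz
    obtain ⟨i, hi⟩ := Set.mem_iUnion.mp hz
    exact Or.inr (Set.mem_iUnion.mpr ⟨⟨c i, hno i⟩, hi⟩)
  set B : Set Sphere2 := Metric.ball x (δ/2) with hB
  have hBpc : IsPreconnected B :=
    (isPathConnected_ball x (by positivity) (by linarith)).isConnected.isPreconnected
  have hBfr : B ∩ frontier (connectedComponentIn emb.imageᶜ x) = ∅ := by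
    rw [Set.eq_empty_iff_forall_notMem]
    rintro z ⟨hz1, hz2⟩
    have h1 : Metric.infDist m F ≤ dist m z := Metric.infDist_le_dist_of_mem (hfrF hz2)
    have h2 : dist m z ≤ dist m x + dist x z := dist_triangle _ _ _
    have h3 : dist m x < δ/4 := by
      have := Metric.mem_ball.mp hxball
      rwa [dist_comm]
    have h4 : dist x z < δ/2 := by
      have := Metric.mem_ball.mp hz1
      rwa [dist_comm] at this
    have h5 : δ0 ≤ dist m z := h1
    linarith
  have hBC : (B ∩ connectedComponentIn emb.imageᶜ x).Nonempty :=
    ⟨x, Metric.mem_ball_self (by positivity), mem_connectedComponentIn hx⟩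
  have hBsub : B ⊆ connectedComponentIn emb.imageᶜ x :=
    preconnected_subset_of_avoid_frontier hBpc hBfr hBC
  have hmB : m ∈ B := by
    rw [hB, Metric.mem_ball]
    have := Metric.mem_ball.mp hxball
    rw [dist_comm] at this
    linarith
  have : m ∈ emb.imageᶜ := connectedComponentIn_subset _ _ (hBsub hmB)
  exact this (mem_image_arc emb e₀ th)


/-- One side of a separation together with its regions is closed. -/
lemma side_closed (emb : SphereEmbedding G) (K : Set Sphere2) (hK : IsClosed K)
    (hKne : K.Nonempty) (hKimg : K ⊆ emb.image)
    (hfimg : ∀ y, y ∉ emb.image →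
      frontier (connectedComponentIn emb.imageᶜ y) ⊆ emb.image)
    (hfne : ∀ y, y ∉ emb.image →
      (frontier (connectedComponentIn emb.imageᶜ y)).Nonempty) :
    IsClosed (K ∪ {y | y ∉ emb.image ∧
      frontier (connectedComponentIn emb.imageᶜ y) ⊆ K}) := by
  set Ω : Set Sphere2 := K ∪ {y | y ∉ emb.image ∧
      frontier (connectedComponentIn emb.imageᶜ y) ⊆ K} with hΩ
  rw [← closure_subset_iff_isClosed]
  intro y hy
  by_cases hyi : y ∈ emb.image
  · -- show y ∈ K
    by_cases hyK : y ∈ K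
    · exact Or.inl hyK
    exfalso
    have hδ0 : 0 < Metric.infDist y K := (hK.notMem_iff_infDist_pos hKne).mp hyK
    set δ : ℝ := min (Metric.infDist y K) 1 with hδdef
    have hδpos : 0 < δ := lt_min hδ0 one_pos
    have hδ1 : δ ≤ 1 := min_le_right _ _
    have hδδ0 : δ ≤ Metric.infDist y K := min_le_left _ _
    obtain ⟨w, hwΩ, hwd⟩ := Metric.mem_closure_iff.mp hy (δ/4) (by positivity)
    have hwnK : w ∉ K := by
      intro hc
      have h6 : Metric.infDist y K ≤ dist y w := Metric.infDist_le_dist_of_mem hc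
      linarith
    have hw2 : w ∉ emb.image ∧ frontier (connectedComponentIn emb.imageᶜ w) ⊆ K :=
      hwΩ.resolve_left hwnK
    set B : Set Sphere2 := Metric.ball y (δ/2) with hB
    have hBpc : IsPreconnected B :=
      (isPathConnected_ball y (by positivity) (by linarith)).isConnected.isPreconnected
    have hBfr : B ∩ frontier (connectedComponentIn emb.imageᶜ w) = ∅ := by
      rw [Set.eq_empty_iff_forall_notMem]
      rintro z ⟨hz1, hz2⟩
      have h1 : Metric.infDist y K ≤ dist y z := Metric.infDist_le_dist_of_mem (hw2.2 hz2)
      have h2 : dist y z < δ/2 := by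
        have := Metric.mem_ball.mp hz1
        rwa [dist_comm] at this
      linarith
    have hBC : (B ∩ connectedComponentIn emb.imageᶜ w).Nonempty := by
      refine ⟨w, ?_, mem_connectedComponentIn hw2.1⟩
      rw [hB, Metric.mem_ball]
      rw [dist_comm] at hwd
      linarith
    have hBsub := preconnected_subset_of_avoid_frontier hBpc hBfr hBC
    have hyB : y ∈ B := Metric.mem_ball_self (by positivity)
    have : y ∈ emb.imageᶜ := connectedComponentIn_subset _ _ (hBsub hyB)
    exact this hyi
  · -- y off the image : show the frontier of its region is inside K
    right
    refine ⟨hyi, ?_⟩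
    have hfney := hfne y hyi
    have hfimgy := hfimg y hyi
    have hynf : y ∉ frontier (connectedComponentIn emb.imageᶜ y) := fun h => hyi (hfimgy h)
    have hδ0 : 0 < Metric.infDist y (frontier (connectedComponentIn emb.imageᶜ y)) :=
      (isClosed_frontier.notMem_iff_infDist_pos hfney).mp hynf
    set δ : ℝ := min (Metric.infDist y (frontier (connectedComponentIn emb.imageᶜ y))) 1
      with hδdef
    have hδpos : 0 < δ := lt_min hδ0 one_pos
    have hδ1 : δ ≤ 1 := min_le_right _ _
    have hδδ0 : δ ≤ Metric.infDist y (frontier (connectedComponentIn emb.imageᶜ y)) :=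
      min_le_left _ _
    obtain ⟨w, hwΩ, hwd⟩ := Metric.mem_closure_iff.mp hy (δ/4) (by positivity)
    set B : Set Sphere2 := Metric.ball y (δ/2) with hB
    have hBpc : IsPreconnected B :=
      (isPathConnected_ball y (by positivity) (by linarith)).isConnected.isPreconnected
    have hBfr : B ∩ frontier (connectedComponentIn emb.imageᶜ y) = ∅ := by
      rw [Set.eq_empty_iff_forall_notMem]
      rintro z ⟨hz1, hz2⟩
      have h1 : Metric.infDist y (frontier (connectedComponentIn emb.imageᶜ y)) ≤ dist y z :=
        Metric.infDist_le_dist_of_mem hz2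
      have h2 : dist y z < δ/2 := by
        have := Metric.mem_ball.mp hz1
        rwa [dist_comm] at this
      linarith
    have hBC : (B ∩ connectedComponentIn emb.imageᶜ y).Nonempty :=
      ⟨y, Metric.mem_ball_self (by positivity), mem_connectedComponentIn hyi⟩
    have hBsub := preconnected_subset_of_avoid_frontier hBpc hBfr hBC
    have hwB : w ∈ B := by
      rw [hB, Metric.mem_ball]
      rw [dist_comm] at hwd
      linarith
    have hwC : w ∈ connectedComponentIn emb.imageᶜ y := hBsub hwB
    have hwU : w ∉ emb.image := connectedComponentIn_subset _ _ hwC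
    have hw2 : frontier (connectedComponentIn emb.imageᶜ w) ⊆ K :=
      (hwΩ.resolve_left (fun hc => hwU (hKimg hc))).2
    rwa [← connectedComponentIn_eq hwC] at hw2


/-- T3 : there is no separation of the vertex set with no crossing edges. -/
lemma no_separation (emb : SphereEmbedding G)
    (hregions : ∀ x : Sphere2, x ∉ emb.image →
      ∃ (n : ℕ) (c : Fin (n + 1) → E), Function.Injective c ∧
        (∀ i : Fin (n + 1), G.tgt (c i) = G.src (c (i + 1))) ∧
        frontier (connectedComponentIn emb.imageᶜ x) =
          ⋃ i : Fin (n + 1), Set.range fun t => emb.emap (c i) t)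
    (R : Set V) (hstep : ∀ e, G.src e ∈ R → G.tgt e ∈ R)
    (hrev : ∀ e, G.tgt e ∈ R → G.src e ∈ R)
    {u v : V} (hu : u ∈ R) (hv : v ∉ R) : False := by
  classical
  set K₁ : Set Sphere2 := emb.vmap '' R ∪ ⋃ e : {e : E // G.src e ∈ R}, earc emb e.1
    with hK₁def
  set K₂ : Set Sphere2 := emb.vmap '' Rᶜ ∪ ⋃ e : {e : E // G.src e ∉ R}, earc emb e.1
    with hK₂def
  have hK₁c : IsClosed K₁ :=
    ((R.toFinite.image _).isClosed).union (isClosed_iUnion_of_finite fun e => earc_closed emb e.1)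
  have hK₂c : IsClosed K₂ :=
    ((Rᶜ.toFinite.image _).isClosed).union (isClosed_iUnion_of_finite fun e => earc_closed emb e.1)
  have hK₁img : K₁ ⊆ emb.image := by
    rintro z (⟨w, _, rfl⟩ | hz)
    · exact Or.inl ⟨w, rfl⟩
    · obtain ⟨e, t, rfl⟩ := Set.mem_iUnion.mp hz
      exact mem_image_arc emb e.1 t
  have hK₂img : K₂ ⊆ emb.image := by
    rintro z (⟨w, _, rfl⟩ | hz)
    · exact Or.inl ⟨w, rfl⟩
    · obtain ⟨e, t, rfl⟩ := Set.mem_iUnion.mp hz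
      exact mem_image_arc emb e.1 t
  have himg : emb.image ⊆ K₁ ∪ K₂ := by
    rintro z (⟨w, rfl⟩ | hz)
    · by_cases hw : w ∈ R
      · exact Or.inl (Or.inl ⟨w, hw, rfl⟩)
      · exact Or.inr (Or.inl ⟨w, hw, rfl⟩)
    · obtain ⟨e, t, rfl⟩ := Set.mem_iUnion.mp hz
      by_cases he : G.src e ∈ R
      · exact Or.inl (Or.inr (Set.mem_iUnion.mpr ⟨⟨e, he⟩, ⟨t, rfl⟩⟩))
      · exact Or.inr (Or.inr (Set.mem_iUnion.mpr ⟨⟨e, he⟩, ⟨t, rfl⟩⟩))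
  have hdisj : ∀ z, z ∈ K₁ → z ∈ K₂ → False := by
    rintro z (⟨w, hw, rfl⟩ | hz1) (⟨w', hw', heq⟩ | hz2)
    · exact hw' (emb.vmap_inj heq ▸ hw)
    · obtain ⟨e, t, het⟩ := Set.mem_iUnion.mp hz2
      rcases arc_eq_vmap emb het with ⟨h1, _⟩ | ⟨h1, _⟩
      · exact e.2 (h1 ▸ hw)
      · exact e.2 (hrev e.1 (h1 ▸ hw))
    · obtain ⟨e, t, het⟩ := Set.mem_iUnion.mp hz1
      have het' : emb.emap e.1 t = emb.vmap w' := by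
        have h0 : emb.emap e.1 t = z := het
        rw [h0, ← heq]
      rcases arc_eq_vmap emb het' with ⟨h1, _⟩ | ⟨h1, _⟩
      · exact hw' (h1 ▸ e.2)
      · exact hw' (h1 ▸ hstep e.1 e.2)
    · obtain ⟨e, s, hes⟩ := Set.mem_iUnion.mp hz1
      obtain ⟨f, t, hft⟩ := Set.mem_iUnion.mp hz2
      have hef : e.1 ≠ f.1 := by
        intro h
        exact f.2 (h ▸ e.2)
      have hes' : emb.emap e.1 s = z := hes
      have hft' : emb.emap f.1 t = z := hft
      have hvm : emb.emap e.1 s ∈ Set.range emb.vmap :=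
        emb.emap_disjoint e.1 f.1 hef s t (by rw [hes', hft'])
      obtain ⟨w, hw⟩ := hvm
      have hwR : w ∈ R := by
        rcases arc_eq_vmap emb hw.symm with ⟨h1, _⟩ | ⟨h1, _⟩
        · exact h1 ▸ e.2
        · exact h1 ▸ hstep e.1 e.2
      have hwf : emb.emap f.1 t = emb.vmap w := by rw [hft', ← hes', ← hw]
      rcases arc_eq_vmap emb hwf with ⟨h1, _⟩ | ⟨h1, _⟩
      · exact f.2 (h1 ▸ hwR)
      · exact f.2 (hrev f.1 (h1 ▸ hwR))
  -- dichotomy for regions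
  have htype : ∀ y, y ∉ emb.image →
      frontier (connectedComponentIn emb.imageᶜ y) ⊆ K₁ ∨
      frontier (connectedComponentIn emb.imageᶜ y) ⊆ K₂ := by
    intro y hy
    obtain ⟨n, c, _, hcyc, hfront⟩ := hregions y hy
    by_cases hc0 : G.src (c 0) ∈ R
    · left
      rw [hfront]
      refine Set.iUnion_subset fun i => ?_
      have hall : G.src (c i) ∈ R := cycle_propagate c hcyc R hstep hc0 i
      intro z hz
      exact Or.inr (Set.mem_iUnion.mpr ⟨⟨c i, hall⟩, hz⟩)
    · right
      rw [hfront]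
      refine Set.iUnion_subset fun i => ?_
      have hall : G.src (c i) ∉ R := fun hi => hc0 (cycle_propagate c hcyc R hstep hi 0)
      intro z hz
      exact Or.inr (Set.mem_iUnion.mpr ⟨⟨c i, hall⟩, hz⟩)
  have hfimg : ∀ y, y ∉ emb.image →
      frontier (connectedComponentIn emb.imageᶜ y) ⊆ emb.image := by
    intro y hy
    obtain ⟨n, c, _, _, hfront⟩ := hregions y hy
    rw [hfront]
    refine Set.iUnion_subset fun i => ?_
    rintro z ⟨t, rfl⟩
    exact mem_image_arc emb (c i) t
  have hfne : ∀ y, y ∉ emb.image →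
      (frontier (connectedComponentIn emb.imageᶜ y)).Nonempty := by
    intro y hy
    obtain ⟨n, c, _, _, hfront⟩ := hregions y hy
    rw [hfront]
    exact ⟨emb.emap (c 0) 0, Set.mem_iUnion.mpr ⟨0, ⟨0, rfl⟩⟩⟩
  -- the two closed sides
  set Ω₁ : Set Sphere2 := K₁ ∪ {y | y ∉ emb.image ∧
      frontier (connectedComponentIn emb.imageᶜ y) ⊆ K₁} with hΩ₁def
  set Ω₂ : Set Sphere2 := K₂ ∪ {y | y ∉ emb.image ∧
      frontier (connectedComponentIn emb.imageᶜ y) ⊆ K₂} with hΩ₂def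
  have hK₁ne : K₁.Nonempty := ⟨emb.vmap u, Or.inl ⟨u, hu, rfl⟩⟩
  have hK₂ne : K₂.Nonempty := ⟨emb.vmap v, Or.inl ⟨v, hv, rfl⟩⟩
  have hΩ₁c : IsClosed Ω₁ := side_closed emb K₁ hK₁c hK₁ne hK₁img hfimg hfne
  have hΩ₂c : IsClosed Ω₂ := side_closed emb K₂ hK₂c hK₂ne hK₂img hfimg hfne
  have hcover : ∀ z, z ∈ Ω₁ ∨ z ∈ Ω₂ := by
    intro z
    by_cases hz : z ∈ emb.image
    · rcases himg hz with h | h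
      · exact Or.inl (Or.inl h)
      · exact Or.inr (Or.inl h)
    · rcases htype z hz with h | h
      · exact Or.inl (Or.inr ⟨hz, h⟩)
      · exact Or.inr (Or.inr ⟨hz, h⟩)
  have hΩdisj : ∀ z, z ∈ Ω₁ → z ∈ Ω₂ → False := by
    rintro z (hz1 | ⟨hz1, hf1⟩) (hz2 | ⟨hz2, hf2⟩)
    · exact hdisj z hz1 hz2
    · exact hz2 (hK₁img hz1)
    · exact hz1 (hK₂img hz2)
    · obtain ⟨p, hp⟩ := hfne z hz1
      exact hdisj p (hf1 hp) (hf2 hp)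
  have hcompl : Ω₁ᶜ = Ω₂ := by
    ext z
    simp only [Set.mem_compl_iff]
    constructor
    · intro h
      exact (hcover z).resolve_left h
    · intro h hc
      exact hΩdisj z hc h
  have hopen : IsOpen Ω₁ := by
    rw [← isClosed_compl_iff, hcompl]
    exact hΩ₂c
  rcases isClopen_iff.mp ⟨hΩ₁c, hopen⟩ with h | h
  · have : emb.vmap u ∈ Ω₁ := Or.inl (Or.inl ⟨u, hu, rfl⟩)
    rw [h] at this
    exact this
  · have h1 : emb.vmap v ∈ Ω₁ := by rw [h]; trivial
    have h2 : emb.vmap v ∈ Ω₂ := Or.inl (Or.inl ⟨v, hv, rfl⟩)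
    exact hΩdisj _ h1 h2

end GraphPart

/-- **Cycle boundaries imply O-connectivity.**  Let `G` be a finite planar
digraph embedded in the 2-sphere such that the boundary of every region
(connected component of the complement of the embedded graph) is a directed
cycle.  Then `G` is `O`-connected: for any two vertices `u`, `v` there is a
directed path from `u` to `v`. -/
theorem oConnected_of_cycle_boundaries {V E : Type} [Fintype V] [Fintype E]
    (G : MultiDigraph V E) (emb : SphereEmbedding G)
    (hregions : ∀ x : Sphere2, x ∉ emb.image →
      ∃ (n : ℕ) (c : Fin (n + 1) → E), Function.Injective c ∧
        (∀ i : Fin (n + 1), G.tgt (c i) = G.src (c (i + 1))) ∧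
        frontier (connectedComponentIn emb.imageᶜ x) =
          ⋃ i : Fin (n + 1), Set.range fun t => emb.emap (c i) t) :
    G.OConnected := by
  intro u v
  by_contra hv
  set R : Set V := {w | G.reach Set.univ u w} with hRdef
  have hstep : ∀ e, G.src e ∈ R → G.tgt e ∈ R := by
    intro e he
    exact Relation.ReflTransGen.tail he ⟨e, Set.mem_univ e, rfl, rfl⟩
  have hu : u ∈ R := Relation.ReflTransGen.refl
  have hvR : v ∉ R := hv
  by_cases hA : ∃ e, G.tgt e ∈ R ∧ G.src e ∉ R
  · obtain ⟨e₀, he₀t, he₀s⟩ := hA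
    obtain ⟨n, c, hcyc, i₀, hi₀⟩ := edge_on_cycle emb hregions u e₀
    have h1 : G.src (c (i₀ + 1)) ∈ R := by
      rw [← hcyc i₀, hi₀]
      exact he₀t
    have h2 := cycle_propagate c hcyc R hstep h1 i₀
    exact he₀s (hi₀ ▸ h2)
  · push_neg at hA
    exact no_separation emb hregions R hstep hA hu hvR
end
end

section
/- Let G be a finite digraph with no loops, and fix a vertex v0 of G. Suppose there is a directed spanning subtree T of G with origin v0, let w be a leaf of T, and let n be the in-degree of w in G. Then G has at least n directed spanning subtrees with origin v0. -/
/-- **In-degree of a leaf bounds the number of spanning trees.**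
Let `G` be a finite digraph with no loops, `v₀` a vertex of `G`, and suppose
`T` is a directed spanning subtree of `G` with origin `v₀`.  If `w` is a leaf
of `T` (no edge of `T` starts at `w`) and `n` is the in-degree of `w` in `G`,
then `G` has at least `n` directed spanning subtrees with origin `v₀`. -/
theorem indegree_leaf_le_treeCount {V E : Type} [Finite V] [Finite E]
    (G : MultiDigraph V E) (hnoloop : ∀ e : E, G.src e ≠ G.tgt e)
    (v₀ : V) (T : Set E) (hT : G.IsSpanTree v₀ T)
    (w : V) (hleaf : ∀ e ∈ T, G.src e ≠ w) :
    {e : E | G.tgt e = w}.ncard ≤ G.treeCount v₀ := by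
  classical
  rcases eq_or_ne w v₀ with hw | hw
  · -- `w = v₀`: there are no edges into `w`, since any such edge would start at
    -- a vertex ≠ v₀, but every vertex ≠ v₀ would force a tree edge out of w.
    subst hw
    have hempty : {e : E | G.tgt e = w} = ∅ := by
      ext e
      simp only [Set.mem_setOf_eq, Set.mem_empty_iff_false, iff_false]
      intro he
      have hne : G.src e ≠ w := fun h => hnoloop e (h.trans he.symm)
      have hr := hT.2.2 (G.src e)
      rcases Relation.ReflTransGen.cases_head hr with h | ⟨b, hb, _⟩
      · exact hne h.symm
      · obtain ⟨f, hfT, hfs, _⟩ := hb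
        exact hleaf f hfT hfs
    simp [hempty]
  · obtain ⟨e₀, ⟨he₀T, he₀w⟩, huniq⟩ := hT.2.1 w hw
    set S : Set E := {e : E | G.tgt e = w} with hS
    set F : E → Set E := fun e => insert e (T \ {e₀}) with hF
    -- reachability avoiding e₀ for vertices other than w
    have key : ∀ x, G.reach T v₀ x → x = w ∨ G.reach (T \ {e₀}) v₀ x := by
      intro x hx
      induction hx with
      | refl => exact Or.inr Relation.ReflTransGen.refl
      | tail hab hbc ih =>
        rename_i b c
        obtain ⟨f, hfT, hfs, hft⟩ := hbc
        rcases ih with rfl | hreach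
        · exact absurd hfs (hleaf f hfT)
        · by_cases hfe : f = e₀
          · subst hfe
            exact Or.inl (by rw [← hft]; exact he₀w)
          · exact Or.inr (hreach.tail ⟨f, ⟨hfT, hfe⟩, hfs, hft⟩)
    have htree : ∀ e ∈ S, G.IsSpanTree v₀ (F e) := by
      intro e he
      have hew : G.tgt e = w := he
      refine ⟨?_, ?_, ?_⟩
      · intro f hf
        rcases hf with rfl | ⟨hfT, _⟩
        · rw [hew]; exact hw
        · exact hT.1 f hfT
      · intro x hx
        by_cases hxw : x = w
        · subst hxw
          refine ⟨e, ⟨Set.mem_insert _ _, hew⟩, ?_⟩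
          rintro f ⟨hf, hfw⟩
          rcases hf with rfl | ⟨hfT, hfe⟩
          · rfl
          · exact absurd (huniq f ⟨hfT, hfw⟩) hfe
        · obtain ⟨f, ⟨hfT, hfw⟩, hfu⟩ := hT.2.1 x hx
          have hfe : f ≠ e₀ := fun h => hxw (by rw [← hfw, h, he₀w])
          refine ⟨f, ⟨Set.mem_insert_of_mem _ ⟨hfT, hfe⟩, hfw⟩, ?_⟩
          rintro g ⟨hg, hgw⟩
          rcases hg with rfl | ⟨hgT, _⟩
          · exact absurd (hgw.symm.trans hew) hxw
          · exact hfu g ⟨hgT, hgw⟩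
      · have hmono : ∀ a b, G.step (T \ {e₀}) a b → G.step (F e) a b := by
          rintro a b ⟨f, hf, hfs, hft⟩
          exact ⟨f, Set.mem_insert_of_mem _ hf, hfs, hft⟩
        have hmono' : ∀ x, G.reach (T \ {e₀}) v₀ x → G.reach (F e) v₀ x :=
          fun x h => Relation.ReflTransGen.mono hmono _ _ h
        intro x
        by_cases hxw : x = w
        · subst hxw
          have hsw : G.src e ≠ x := fun h => hnoloop e (h.trans hew.symm)
          rcases key (G.src e) (hT.2.2 (G.src e)) with h | h
          · exact absurd h hsw
          · exact (hmono' _ h).tail ⟨e, Set.mem_insert _ _, rfl, hew⟩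
        · rcases key x (hT.2.2 x) with h | h
          · exact absurd h hxw
          · exact hmono' _ h
    have hinj : Set.InjOn F S := by
      intro a ha b hb hab
      have haF : a ∈ F b := hab ▸ Set.mem_insert a _
      rcases haF with h | ⟨haT, hae⟩
      · exact h
      · exact absurd (huniq a ⟨haT, ha⟩) hae
    calc S.ncard = (F '' S).ncard := (Set.ncard_image_of_injOn hinj).symm
      _ ≤ G.treeCount v₀ := by
          apply Set.ncard_le_ncard _ (Set.toFinite _)
          rintro x ⟨e, he, rfl⟩
          exact htree e he
end

section
/- (Menger-type theorem for digraphs) Let G be a (possibly infinite) digraph, A a set of vertices of G, and v_B a vertex of G not in A. Then either there are two edge-disjoint directed paths from A to v_B, or there is a partition of the vertices of G into sets A' and B' with A contained in A', v_B in B', and at most one edge of G directed from A' to B'. -/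
/-- A directed path in a digraph `G`: a sequence of `n + 1` vertices joined
consecutively by `n` edges, each oriented head-to-tail. -/
structure DirPath {V E : Type} (G : MultiDigraph V E) where
  n : ℕ
  verts : Fin (n + 1) → V
  edges : Fin n → E
  src_eq : ∀ i : Fin n, G.src (edges i) = verts i.castSucc
  tgt_eq : ∀ i : Fin n, G.tgt (edges i) = verts i.succ

/-- A directed path is simple if it repeats no vertex. -/
def DirPath.Simple {V E : Type} {G : MultiDigraph V E} (p : DirPath G) : Prop :=
  Function.Injective p.verts

/-- An `(A, b)`-path: a simple directed path beginning at a vertex of `A` and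
ending at `b`, which does not meet `A ∪ {b}` in its interior. -/
def IsABPath {V E : Type} (G : MultiDigraph V E) (A : Set V) (b : V)
    (p : DirPath G) : Prop :=
  p.Simple ∧ p.verts 0 ∈ A ∧ p.verts (Fin.last p.n) = b ∧
  ∀ i : Fin (p.n + 1), i ≠ 0 → i ≠ Fin.last p.n →
    p.verts i ∉ A ∧ p.verts i ≠ b

namespace MengerAux

open Classical

variable {V E : Type}


/-- A walk along a list of edges from `a` to `b`. -/
def IsWalk (G : MultiDigraph V E) : List E → V → V → Prop
  | [], a, b => a = b
  | e :: L, a, b => G.src e = a ∧ IsWalk G L (G.tgt e) b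

/-- The `k`-th vertex along a walk. -/
def wv (G : MultiDigraph V E) : List E → V → ℕ → V
  | _, a, 0 => a
  | [], a, _ + 1 => a
  | e :: L, _, k + 1 => wv G L (G.tgt e) k

@[simp] lemma wv_zero (G : MultiDigraph V E) (L : List E) (a : V) : wv G L a 0 = a := by
  cases L <;> rfl

@[simp] lemma wv_cons (G : MultiDigraph V E) (e : E) (L : List E) (a : V) (k : ℕ) :
    wv G (e :: L) a (k + 1) = wv G L (G.tgt e) k := rfl

@[simp] lemma wv_nil (G : MultiDigraph V E) (a : V) (k : ℕ) : wv G [] a k = a := by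
  cases k <;> rfl

lemma isWalk_append {G : MultiDigraph V E} {L1 L2 : List E} {a m b : V}
    (h1 : IsWalk G L1 a m) (h2 : IsWalk G L2 m b) : IsWalk G (L1 ++ L2) a b := by
  induction L1 generalizing a with
  | nil => cases h1; exact h2
  | cons e L ih => exact ⟨h1.1, ih h1.2⟩

lemma wv_last {G : MultiDigraph V E} {L : List E} {a b : V}
    (h : IsWalk G L a b) : wv G L a L.length = b := by
  induction L generalizing a with
  | nil => exact h
  | cons e L ih => simpa using ih h.2

lemma walk_src {G : MultiDigraph V E} {L : List E} {a b : V}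
    (h : IsWalk G L a b) (i : Fin L.length) : G.src (L.get i) = wv G L a i.val := by
  induction L generalizing a with
  | nil => exact absurd i.isLt (by simp)
  | cons e L ih =>
    rcases i with ⟨k, hk⟩
    cases k with
    | zero => simpa using h.1
    | succ k => simpa using ih h.2 ⟨k, by simpa using hk⟩

lemma walk_tgt (G : MultiDigraph V E) (L : List E) (a : V) (i : Fin L.length) :
    G.tgt (L.get i) = wv G L a (i.val + 1) := by
  induction L generalizing a with
  | nil => exact absurd i.isLt (by simp)
  | cons e L ih =>
    rcases i with ⟨k, hk⟩
    cases k with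
    | zero => simp
    | succ k => simpa using ih (G.tgt e) ⟨k, by simpa using hk⟩

lemma walk_take {G : MultiDigraph V E} {L : List E} {a b : V}
    (h : IsWalk G L a b) (k : ℕ) (hk : k ≤ L.length) :
    IsWalk G (L.take k) a (wv G L a k) := by
  induction L generalizing a k with
  | nil => simp only [List.take_nil, wv_nil]; rfl
  | cons e L ih =>
    cases k with
    | zero => exact rfl
    | succ k =>
      refine ⟨h.1, ?_⟩
      simpa using ih h.2 k (by simpa using hk)

lemma walk_drop {G : MultiDigraph V E} {L : List E} {a b : V}
    (h : IsWalk G L a b) (k : ℕ) (hk : k ≤ L.length) :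
    IsWalk G (L.drop k) (wv G L a k) b := by
  induction L generalizing a k with
  | nil => simpa using h
  | cons e L ih =>
    cases k with
    | zero => simpa using h
    | succ k => simpa using ih h.2 k (by simpa using hk)


theorem walk_to_abpath (G : MultiDigraph V E) (A : Set V) (vB : V) (hvB : vB ∉ A) :
    ∀ (N : ℕ) (L : List E) (a : V), L.length ≤ N → IsWalk G L a vB → a ∈ A →
    ∃ p : DirPath G, IsABPath G A vB p ∧ ∀ i, p.edges i ∈ L := by
  intro N
  induction N with
  | zero =>
    intro L a hlen hw ha
    have : L = [] := List.length_eq_zero_iff.mp (Nat.le_zero.mp hlen)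
    subst this
    exact absurd (hw ▸ ha) hvB
  | succ N ih =>
    intro L a hlen hw ha
    by_cases hdup : ∃ i j : ℕ, i < j ∧ j ≤ L.length ∧ wv G L a i = wv G L a j
    · obtain ⟨i, j, hij, hjle, heq⟩ := hdup
      have h1 : IsWalk G (L.take i) a (wv G L a i) := walk_take hw i (by omega)
      have h2 : IsWalk G (L.drop j) (wv G L a j) vB := walk_drop hw j hjle
      have hw' : IsWalk G (L.take i ++ L.drop j) a vB :=
        isWalk_append h1 (heq ▸ h2)
      have hlen' : (L.take i ++ L.drop j).length ≤ N := by
        simp only [List.length_append, List.length_take, List.length_drop]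
        omega
      obtain ⟨p, hp, hpe⟩ := ih _ _ hlen' hw' ha
      exact ⟨p, hp, fun k => by
        rcases List.mem_append.mp (hpe k) with h | h
        · exact List.take_subset _ _ h
        · exact List.drop_subset _ _ h⟩
    · by_cases hA : ∃ k : ℕ, 0 < k ∧ k ≤ L.length ∧ wv G L a k ∈ A
      · obtain ⟨k, hk0, hkle, hkA⟩ := hA
        have h2 : IsWalk G (L.drop k) (wv G L a k) vB := walk_drop hw k hkle
        have hlen' : (L.drop k).length ≤ N := by
          simp only [List.length_drop]; omega
        obtain ⟨p, hp, hpe⟩ := ih _ _ hlen' h2 hkA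
        exact ⟨p, hp, fun i => List.drop_subset _ _ (hpe i)⟩
      · push_neg at hdup hA
        refine ⟨⟨L.length, fun i => wv G L a i.val, fun i => L.get i,
            fun i => by simpa using walk_src hw i,
            fun i => by simpa using walk_tgt G L a i⟩, ⟨?_, ?_, ?_, ?_⟩, ?_⟩
        · intro i j h
          simp only at h
          have hi : i.val < L.length + 1 := i.isLt
          have hj : j.val < L.length + 1 := j.isLt
          rcases Nat.lt_trichotomy i.val j.val with hlt | heq | hgt
          · exact absurd h (hdup i.val j.val hlt (by omega))
          · exact Fin.ext heq
          · exact absurd h.symm (hdup j.val i.val hgt (by omega))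
        · simpa [wv_zero] using ha
        · simpa using wv_last hw
        · intro i hi0 hilast
          have hilt : i.val < L.length + 1 := i.isLt
          have hiv0 : 0 < i.val := by
            rcases Nat.eq_zero_or_pos i.val with h | h
            · exact absurd (Fin.ext h) hi0
            · exact h
          have hivlast : i.val < L.length := by
            rcases Nat.lt_or_ge i.val L.length with h | h
            · exact h
            · exact absurd (Fin.ext (show i.val = L.length by omega)) hilast
          constructor
          · intro hmem
            exact hA i.val hiv0 (by omega) hmem
          · intro heq
            have hlast : wv G L a L.length = vB := wv_last hw
            exact hdup i.val L.length hivlast le_rfl (heq.trans hlast.symm)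
        · intro i
          exact show L.get i ∈ L from List.get_mem L i


noncomputable def inC (G : MultiDigraph V E) (S : Finset E) (v : V) : ℕ :=
  (S.filter (fun e => G.tgt e = v)).card

noncomputable def outC (G : MultiDigraph V E) (S : Finset E) (v : V) : ℕ :=
  (S.filter (fun e => G.src e = v)).card

noncomputable def dC (G : MultiDigraph V E) (S : Finset E) (v : V) : ℤ :=
  (inC G S v : ℤ) - (outC G S v : ℤ)

lemma dC_erase (G : MultiDigraph V E) {S : Finset E} {e : E} (he : e ∈ S) (v : V) :
    dC G (S.erase e) v =
      dC G S v - (if G.tgt e = v then 1 else 0) + (if G.src e = v then 1 else 0) := by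
  classical
  have hin : (inC G (S.erase e) v : ℤ) = inC G S v - (if G.tgt e = v then 1 else 0) := by
    unfold inC
    rw [Finset.filter_erase]
    by_cases h : G.tgt e = v
    · have hmem : e ∈ S.filter (fun e => G.tgt e = v) := by
        simp only [Finset.mem_filter]; exact ⟨he, h⟩
      rw [Finset.card_erase_of_mem hmem, if_pos h]
      have : 1 ≤ (S.filter (fun e => G.tgt e = v)).card := Finset.card_pos.mpr ⟨e, hmem⟩
      omega
    · rw [Finset.erase_eq_of_notMem (by simp [h]), if_neg h]
      ring
  have hout : (outC G (S.erase e) v : ℤ) = outC G S v - (if G.src e = v then 1 else 0) := by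
    unfold outC
    rw [Finset.filter_erase]
    by_cases h : G.src e = v
    · have hmem : e ∈ S.filter (fun e => G.src e = v) := by
        simp only [Finset.mem_filter]; exact ⟨he, h⟩
      rw [Finset.card_erase_of_mem hmem, if_pos h]
      have : 1 ≤ (S.filter (fun e => G.src e = v)).card := Finset.card_pos.mpr ⟨e, hmem⟩
      omega
    · rw [Finset.erase_eq_of_notMem (by simp [h]), if_neg h]
      ring
  unfold dC
  rw [hin, hout]
  ring

lemma dC_insert (G : MultiDigraph V E) {S : Finset E} {e : E} (he : e ∉ S) (v : V) :
    dC G (insert e S) v =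
      dC G S v + (if G.tgt e = v then 1 else 0) - (if G.src e = v then 1 else 0) := by
  classical
  have h1 : e ∈ insert e S := Finset.mem_insert_self e S
  have h2 : (insert e S).erase e = S := Finset.erase_insert he
  have := dC_erase G h1 v
  rw [h2] at this
  linarith [this]

lemma exists_in_edge (G : MultiDigraph V E) {S : Finset E} {v : V}
    (h : 1 ≤ inC G S v) : ∃ e ∈ S, G.tgt e = v := by
  classical
  unfold inC at h
  obtain ⟨e, he⟩ := Finset.card_pos.mp h
  rw [Finset.mem_filter] at he
  exact ⟨e, he.1, he.2⟩

theorem extract (G : MultiDigraph V E) (A : Set V) :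
    ∀ (m : ℕ) (S : Finset E), S.card ≤ m → ∀ c, c ∉ A → 1 ≤ dC G S c →
    (∀ v, v ∉ A → v ≠ c → 0 ≤ dC G S v) →
    ∃ a ∈ A, ∃ L : List E, IsWalk G L a c ∧ (∀ e ∈ L, e ∈ S) ∧
      ∀ v, v ∉ A → dC G (S \ L.toFinset) v = dC G S v - (if v = c then 1 else 0) := by
  classical
  intro m
  induction m with
  | zero =>
    intro S hcard c hc hd _
    have : S = ∅ := Finset.card_eq_zero.mp (Nat.le_zero.mp hcard)
    subst this
    simp [dC, inC, outC] at hd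
  | succ m ih =>
    intro S hcard c hc hd hpos
    have hin : 1 ≤ inC G S c := by unfold dC at hd; omega
    obtain ⟨e, heS, hec⟩ := exists_in_edge G hin
    set c' := G.src e with hc'
    set S' := S.erase e with hS'
    have hcard' : S'.card ≤ m := by
      rw [hS', Finset.card_erase_of_mem heS]; omega
    have hderase : ∀ v, dC G S' v = dC G S v - (if G.tgt e = v then 1 else 0)
        + (if G.src e = v then 1 else 0) := fun v => dC_erase G heS v
    have e1 : ∀ v, (if G.tgt e = v then (1:ℤ) else 0) = (if v = c then 1 else 0) := by
      intro v
      rw [hec]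
      by_cases h : v = c
      · rw [if_pos h.symm, if_pos h]
      · rw [if_neg (fun hh => h hh.symm), if_neg h]
    have e2 : ∀ v, (if G.src e = v then (1:ℤ) else 0) = (if v = c' then 1 else 0) := by
      intro v
      by_cases h : v = c'
      · rw [if_pos (hc' ▸ h.symm), if_pos h]
      · rw [if_neg (fun hh => h (hc' ▸ hh.symm)), if_neg h]
    by_cases hc'A : c' ∈ A
    · refine ⟨c', hc'A, [e], ⟨hc'.symm, hec⟩, by simp [heS], ?_⟩
      intro v hv
      have hE : S \ [e].toFinset = S' := by
        rw [hS']
        ext x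
        simp only [List.toFinset_cons, List.toFinset_nil, insert_empty_eq,
          Finset.mem_sdiff, Finset.mem_singleton, Finset.mem_erase]
        tauto
      have hvc' : (if v = c' then (1:ℤ) else 0) = 0 := by
        rw [if_neg (fun (h : v = c') => hv (h ▸ hc'A))]
      rw [hE, hderase v, e1 v, e2 v, hvc']
      ring
    · have h1' : 1 ≤ dC G S' c' := by
        have := hderase c'
        rw [e1 c', e2 c', if_pos rfl] at this
        by_cases h : c' = c
        · rw [if_pos h] at this
          rw [h] at this ⊢
          omega
        · rw [if_neg h] at this
          have := hpos c' hc'A h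
          omega
      have h2' : ∀ v, v ∉ A → v ≠ c' → 0 ≤ dC G S' v := by
        intro v hv hvc'
        have := hderase v
        rw [e1 v, e2 v, if_neg hvc'] at this
        by_cases h : v = c
        · rw [if_pos h] at this
          rw [h] at this ⊢
          omega
        · rw [if_neg h] at this
          have := hpos v hv h
          omega
      obtain ⟨a, haA, L, hwL, hLS', hled⟩ := ih S' hcard' c' hc'A h1' h2'
      refine ⟨a, haA, L ++ [e], isWalk_append hwL ⟨hc'.symm, hec⟩, ?_, ?_⟩
      · intro x hx
        rcases List.mem_append.mp hx with h | h
        · exact Finset.mem_of_mem_erase (hS' ▸ hLS' x h)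
        · simp only [List.mem_singleton] at h
          exact h ▸ heS
      · intro v hv
        have hE : S \ (L ++ [e]).toFinset = S' \ L.toFinset := by
          rw [hS']
          ext x
          simp only [List.toFinset_append, List.toFinset_cons, List.toFinset_nil,
            insert_empty_eq, Finset.mem_sdiff, Finset.mem_union, Finset.mem_singleton,
            Finset.mem_erase]
          tauto
        rw [hE, hled v hv, hderase v, e1 v, e2 v]
        ring

lemma iteswap {x v : V} : (if x = v then (1:ℤ) else 0) = (if v = x then 1 else 0) :=
  if_congr eq_comm rfl rfl

def resStep (G : MultiDigraph V E) (F : Finset E) (a b : V) : Prop :=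
  (∃ e, e ∉ F ∧ G.src e = a ∧ G.tgt e = b) ∨ (∃ e ∈ F, G.src e = b ∧ G.tgt e = a)

lemma getLastD_append_cons {α : Type} :
    ∀ (s : List α) (a : α) (t : List α) (d : α),
      (s ++ a :: t).getLastD d = t.getLastD a := by
  intro s
  induction s with
  | nil => intro a t d; rw [List.nil_append, List.getLastD_cons]
  | cons x s ih => intro a t d; rw [List.cons_append, List.getLastD_cons]; exact ih a t x

lemma getLastD_eq_getLast {α : Type} (a : α) (l : List α) :
    l.getLastD a = (a :: l).getLast (List.cons_ne_nil _ _) := by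
  induction l generalizing a with
  | nil => rfl
  | cons b t ih =>
    rw [List.getLastD_cons, ih b, List.getLast_cons_cons]

theorem chain_dedup {α : Type} {r : α → α → Prop} :
    ∀ (m : ℕ) (l : List α) (a : α), l.length ≤ m → List.Chain r a l →
    ∃ l', List.Chain r a l' ∧ (a :: l').Nodup ∧ (∀ x ∈ l', x ∈ l) ∧
      l'.getLastD a = l.getLastD a := by
  intro m
  induction m with
  | zero =>
    intro l a hlen _
    have : l = [] := List.length_eq_zero_iff.mp (Nat.le_zero.mp hlen)
    subst this
    exact ⟨[], List.Chain.nil, List.nodup_singleton a, by simp, rfl⟩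
  | succ m ih =>
    intro l a hlen hchain
    by_cases ha : a ∈ l
    · obtain ⟨s, t, hst⟩ := List.append_of_mem ha
      subst hst
      have hct : List.Chain r a t := (List.isChain_cons_split.mp hchain).2
      have hlt : t.length ≤ m := by
        have := hlen
        simp only [List.length_append, List.length_cons] at this
        omega
      obtain ⟨l', hc', hnd', hsub', hld'⟩ := ih t a hlt hct
      refine ⟨l', hc', hnd', ?_, ?_⟩
      · intro x hx
        exact List.mem_append.mpr (Or.inr (List.mem_cons_of_mem _ (hsub' x hx)))
      · rw [hld', getLastD_append_cons]
    · cases l with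
      | nil => exact ⟨[], List.Chain.nil, List.nodup_singleton a, by simp, rfl⟩
      | cons c lt =>
        have hac : r a c := (List.chain_cons.mp hchain).1
        have hclt : List.Chain r c lt := (List.chain_cons.mp hchain).2
        have hlt : lt.length ≤ m := by
          simp only [List.length_cons] at hlen; omega
        obtain ⟨lt', hc', hnd', hsub', hld'⟩ := ih lt c hlt hclt
        refine ⟨c :: lt', List.chain_cons.mpr ⟨hac, hc'⟩, ?_, ?_, ?_⟩
        · refine List.nodup_cons.mpr ⟨?_, hnd'⟩
          intro hmem
          rcases List.mem_cons.mp hmem with h | h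
          · exact ha (h ▸ List.mem_cons_self (a := c) (l := lt))
          · exact ha (List.mem_cons_of_mem _ (hsub' a h))
        · intro x hx
          rcases List.mem_cons.mp hx with h | h
          · exact h ▸ List.mem_cons_self (a := c) (l := lt)
          · exact List.mem_cons_of_mem _ (hsub' x h)
        · rw [List.getLastD_cons, List.getLastD_cons, hld']

theorem augment (G : MultiDigraph V E) (A : Set V) (vB : V) (F : Finset E) :
    ∀ (l : List V) (c : V) (S : Finset E) (Vis : Set V),
      List.Chain (resStep G F) c l → (c :: l).Nodup →
      (∀ x ∈ c :: l, x ∉ Vis) →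
      (∀ v, v ∉ A → dC G S v = (if v = vB then 1 else 0) + (if v = c then 1 else 0)) →
      (∀ e ∈ S, e ∉ F → G.src e ∈ Vis) →
      (∀ e, e ∈ F → e ∉ S → G.tgt e ∈ Vis) →
      ∃ S' : Finset E, ∀ v, v ∉ A →
        dC G S' v = (if v = vB then 1 else 0) + (if v = l.getLastD c then 1 else 0) := by
  intro l
  induction l with
  | nil =>
    intro c S Vis _ _ _ hd _ _
    exact ⟨S, fun v hv => by simpa using hd v hv⟩
  | cons c' lt ih =>
    intro c S Vis hchain hnd hvis hd hp2 hp3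
    have hstep : resStep G F c c' := (List.chain_cons.mp hchain).1
    have hchain' : List.Chain (resStep G F) c' lt := (List.chain_cons.mp hchain).2
    have hcnot : c ∉ c' :: lt := (List.nodup_cons.mp hnd).1
    have hnd' : (c' :: lt).Nodup := (List.nodup_cons.mp hnd).2
    have hcc' : c ≠ c' := fun h => hcnot (h ▸ List.mem_cons_self (a := c') (l := lt))
    have hcVis : c ∉ Vis := hvis c (List.mem_cons_self)
    have hvis' : ∀ x ∈ c' :: lt, x ∉ Vis ∪ {c} := by
      intro x hx
      rintro (h | h)
      · exact hvis x (List.mem_cons_of_mem _ hx) h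
      · rw [Set.mem_singleton_iff] at h
        exact hcnot (h ▸ hx)
    rw [List.getLastD_cons]
    rcases hstep with ⟨e, heF, hes, het⟩ | ⟨e, heF, hes, het⟩
    · -- forward edge
      have heS : e ∉ S := fun h => hcVis (hes ▸ hp2 e h heF)
      refine ih c' (insert e S) (Vis ∪ {c}) hchain' hnd' hvis' ?_ ?_ ?_
      · intro v hv
        have swap1 : (if c = v then (1:ℤ) else 0) = (if v = c then 1 else 0) :=
          if_congr eq_comm rfl rfl
        have swap2 : (if c' = v then (1:ℤ) else 0) = (if v = c' then 1 else 0) :=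
          if_congr eq_comm rfl rfl
        rw [dC_insert G heS v, hd v hv, het, hes, swap1, swap2]
        ring
      · intro e' he' he'F
        rcases Finset.mem_insert.mp he' with h | h
        · exact Or.inr (by rw [h, hes]; rfl)
        · exact Or.inl (hp2 e' h he'F)
      · intro e' he'F he'ni
        exact Or.inl (hp3 e' he'F (fun h => he'ni (Finset.mem_insert_of_mem h)))
    · -- backward edge
      have heS : e ∈ S := by
        by_contra h
        exact hcVis (het ▸ hp3 e heF h)
      refine ih c' (S.erase e) (Vis ∪ {c}) hchain' hnd' hvis' ?_ ?_ ?_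
      · intro v hv
        have swap1 : (if c = v then (1:ℤ) else 0) = (if v = c then 1 else 0) :=
          if_congr eq_comm rfl rfl
        have swap2 : (if c' = v then (1:ℤ) else 0) = (if v = c' then 1 else 0) :=
          if_congr eq_comm rfl rfl
        rw [dC_erase G heS v, hd v hv, het, hes, swap1, swap2]
        ring
      · intro e' he' he'F
        exact Or.inl (hp2 e' (Finset.mem_of_mem_erase he') he'F)
      · intro e' he'F he'ni
        by_cases h : e' = e
        · exact Or.inr (by rw [h, het]; rfl)
        · exact Or.inl (hp3 e' he'F (fun hS => he'ni (Finset.mem_erase.mpr ⟨h, hS⟩)))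

lemma card_filter_univ {n : ℕ} {f : Fin n → V} (hf : Function.Injective f) (v : V) :
    ((Finset.univ : Finset (Fin n)).filter (fun i => f i = v)).card
      = if ∃ i, f i = v then 1 else 0 := by
  split_ifs with h
  · obtain ⟨i, hi⟩ := h
    have : Finset.univ.filter (fun i => f i = v) = {i} := by
      ext j
      simp only [Finset.mem_filter, Finset.mem_univ, true_and, Finset.mem_singleton]
      constructor
      · intro hj; exact hf (hj.trans hi.symm)
      · rintro rfl; exact hi
    rw [this, Finset.card_singleton]
  · push_neg at h
    rw [Finset.filter_eq_empty_iff.mpr (fun i _ => h i), Finset.card_empty]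

lemma path_div (G : MultiDigraph V E) {A : Set V} {vB : V} (hvB : vB ∉ A)
    (p : DirPath G) (hp : IsABPath G A vB p) :
    ∀ v, v ∉ A → dC G (Finset.image p.edges Finset.univ) v = (if v = vB then 1 else 0) := by
  obtain ⟨hsimp, h0, hlast, _⟩ := hp
  have hedge_inj : Function.Injective p.edges := by
    intro i j h
    have h2 := congrArg G.src h
    rw [p.src_eq, p.src_eq] at h2
    exact Fin.castSucc_injective _ (hsimp h2)
  intro v hv
  have hinC : inC G (Finset.image p.edges Finset.univ) v
      = if ∃ i : Fin p.n, p.verts i.succ = v then 1 else 0 := by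
    unfold inC
    rw [Finset.filter_image, Finset.card_image_of_injective _ hedge_inj]
    simp only [p.tgt_eq]
    exact card_filter_univ (fun i j h => Fin.succ_injective _ (hsimp h)) v
  have houtC : outC G (Finset.image p.edges Finset.univ) v
      = if ∃ i : Fin p.n, p.verts i.castSucc = v then 1 else 0 := by
    unfold outC
    rw [Finset.filter_image, Finset.card_image_of_injective _ hedge_inj]
    simp only [p.src_eq]
    exact card_filter_univ (fun i j h => Fin.castSucc_injective _ (hsimp h)) v
  unfold dC
  rw [hinC, houtC]
  by_cases hvv : v = vB
  · subst hvv
    have hn : p.n ≠ 0 := by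
      intro h
      apply hv
      have h00 : (0 : Fin (p.n + 1)) = Fin.last p.n := by
        ext; simp [h]
      rw [h00, hlast] at h0
      exact h0
    have hex_in : ∃ i : Fin p.n, p.verts i.succ = v := by
      refine ⟨⟨p.n - 1, by omega⟩, ?_⟩
      have hsu : (⟨p.n - 1, by omega⟩ : Fin p.n).succ = Fin.last p.n := by
        ext; simp; omega
      rw [hsu, hlast]
    have hex_out : ¬ ∃ i : Fin p.n, p.verts i.castSucc = v := by
      rintro ⟨i, hi⟩
      have h2 := hsimp (hi.trans hlast.symm)
      have hval := congrArg Fin.val h2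
      simp only [Fin.coe_castSucc, Fin.val_last] at hval
      exact absurd hval (Nat.ne_of_lt i.isLt)
    rw [if_pos hex_in, if_neg hex_out, if_pos rfl]
    ring
  · rw [if_neg hvv]
    by_cases hon : ∃ k : Fin (p.n + 1), p.verts k = v
    · obtain ⟨k, hk⟩ := hon
      have hk0 : 0 < k.val := by
        rcases Nat.eq_zero_or_pos k.val with h | h
        · exfalso
          apply hv
          rw [← hk, show k = 0 from Fin.ext h]
          exact h0
        · exact h
      have hklast : k.val < p.n := by
        have hkle : k.val < p.n + 1 := k.isLt
        rcases Nat.lt_or_ge k.val p.n with h | h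
        · exact h
        · exfalso
          apply hvv
          rw [← hk, show k = Fin.last p.n from Fin.ext (by simp; omega)]
          exact hlast
      have hex_in : ∃ i : Fin p.n, p.verts i.succ = v := by
        refine ⟨⟨k.val - 1, by omega⟩, ?_⟩
        rw [show (⟨k.val - 1, by omega⟩ : Fin p.n).succ = k from Fin.ext (by simp; omega)]
        exact hk
      have hex_out : ∃ i : Fin p.n, p.verts i.castSucc = v := by
        refine ⟨⟨k.val, hklast⟩, ?_⟩
        rw [show (⟨k.val, hklast⟩ : Fin p.n).castSucc = k from Fin.ext (by simp)]
        exact hk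
      rw [if_pos hex_in, if_pos hex_out]
      ring
    · push_neg at hon
      rw [if_neg (fun ⟨i, hi⟩ => hon i.succ hi), if_neg (fun ⟨i, hi⟩ => hon i.castSucc hi)]
      ring


lemma rtg_walk {G : MultiDigraph V E} {x y : V}
    (h : Relation.ReflTransGen (fun a b => ∃ e : E, G.src e = a ∧ G.tgt e = b) x y) :
    ∃ L, IsWalk G L x y := by
  induction h with
  | refl => exact ⟨[], rfl⟩
  | tail _ hzy ih =>
    obtain ⟨L, hL⟩ := ih
    obtain ⟨e, hse, hte⟩ := hzy
    exact ⟨L ++ [e], isWalk_append hL ⟨hse, hte⟩⟩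

end MengerAux

open MengerAux

/-- **Menger's theorem for digraphs.**  Let `G` be a (possibly infinite)
digraph, `A` a set of vertices and `v_B` a vertex not in `A`.  Either there
are two edge-disjoint `(A, v_B)`-paths, or the vertices of `G` can be
partitioned into sets `A'` and `B'` with `A ⊆ A'` and `v_B ∈ B'` such that at
most one edge of `G` runs from `A'` to `B'`. -/
theorem menger_digraph {V E : Type} (G : MultiDigraph V E)
    (A : Set V) (vB : V) (hvB : vB ∉ A) :
    (∃ p q : DirPath G, IsABPath G A vB p ∧ IsABPath G A vB q ∧
      Disjoint (Set.range p.edges) (Set.range q.edges)) ∨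
    (∃ A' B' : Set V, A' ∪ B' = Set.univ ∧ Disjoint A' B' ∧ A ⊆ A' ∧ vB ∈ B' ∧
      {e : E | G.src e ∈ A' ∧ G.tgt e ∈ B'}.Subsingleton) := by
  classical
  by_cases hR : ∃ a ∈ A, Relation.ReflTransGen
      (fun x y => ∃ e : E, G.src e = x ∧ G.tgt e = y) a vB
  case neg =>
    right
    set R : Set V := {v | ∃ a ∈ A, Relation.ReflTransGen
      (fun x y => ∃ e : E, G.src e = x ∧ G.tgt e = y) a v} with hRdef
    refine ⟨R, Rᶜ, Set.union_compl_self R, disjoint_compl_right,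
      fun a ha => ⟨a, ha, Relation.ReflTransGen.refl⟩, hR, ?_⟩
    intro e he e' he'
    exfalso
    obtain ⟨a, ha, hr⟩ := he.1
    exact he.2 ⟨a, ha, hr.tail ⟨e, rfl, rfl⟩⟩
  case pos =>
    obtain ⟨a0, ha0, hrtg⟩ := hR
    obtain ⟨L0, hL0⟩ := rtg_walk hrtg
    obtain ⟨p, hp, _⟩ := walk_to_abpath G A vB hvB L0.length L0 a0 le_rfl hL0 ha0
    set F : Finset E := Finset.image p.edges Finset.univ with hF
    by_cases hR' : ∃ a ∈ A, Relation.ReflTransGen (resStep G F) a vB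
    · left
      obtain ⟨a1, ha1, hrtg'⟩ := hR'
      obtain ⟨l, hchain, hlast⟩ := List.exists_isChain_cons_of_relationReflTransGen hrtg'
      obtain ⟨l', hchain', hnd, _, hld⟩ := chain_dedup l.length l a1 le_rfl hchain
      have hlast' : l'.getLastD a1 = vB := by
        rw [hld, getLastD_eq_getLast]; exact hlast
      obtain ⟨S, hS⟩ := augment G A vB F l' a1 F ∅ hchain' hnd
        (fun x _ => Set.notMem_empty x)
        (fun v hv => by
          rw [path_div G hvB p hp v hv, if_neg (fun h : v = a1 => hv (h ▸ ha1)), add_zero])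
        (fun e he hne => absurd he hne)
        (fun e he hne => absurd he hne)
      have hS2 : ∀ v, v ∉ A → dC G S v = (if v = vB then 2 else 0) := by
        intro v hv
        rw [hS v hv, hlast']
        by_cases h : v = vB <;> simp [h]
      obtain ⟨b1, hb1, L1, hw1, hL1S, hled1⟩ := extract G A S.card S le_rfl vB hvB
        (by rw [hS2 vB hvB]; norm_num)
        (fun v hv hne => by rw [hS2 v hv, if_neg hne])
      have hT : ∀ v, v ∉ A → dC G (S \ L1.toFinset) v = (if v = vB then 1 else 0) := by
        intro v hv
        rw [hled1 v hv, hS2 v hv]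
        by_cases h : v = vB <;> simp [h]
      obtain ⟨b2, hb2, L2, hw2, hL2T, _⟩ :=
        extract G A (S \ L1.toFinset).card (S \ L1.toFinset) le_rfl vB hvB
          (by rw [hT vB hvB]; norm_num)
          (fun v hv hne => by rw [hT v hv, if_neg hne])
      obtain ⟨p1, hp1, hp1e⟩ := walk_to_abpath G A vB hvB L1.length L1 b1 le_rfl hw1 hb1
      obtain ⟨p2, hp2, hp2e⟩ := walk_to_abpath G A vB hvB L2.length L2 b2 le_rfl hw2 hb2
      refine ⟨p1, p2, hp1, hp2, ?_⟩
      rw [Set.disjoint_left]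
      rintro e ⟨i, rfl⟩ ⟨j, hj⟩
      have he1 : p1.edges i ∈ L1 := hp1e i
      have he2 : p1.edges i ∈ L2 := hj ▸ hp2e j
      have hmem := hL2T _ he2
      rw [Finset.mem_sdiff] at hmem
      exact hmem.2 (List.mem_toFinset.mpr he1)
    · right
      set R' : Set V := {v | ∃ a ∈ A, Relation.ReflTransGen (resStep G F) a v} with hR'def
      have hclosure : ∀ v ∈ R', ∀ w, resStep G F v w → w ∈ R' := by
        rintro v ⟨a, ha, hr⟩ w hw
        exact ⟨a, ha, hr.tail hw⟩
      refine ⟨R', R'ᶜ, Set.union_compl_self R', disjoint_compl_right,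
        fun a ha => ⟨a, ha, Relation.ReflTransGen.refl⟩, hR', ?_⟩
      have hcross : ∀ e, G.src e ∈ R' → G.tgt e ∉ R' → ∃ i, p.edges i = e := by
        intro e hs ht
        by_cases h : e ∈ F
        · rw [hF, Finset.mem_image] at h
          obtain ⟨i, _, hi⟩ := h
          exact ⟨i, hi⟩
        · exact absurd (hclosure _ hs _ (Or.inl ⟨e, h, rfl, rfl⟩)) ht
      have hback : ∀ i : Fin p.n, p.verts i.succ ∈ R' → p.verts i.castSucc ∈ R' := by
        intro i h
        refine hclosure _ h _ (Or.inr ⟨p.edges i, ?_, p.src_eq i, p.tgt_eq i⟩)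
        rw [hF]
        exact Finset.mem_image_of_mem _ (Finset.mem_univ i)
      have hdown : ∀ (m : ℕ) (hm : m < p.n + 1), p.verts ⟨m, hm⟩ ∈ R' →
          ∀ (k : ℕ) (hk : k ≤ m), p.verts ⟨k, by omega⟩ ∈ R' := by
        intro m
        induction m with
        | zero =>
          intro hm h k hk
          have hk0 : k = 0 := Nat.le_zero.mp hk
          subst hk0
          exact h
        | succ m ihm =>
          intro hm h k hk
          rcases Nat.lt_or_ge k (m + 1) with hlt | hge
          · have hmem : p.verts ⟨m, by omega⟩ ∈ R' := hback ⟨m, by omega⟩ h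
            exact ihm (by omega) hmem k (by omega)
          · have hkm : k = m + 1 := by omega
            subst hkm
            exact h
      intro e1 he1 e2 he2
      obtain ⟨i1, hi1⟩ := hcross e1 he1.1 he1.2
      obtain ⟨i2, hi2⟩ := hcross e2 he2.1 he2.2
      have hs1 : p.verts i1.castSucc ∈ R' := by
        have h := he1.1
        rw [← hi1, p.src_eq i1] at h
        exact h
      have ht1 : p.verts i1.succ ∉ R' := by
        have h := he1.2
        rw [← hi1, p.tgt_eq i1] at h
        exact h
      have hs2 : p.verts i2.castSucc ∈ R' := by
        have h := he2.1
        rw [← hi2, p.src_eq i2] at h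
        exact h
      have ht2 : p.verts i2.succ ∉ R' := by
        have h := he2.2
        rw [← hi2, p.tgt_eq i2] at h
        exact h
      have key : ∀ (i j : Fin p.n), p.verts i.succ ∉ R' →
          p.verts j.castSucc ∈ R' → i.val < j.val → False := by
        intro i j hi hj hij
        exact hi (hdown j.val (by omega) hj (i.val + 1) (by omega))
      rcases Nat.lt_trichotomy i1.val i2.val with h | h | h
      · exact (key i1 i2 ht1 hs2 h).elim
      · rw [← hi1, ← hi2, show i1 = i2 from Fin.ext h]
      · exact (key i2 i1 ht2 hs1 h).elim
end

section
/- Let D be a reduced diagram of a prime, special, alternating link L, let G be the underlying 4-valent graph of D with the orientation o directing each edge from overcrossing to undercrossing, and let H be the set of edges defined by Crowell's rule. If A : G \to G_H(D) is the map collapsing every Seifert circle contained in H to a point, then for any vertex v of G, A induces a bijection from the set of H-maximal directed spanning subtrees of G with origin v to the set of directed spanning subtrees of G_H(D) with origin A(v). -/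
namespace MultiDigraph

variable {V E : Type}

/-- The digraph obtained from `G` by collapsing every edge of `H` to a point:
vertices joined by edges of `H` (the Seifert circles contained in `H`) are
identified, and the remaining edges are those not in `H`. -/
def collapse (G : MultiDigraph V E) (H : Set E) :
    MultiDigraph (Quot fun a b => ∃ e ∈ H, G.src e = a ∧ G.tgt e = b)
      {e : E // e ∉ H} :=
  ⟨fun f => Quot.mk _ (G.src f.1), fun f => Quot.mk _ (G.tgt f.1)⟩

/-- `T` is an `H`-maximal directed spanning subtree of `G` with origin `v`:
among all directed spanning subtrees with origin `v` it uses as few edges of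
`K` (equivalently, as many edges of `H`) as possible. -/
def IsHMaxSpanTree (G : MultiDigraph V E) (H K : Set E) (v : V)
    (T : Set E) : Prop :=
  G.IsSpanTree v T ∧
  ∀ T' : Set E, G.IsSpanTree v T' → (T ∩ K).ncard ≤ (T' ∩ K).ncard

end MultiDigraph

-- auxiliary development


private def relPow {α : Type*} (r : α → α → Prop) : ℕ → α → α → Prop
  | 0 => Eq
  | n+1 => fun a c => ∃ b, relPow r n a b ∧ r b c

private lemma reflTransGen_iff_relPow {α : Type*} {r : α → α → Prop} {a b : α} :
    Relation.ReflTransGen r a b ↔ ∃ n, relPow r n a b := by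
  constructor
  · intro h
    induction h with
    | refl => exact ⟨0, rfl⟩
    | tail h₁ h₂ ih => obtain ⟨n, hn⟩ := ih; exact ⟨n+1, _, hn, h₂⟩
  · rintro ⟨n, hn⟩
    induction n generalizing b with
    | zero => simp only [relPow] at hn; subst hn; exact .refl
    | succ n ih => obtain ⟨c, hc, hr⟩ := hn; exact (ih hc).tail hr

namespace MultiDigraph
variable {V E : Type}

lemma reach_mono (G : MultiDigraph V E) {S T : Set E} (h : S ⊆ T) {a b : V}
    (hr : G.reach S a b) : G.reach T a b := by
  induction hr with
  | refl => exact .refl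
  | tail _ st ih => exact ih.tail (let ⟨e, he, h1, h2⟩ := st; ⟨e, h he, h1, h2⟩)

lemma exists_spanTree [Finite V] (G : MultiDigraph V E) (u : V)
    (h : ∀ w, G.reach Set.univ u w) : ∃ T, G.IsSpanTree u T := by
  classical
  have hex : ∀ w, ∃ n, relPow (G.step Set.univ) n u w :=
    fun w => reflTransGen_iff_relPow.1 (h w)
  set d : V → ℕ := fun w => Nat.find (hex w)
  have hd : ∀ w, relPow (G.step Set.univ) (d w) u w := fun w => Nat.find_spec (hex w)
  have hd0 : ∀ w, w ≠ u → d w ≠ 0 := by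
    intro w hw h0
    have := hd w; rw [h0] at this
    simp only [relPow] at this; exact hw this.symm
  have key : ∀ w, w ≠ u → ∃ e, G.tgt e = w ∧ d (G.src e) < d w := by
    intro w hw
    obtain ⟨m, hm⟩ : ∃ m, d w = m + 1 := Nat.exists_eq_succ_of_ne_zero (hd0 w hw)
    have h2 := hd w
    rw [hm] at h2
    obtain ⟨b, hb, e, -, hsrc, htgt⟩ := h2
    refine ⟨e, htgt, ?_⟩
    rw [hsrc]
    calc d b ≤ m := Nat.find_le hb
      _ < d w := by omega
  choose edge htgt hlt using key
  refine ⟨{e | ∃ w, ∃ hw : w ≠ u, edge w hw = e}, ?_, ?_, ?_⟩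
  · rintro e ⟨w, hw, rfl⟩; rw [htgt]; exact hw
  · intro w hw
    refine ⟨edge w hw, ⟨⟨w, hw, rfl⟩, htgt w hw⟩, ?_⟩
    rintro e ⟨⟨w', hw', rfl⟩, ht⟩
    rw [htgt] at ht; subst ht; rfl
  · have main : ∀ n w, d w ≤ n → G.reach {e | ∃ w, ∃ hw : w ≠ u, edge w hw = e} u w := by
      intro n
      induction n with
      | zero =>
        intro w hw
        by_cases h' : w = u
        · subst h'; exact .refl
        · exact absurd (Nat.le_zero.1 hw) (hd0 w h')
      | succ n ih =>
        intro w hw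
        by_cases h' : w = u
        · subst h'; exact .refl
        · have h1 : d (G.src (edge w h')) ≤ n := by
            have := hlt w h'; omega
          exact (ih _ h1).tail ⟨edge w h', ⟨w, h', rfl⟩, rfl, htgt w h'⟩
    exact fun w => main (d w) w le_rfl

end MultiDigraph

namespace CrowellAux
open MultiDigraph
variable {V E : Type}

@[reducible] def rQ (G : MultiDigraph V E) (H : Set E) : V → V → Prop :=
  fun a b => ∃ e ∈ H, G.src e = a ∧ G.tgt e = b

lemma quot_sound_edge (G : MultiDigraph V E) (H : Set E) {e : E} (he : e ∈ H) :
    Quot.mk (rQ G H) (G.src e) = Quot.mk (rQ G H) (G.tgt e) :=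
  Quot.sound ⟨e, he, rfl, rfl⟩

lemma cycle_reach [Finite V] (G : MultiDigraph V E) (H : Set E)
    (hHin : ∀ w : V, ∃! e, e ∈ H ∧ G.tgt e = w)
    (hHout : ∀ w : V, ∃! e, e ∈ H ∧ G.src e = w)
    {w₀ w : V} (hcl : Quot.mk (rQ G H) w₀ = Quot.mk (rQ G H) w)
    {T : Set E}
    (hT : ∀ e ∈ H, Quot.mk (rQ G H) (G.tgt e) = Quot.mk (rQ G H) w₀ →
      G.tgt e ≠ w₀ → e ∈ T) :
    G.reach T w₀ w := by
  classical
  choose eo hoH hosrc using fun a => (hHout a).exists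
  set σ : V → V := fun a => G.tgt (eo a) with hσ
  have hinj : Function.Injective σ := by
    intro a b hab
    have h1 : eo a = eo b := (hHin (σ b)).unique ⟨hoH a, hab⟩ ⟨hoH b, rfl⟩
    rw [← hosrc a, h1, hosrc b]
  have hbij := Finite.injective_iff_bijective.1 hinj
  set p : Equiv.Perm V := Equiv.ofBijective σ hbij with hp
  have hiter : ∀ (n : ℕ) (a : V), (p ^ n) a = σ^[n] a := by
    intro n a; rw [Equiv.Perm.coe_pow]; rfl
  have hclσ : ∀ a, Quot.mk (rQ G H) a = Quot.mk (rQ G H) (σ a) := by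
    intro a
    have h2 := quot_sound_edge G H (hoH a)
    rwa [hosrc a] at h2
  have hclit : ∀ (n : ℕ) (a : V), Quot.mk (rQ G H) a = Quot.mk (rQ G H) (σ^[n] a) := by
    intro n
    induction n with
    | zero => intro a; rfl
    | succ n ih =>
      intro a
      rw [Function.iterate_succ_apply']
      exact (ih a).trans (hclσ _)
  have hsymm : ∀ a b : V, (∃ n, σ^[n] a = b) → ∃ m, σ^[m] b = a := by
    rintro a b ⟨n, rfl⟩
    have hop := orderOf_pos p
    refine ⟨(orderOf p - 1) * n, ?_⟩
    have h1 : (orderOf p - 1) * n + n = orderOf p * n := by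
      rw [Nat.sub_one_mul]
      exact Nat.sub_add_cancel (Nat.le_mul_of_pos_left n hop)
    calc σ^[(orderOf p - 1) * n] (σ^[n] a)
        = σ^[(orderOf p - 1) * n + n] a := (Function.iterate_add_apply σ _ n a).symm
      _ = (p ^ ((orderOf p - 1) * n + n)) a := (hiter _ _).symm
      _ = (p ^ (orderOf p * n)) a := by rw [h1]
      _ = a := by rw [pow_mul, pow_orderOf_eq_one, one_pow]; rfl
  have horb : ∀ a b : V, Quot.mk (rQ G H) a = Quot.mk (rQ G H) b → ∃ n, σ^[n] a = b := by
    intro a b hab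
    have h := Quot.eq.1 hab
    clear hab
    induction h with
    | rel x y hxy =>
      obtain ⟨e, heH, hs, ht⟩ := hxy
      have he : e = eo x := (hHout x).unique ⟨heH, hs⟩ ⟨hoH x, hosrc x⟩
      exact ⟨1, by rw [Function.iterate_one, hσ]; dsimp only; rw [← he, ht]⟩
    | refl x => exact ⟨0, rfl⟩
    | symm x y _ ih => exact hsymm _ _ ih
    | trans x y z _ _ ih₁ ih₂ =>
      obtain ⟨n, rfl⟩ := ih₁
      obtain ⟨m, rfl⟩ := ih₂
      exact ⟨m + n, Function.iterate_add_apply σ m n x⟩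
  by_cases hww : w = w₀
  · subst hww; exact .refl
  · have hexn : ∃ n, σ^[n] w₀ = w := horb w₀ w hcl
    have hNspec : σ^[Nat.find hexn] w₀ = w := Nat.find_spec hexn
    set N := Nat.find hexn with hN
    have hN0 : N ≠ 0 := by
      intro h0; rw [h0] at hNspec; exact hww hNspec.symm
    have hmid : ∀ i, i + 1 ≤ N → σ^[i+1] w₀ ≠ w₀ := by
      intro i hi hbad
      have h2 : σ^[N - (i+1)] w₀ = w := by
        conv_lhs => rw [← hbad, ← Function.iterate_add_apply]
        rw [Nat.sub_add_cancel hi]; exact hNspec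
      have h3 : N ≤ N - (i+1) := hN ▸ Nat.find_le h2
      omega
    have hstep : ∀ i, i ≤ N → G.reach T w₀ (σ^[i] w₀) := by
      intro i
      induction i with
      | zero => intro _; exact .refl
      | succ i ih =>
        intro hi
        have htg : G.tgt (eo (σ^[i] w₀)) = σ^[i+1] w₀ :=
          (Function.iterate_succ_apply' σ i w₀).symm
        refine (ih (by omega)).tail ⟨eo (σ^[i] w₀), ?_, hosrc _, htg⟩
        refine hT _ (hoH _) ?_ ?_
        · rw [htg]; exact (hclit (i+1) w₀).symm
        · rw [htg]; exact hmid i hi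
    have hfin := hstep N le_rfl
    rwa [hNspec] at hfin

lemma reach_collapse (G : MultiDigraph V E) (H : Set E) {T : Set E} {a b : V}
    (h : G.reach T a b) :
    (G.collapse H).reach {f : {e : E // e ∉ H} | f.1 ∈ T}
      (Quot.mk (rQ G H) a) (Quot.mk (rQ G H) b) := by
  induction h with
  | refl => exact .refl
  | @tail c b h st ih =>
    obtain ⟨e, heT, hs, ht⟩ := st
    by_cases he : e ∈ H
    · have h2 : Quot.mk (rQ G H) c = Quot.mk (rQ G H) b := by
        rw [← hs, ← ht]; exact quot_sound_edge G H he
      rwa [h2] at ih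
    · exact ih.tail ⟨⟨e, he⟩, heT, congrArg (Quot.mk _) hs, congrArg (Quot.mk _) ht⟩

lemma exists_K_edge (G : MultiDigraph V E) (H : Set E) {v : V} {T : Set E}
    (hT : G.IsSpanTree v T) (w : V)
    (hw : Quot.mk (rQ G H) w ≠ Quot.mk (rQ G H) v) :
    ∃ e, e ∈ T ∧ e ∉ H ∧ Quot.mk (rQ G H) (G.tgt e) = Quot.mk (rQ G H) w := by
  have key : ∀ b, G.reach T v b → Quot.mk (rQ G H) b = Quot.mk (rQ G H) v ∨
      ∃ e, e ∈ T ∧ e ∉ H ∧ Quot.mk (rQ G H) (G.tgt e) = Quot.mk (rQ G H) b := by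
    intro b hb
    induction hb with
    | refl => exact Or.inl rfl
    | @tail c b h st ih =>
      obtain ⟨e, heT, hs, ht⟩ := st
      by_cases he : e ∈ H
      · have h2 : Quot.mk (rQ G H) c = Quot.mk (rQ G H) b := by
          rw [← hs, ← ht]; exact quot_sound_edge G H he
        rwa [h2] at ih
      · exact Or.inr ⟨e, heT, he, by rw [ht]⟩
  exact (key w (hT.2.2 w)).resolve_left hw

def liftT (G : MultiDigraph V E) (H : Set E) (v : V)
    (T' : Set {e : E // e ∉ H}) : Set E :=
  {e | (∃ h : e ∉ H, (⟨e, h⟩ : {e : E // e ∉ H}) ∈ T') ∨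
    (e ∈ H ∧ G.tgt e ≠ v ∧ ∀ f ∈ T', G.tgt f.1 ≠ G.tgt e)}

lemma lift_image (G : MultiDigraph V E) (H : Set E) (v : V)
    (T' : Set {e : E // e ∉ H}) :
    {f : {e : E // e ∉ H} | f.1 ∈ liftT G H v T'} = T' := by
  ext f
  simp only [Set.mem_setOf_eq, liftT]
  constructor
  · rintro (⟨h, hmem⟩ | ⟨heH, -, -⟩)
    · exact hmem
    · exact absurd heH f.2
  · intro hf
    exact Or.inl ⟨f.2, hf⟩

lemma lift_inter_K (G : MultiDigraph V E) (H K : Set E)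
    (hpart : ∀ e : E, (e ∈ H ∧ e ∉ K) ∨ (e ∈ K ∧ e ∉ H)) (v : V)
    (T' : Set {e : E // e ∉ H}) :
    liftT G H v T' ∩ K = Subtype.val '' T' := by
  ext e
  constructor
  · rintro ⟨(⟨h, hmem⟩ | ⟨heH, -, -⟩), heK⟩
    · exact ⟨⟨e, h⟩, hmem, rfl⟩
    · exact absurd heH ((hpart e).resolve_left (fun hh => hh.2 heK)).2
  · rintro ⟨f, hf, rfl⟩
    exact ⟨Or.inl ⟨f.2, hf⟩, ((hpart f.1).resolve_left (fun hh => f.2 hh.1)).1⟩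

lemma lift_isSpanTree [Finite V] (G : MultiDigraph V E) (H : Set E)
    (hHin : ∀ w : V, ∃! e, e ∈ H ∧ G.tgt e = w)
    (hHout : ∀ w : V, ∃! e, e ∈ H ∧ G.src e = w)
    {v : V} {T' : Set {e : E // e ∉ H}}
    (hT' : (G.collapse H).IsSpanTree (Quot.mk (rQ G H) v) T') :
    G.IsSpanTree v (liftT G H v T') := by
  obtain ⟨hc1, hc2, hc3⟩ := hT'
  refine ⟨?_, ?_, ?_⟩
  · rintro e (⟨h, hmem⟩ | ⟨heH, hne, hfa⟩)
    · intro hbad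
      exact hc1 _ hmem (congrArg (Quot.mk (rQ G H)) hbad)
    · exact hne
  · intro w hw
    by_cases hex : ∃ f ∈ T', G.tgt f.1 = w
    · obtain ⟨f, hf, hfw⟩ := hex
      refine ⟨f.1, ⟨Or.inl ⟨f.2, hf⟩, hfw⟩, ?_⟩
      rintro e ⟨(⟨h, hmem⟩ | ⟨heH, hne, hfa⟩), hte⟩
      · have hclw : Quot.mk (rQ G H) w ≠ Quot.mk (rQ G H) v := by
          intro hbad
          exact hc1 f hf (by
            show Quot.mk (rQ G H) (G.tgt f.1) = _
            rw [hfw]; exact hbad)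
        obtain ⟨g, hg, hgu⟩ := hc2 (Quot.mk (rQ G H) w) hclw
        have h1 : (⟨e, h⟩ : {e : E // e ∉ H}) = g :=
          hgu _ ⟨hmem, congrArg (Quot.mk (rQ G H)) hte⟩
        have h2 : f = g := hgu _ ⟨hf, congrArg (Quot.mk (rQ G H)) hfw⟩
        rw [show e = (⟨e, h⟩ : {e : E // e ∉ H}).1 from rfl, h1, ← h2]
      · exact absurd (hfw.trans hte.symm) (hfa f hf)
    · obtain ⟨e₀, ⟨he₀H, he₀t⟩, he₀u⟩ := hHin w
      refine ⟨e₀, ⟨Or.inr ⟨he₀H, by rw [he₀t]; exact hw, ?_⟩, he₀t⟩, ?_⟩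
      · intro f hf hbad
        exact hex ⟨f, hf, by rw [hbad, he₀t]⟩
      · rintro e ⟨(⟨h, hmem⟩ | ⟨heH, -, -⟩), hte⟩
        · exact absurd ⟨⟨e, h⟩, hmem, hte⟩ hex
        · exact he₀u e ⟨heH, hte⟩
  · have main : ∀ q, (G.collapse H).reach T' (Quot.mk (rQ G H) v) q →
        ∀ w, Quot.mk (rQ G H) w = q → G.reach (liftT G H v T') v w := by
      intro q hq
      induction hq with
      | refl =>
        intro w hwv
        refine cycle_reach G H hHin hHout hwv.symm ?_
        intro e heH hecl hene
        refine Or.inr ⟨heH, hene, ?_⟩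
        intro f hf hbad
        exact hc1 f hf (by
          show Quot.mk (rQ G H) (G.tgt f.1) = _
          rw [hbad, hecl])
      | @tail q₁ q₂ hq st ih =>
        obtain ⟨f, hf, hfs, hft⟩ := st
        intro w hwq
        have h1 : G.reach (liftT G H v T') v (G.src f.1) := ih _ hfs
        have h2 := h1.tail ⟨f.1, Or.inl ⟨f.2, hf⟩, rfl, rfl⟩
        have hq₂v : q₂ ≠ Quot.mk (rQ G H) v := by
          intro hbad; exact hc1 f hf (hft.trans hbad)
        have hcl2 : Quot.mk (rQ G H) (G.tgt f.1) = Quot.mk (rQ G H) w := by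
          rw [hwq]; exact hft
        refine h2.trans (cycle_reach G H hHin hHout hcl2 ?_)
        intro e heH hecl hene
        refine Or.inr ⟨heH, ?_, ?_⟩
        · intro hbad
          apply hq₂v
          rw [← hft]
          show Quot.mk (rQ G H) (G.tgt f.1) = _
          rw [← hecl, hbad]
        · intro g hg hbad
          obtain ⟨g₀, hg₀, hgu⟩ := hc2 q₂ hq₂v
          have e1 : g = g₀ := hgu _ ⟨hg, by
            show Quot.mk (rQ G H) (G.tgt g.1) = q₂
            rw [hbad, hecl, ← hft]; exact rfl⟩
          have e2 : f = g₀ := hgu _ ⟨hf, hft⟩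
          rw [e1, ← e2] at hbad
          exact hene hbad.symm
    intro w
    exact main _ (hc3 (Quot.mk (rQ G H) w)) w rfl

lemma card_tree' (G : MultiDigraph V E) (H : Set E) {v : V}
    {T' : Set {e : E // e ∉ H}}
    (hT' : (G.collapse H).IsSpanTree (Quot.mk (rQ G H) v) T') :
    Nat.card T' = Nat.card {c : Quot (rQ G H) // c ≠ Quot.mk (rQ G H) v} := by
  obtain ⟨hc1, hc2, -⟩ := hT'
  refine Nat.card_eq_of_bijective
    (fun f => ⟨Quot.mk (rQ G H) (G.tgt f.1.1), hc1 f.1 f.2⟩) ⟨?_, ?_⟩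
  · rintro ⟨f₁, hf₁⟩ ⟨f₂, hf₂⟩ hcl
    have hcl' : Quot.mk (rQ G H) (G.tgt f₁.1) = Quot.mk (rQ G H) (G.tgt f₂.1) :=
      congrArg Subtype.val hcl
    have hne : Quot.mk (rQ G H) (G.tgt f₁.1) ≠ Quot.mk (rQ G H) v := hc1 f₁ hf₁
    obtain ⟨g, hg, hgu⟩ := hc2 _ hne
    have e1 : f₁ = g := hgu _ ⟨hf₁, rfl⟩
    have e2 : f₂ = g := hgu _ ⟨hf₂, hcl'.symm⟩
    exact Subtype.ext (e1.trans e2.symm)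
  · rintro ⟨c, hc⟩
    obtain ⟨g, ⟨hg, hgc⟩, -⟩ := hc2 c hc
    exact ⟨⟨g, hg⟩, Subtype.ext hgc⟩

lemma card_lower [Fintype E] (G : MultiDigraph V E) (H K : Set E)
    (hpart : ∀ e : E, (e ∈ H ∧ e ∉ K) ∨ (e ∈ K ∧ e ∉ H))
    {v : V} {T : Set E} (hT : G.IsSpanTree v T) :
    Nat.card {c : Quot (rQ G H) // c ≠ Quot.mk (rQ G H) v} ≤ (T ∩ K).ncard := by
  classical
  have hch : ∀ c : {c : Quot (rQ G H) // c ≠ Quot.mk (rQ G H) v},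
      ∃ e, (e ∈ T ∩ K) ∧ Quot.mk (rQ G H) (G.tgt e) = c.1 := by
    rintro ⟨c, hc⟩
    obtain ⟨w, rfl⟩ := Quot.exists_rep c
    obtain ⟨e, h1, h2, h3⟩ := exists_K_edge G H hT w hc
    exact ⟨e, ⟨h1, ((hpart e).resolve_left (fun hh => h2 hh.1)).1⟩, h3⟩
  choose ψ hψ hψc using hch
  rw [← Nat.card_coe_set_eq]
  exact Nat.card_le_card_of_injective (fun c => ⟨ψ c, hψ c⟩)
    (fun c₁ c₂ h => Subtype.ext (by
      rw [← hψc c₁, ← hψc c₂]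
      exact congrArg (fun x : ↥(T ∩ K) => Quot.mk (rQ G H) (G.tgt x.1)) h))

lemma hmax_structure [Fintype V] [Fintype E] (G : MultiDigraph V E) (H K : Set E)
    (hpart : ∀ e : E, (e ∈ H ∧ e ∉ K) ∨ (e ∈ K ∧ e ∉ H))
    (hHin : ∀ w : V, ∃! e, e ∈ H ∧ G.tgt e = w)
    (hHout : ∀ w : V, ∃! e, e ∈ H ∧ G.src e = w)
    (hconn : G.OConnected) {v : V} {T : Set E}
    (hT : G.IsHMaxSpanTree H K v T) :
    (∀ e ∈ T, e ∉ H → Quot.mk (rQ G H) (G.tgt e) ≠ Quot.mk (rQ G H) v) ∧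
    (∀ e₁ ∈ T, ∀ e₂ ∈ T, e₁ ∉ H → e₂ ∉ H →
      Quot.mk (rQ G H) (G.tgt e₁) = Quot.mk (rQ G H) (G.tgt e₂) → e₁ = e₂) := by
  classical
  obtain ⟨hTtree, hTmin⟩ := hT
  haveI : Finite (Quot (rQ G H)) := Finite.of_surjective _ Quot.mk_surjective
  have hconn' : ∀ q, (G.collapse H).reach Set.univ (Quot.mk (rQ G H) v) q := by
    intro q
    obtain ⟨w, rfl⟩ := Quot.exists_rep q
    exact (G.collapse H).reach_mono (fun f _ => trivial)
      (reach_collapse G H (T := Set.univ) (hconn v w))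
  obtain ⟨T'₀, hT'₀⟩ := (G.collapse H).exists_spanTree (Quot.mk (rQ G H) v) hconn'
  have hub : (T ∩ K).ncard ≤ Nat.card {c : Quot (rQ G H) // c ≠ Quot.mk (rQ G H) v} := by
    have h1 := hTmin _ (lift_isSpanTree G H hHin hHout hT'₀)
    rw [lift_inter_K G H K hpart v T'₀,
      Set.ncard_image_of_injective _ Subtype.val_injective] at h1
    calc (T ∩ K).ncard ≤ T'₀.ncard := h1
      _ = Nat.card T'₀ := (Nat.card_coe_set_eq _)
      _ = _ := card_tree' G H hT'₀
  have hlb := card_lower G H K hpart hTtree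
  have hcardeq : (T ∩ K).ncard
      = Nat.card {c : Quot (rQ G H) // c ≠ Quot.mk (rQ G H) v} :=
    le_antisymm hub hlb
  have hch : ∀ c : {c : Quot (rQ G H) // c ≠ Quot.mk (rQ G H) v},
      ∃ e, (e ∈ T ∩ K) ∧ Quot.mk (rQ G H) (G.tgt e) = c.1 := by
    rintro ⟨c, hc⟩
    obtain ⟨w, rfl⟩ := Quot.exists_rep c
    obtain ⟨e, h1, h2, h3⟩ := exists_K_edge G H hTtree w hc
    exact ⟨e, ⟨h1, ((hpart e).resolve_left (fun hh => h2 hh.1)).1⟩, h3⟩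
  choose ψ hψ hψc using hch
  set Ψ : {c : Quot (rQ G H) // c ≠ Quot.mk (rQ G H) v} → ↥(T ∩ K) :=
    fun c => ⟨ψ c, hψ c⟩ with hΨ
  have hinj : Function.Injective Ψ := by
    intro c₁ c₂ h
    refine Subtype.ext ?_
    rw [← hψc c₁, ← hψc c₂]
    exact congrArg (fun x : ↥(T ∩ K) => Quot.mk (rQ G H) (G.tgt x.1)) h
  haveI : Fintype {c : Quot (rQ G H) // c ≠ Quot.mk (rQ G H) v} := Fintype.ofFinite _
  haveI : Fintype ↥(T ∩ K) := Fintype.ofFinite _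
  have hbij : Function.Bijective Ψ := by
    rw [Fintype.bijective_iff_injective_and_card]
    refine ⟨hinj, ?_⟩
    rw [← Nat.card_eq_fintype_card, ← Nat.card_eq_fintype_card,
      Nat.card_coe_set_eq, hcardeq]
  have memK : ∀ e ∈ T, e ∉ H → e ∈ T ∩ K :=
    fun e he hH => ⟨he, ((hpart e).resolve_left (fun hh => hH hh.1)).1⟩
  constructor
  · intro e heT heH hbad
    obtain ⟨c, hc⟩ := hbij.2 ⟨e, memK e heT heH⟩
    have h5 := hψc c
    rw [show ψ c = e from congrArg Subtype.val hc] at h5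
    exact c.2 (h5 ▸ hbad)
  · intro e₁ h₁ e₂ h₂ hH₁ hH₂ hcl
    obtain ⟨c₁, hc₁⟩ := hbij.2 ⟨e₁, memK e₁ h₁ hH₁⟩
    obtain ⟨c₂, hc₂⟩ := hbij.2 ⟨e₂, memK e₂ h₂ hH₂⟩
    have k₁ : Quot.mk (rQ G H) (G.tgt e₁) = c₁.1 := by
      rw [← hψc c₁, show ψ c₁ = e₁ from congrArg Subtype.val hc₁]
    have k₂ : Quot.mk (rQ G H) (G.tgt e₂) = c₂.1 := by
      rw [← hψc c₂, show ψ c₂ = e₂ from congrArg Subtype.val hc₂]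
    have : c₁ = c₂ := Subtype.ext (k₁.symm.trans (hcl.trans k₂))
    have h6 := hc₁.symm.trans (this ▸ hc₂)
    exact congrArg Subtype.val h6

lemma image_isSpanTree [Fintype V] [Fintype E] (G : MultiDigraph V E) (H K : Set E)
    (hpart : ∀ e : E, (e ∈ H ∧ e ∉ K) ∨ (e ∈ K ∧ e ∉ H))
    (hHin : ∀ w : V, ∃! e, e ∈ H ∧ G.tgt e = w)
    (hHout : ∀ w : V, ∃! e, e ∈ H ∧ G.src e = w)
    (hconn : G.OConnected) {v : V} {T : Set E}
    (hT : G.IsHMaxSpanTree H K v T) :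
    (G.collapse H).IsSpanTree (Quot.mk (rQ G H) v)
      {f : {e : E // e ∉ H} | f.1 ∈ T} := by
  obtain ⟨hs1, hs2⟩ := hmax_structure G H K hpart hHin hHout hconn hT
  refine ⟨?_, ?_, ?_⟩
  · intro f hf
    exact hs1 f.1 hf f.2
  · intro q hq
    obtain ⟨w, rfl⟩ := Quot.exists_rep q
    obtain ⟨e, heT, heH, hecl⟩ := exists_K_edge G H hT.1 w hq
    refine ⟨⟨e, heH⟩, ⟨heT, hecl⟩, ?_⟩
    rintro g ⟨hgT, hgcl⟩
    exact Subtype.ext (hs2 g.1 hgT e heT g.2 heH (hgcl.trans hecl.symm))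
  · intro q
    obtain ⟨w, rfl⟩ := Quot.exists_rep q
    exact reach_collapse G H (hT.1.2.2 w)

lemma subset_of_image_eq (G : MultiDigraph V E) (H : Set E)
    (hHin : ∀ w : V, ∃! e, e ∈ H ∧ G.tgt e = w)
    {v : V} {T₁ T₂ : Set E} (h₁ : G.IsSpanTree v T₁) (h₂ : G.IsSpanTree v T₂)
    (him : {f : {e : E // e ∉ H} | f.1 ∈ T₁} = {f : {e : E // e ∉ H} | f.1 ∈ T₂}) :
    T₁ ⊆ T₂ := by
  intro e he
  by_cases heH : e ∈ H
  · have hwv : G.tgt e ≠ v := h₁.1 e he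
    obtain ⟨e₂, ⟨he₂T, he₂t⟩, hu₂⟩ := h₂.2.1 (G.tgt e) hwv
    by_cases he₂H : e₂ ∈ H
    · have heq : e₂ = e := (hHin (G.tgt e)).unique ⟨he₂H, he₂t⟩ ⟨heH, rfl⟩
      rwa [← heq]
    · have he₂T₁ : e₂ ∈ T₁ := by
        have hm : (⟨e₂, he₂H⟩ : {e : E // e ∉ H}) ∈
            {f : {e : E // e ∉ H} | f.1 ∈ T₂} := he₂T
        rw [← him] at hm
        exact hm
      obtain ⟨e₀, he₀, hu₀⟩ := h₁.2.1 (G.tgt e) hwv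
      have q1 : e = e₀ := hu₀ e ⟨he, rfl⟩
      have q2 : e₂ = e₀ := hu₀ e₂ ⟨he₂T₁, he₂t⟩
      exact absurd ((q2.trans q1.symm) ▸ he₂H) (fun hh => hh heH)
  · have hm : (⟨e, heH⟩ : {e : E // e ∉ H}) ∈
        {f : {e : E // e ∉ H} | f.1 ∈ T₁} := he
    rw [him] at hm
    exact hm

end CrowellAux


open CrowellAux in
/-- **Crowell's bijection.**  Let `G` (with the orientation `o`) be the
underlying digraph of a reduced diagram `D` of a prime, special, alternating
link, and let `H`, `K` be the partition of the edges given by Crowell's rule.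
(For such a diagram: `H` and `K` partition the edges; at each vertex there is
exactly one incoming and one outgoing edge of `H`, and likewise for `K` — the
Seifert circles of `D` are the cycles lying entirely in `H` or entirely in
`K`; and `G` is `O`-connected.)  Then the map `A` collapsing every Seifert
circle contained in `H` induces, for every vertex `v`, a bijection from the
set of `H`-maximal directed spanning subtrees of `G` with origin `v` onto the
set of directed spanning subtrees of the collapsed digraph `G_H(D)` with
origin `A v`. -/
theorem crowell_collapse_bijection {V E : Type} [Fintype V] [Fintype E]
    (G : MultiDigraph V E) (H K : Set E)
    (hpart : ∀ e : E, (e ∈ H ∧ e ∉ K) ∨ (e ∈ K ∧ e ∉ H))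
    (hHin : ∀ v : V, ∃! e, e ∈ H ∧ G.tgt e = v)
    (hHout : ∀ v : V, ∃! e, e ∈ H ∧ G.src e = v)
    (hKin : ∀ v : V, ∃! e, e ∈ K ∧ G.tgt e = v)
    (hKout : ∀ v : V, ∃! e, e ∈ K ∧ G.src e = v)
    (hconn : G.OConnected) (v : V) :
    Set.BijOn (fun T : Set E => {f : {e : E // e ∉ H} | f.1 ∈ T})
      {T : Set E | G.IsHMaxSpanTree H K v T}
      {T' : Set {e : E // e ∉ H} |
        (G.collapse H).IsSpanTree (Quot.mk _ v) T'} := by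
  classical
  refine ⟨?_, ?_, ?_⟩
  · intro T hT
    exact image_isSpanTree G H K hpart hHin hHout hconn hT
  · intro T₁ h₁ T₂ h₂ him
    exact Set.Subset.antisymm
      (subset_of_image_eq G H hHin h₁.1 h₂.1 him)
      (subset_of_image_eq G H hHin h₂.1 h₁.1 him.symm)
  · intro T' hT'
    refine ⟨liftT G H v T', ⟨lift_isSpanTree G H hHin hHout hT', ?_⟩,
      lift_image G H v T'⟩
    intro S hS
    have h1 : (liftT G H v T' ∩ K).ncard
        = Nat.card {c : Quot (rQ G H) // c ≠ Quot.mk (rQ G H) v} := by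
      rw [lift_inter_K G H K hpart v T',
        Set.ncard_image_of_injective _ Subtype.val_injective,
        ← Nat.card_coe_set_eq, card_tree' G H hT']
    rw [h1]
    exact card_lower G H K hpart hS
end

section
/- Let G be a prime planar digraph in which incoming and outgoing edges alternate at each vertex, let w be a vertex of G of in-degree n. Then there exists a vertex v \ne w such that the number of directed spanning subtrees of G with origin v is at least n. -/
namespace MultiDigraph

variable {V E : Type}

/-- The endpoint of a dart: `(e, false)` sits at the initial vertex of `e`,
and `(e, true)` sits at the terminal vertex of `e`. -/
def dartVert (G : MultiDigraph V E) (d : E × Bool) : V :=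
  if d.2 then G.tgt d.1 else G.src d.1

/-- One undirected step using an edge in `S`. -/
def ustep (G : MultiDigraph V E) (S : Set E) (a b : V) : Prop :=
  ∃ e ∈ S, (G.src e = a ∧ G.tgt e = b) ∨ (G.src e = b ∧ G.tgt e = a)

/-- A (planar) digraph is prime if it has no loops, no cut vertex, and no
simple closed curve in the sphere meets its edges at exactly two points with
vertices on both sides; for a connected plane graph the last condition is
equivalent to saying that removing any (at most) two edges leaves the graph
connected. -/
def Prime (G : MultiDigraph V E) : Prop :=
  (∀ e : E, G.src e ≠ G.tgt e) ∧
  (∀ v a b : V, a ≠ v → b ≠ v →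
    Relation.ReflTransGen
      (fun x y => x ≠ v ∧ y ≠ v ∧ G.ustep {e | G.src e ≠ v ∧ G.tgt e ≠ v} x y)
      a b) ∧
  (∀ e₁ e₂ : E, ∀ a b : V,
    Relation.ReflTransGen (G.ustep {e | e ≠ e₁ ∧ e ≠ e₂}) a b)

end MultiDigraph

/-- A digraph together with a combinatorial planar embedding in the 2-sphere:
a rotation system `rot` (sending each dart to the next dart counterclockwise
around the same vertex), required to satisfy Euler's formula
`V - E + F = 2`, where the faces (regions) are the orbits of the face
permutation `d ↦ rot (d.1, !d.2)`. -/
structure PlanarDigraph (V E : Type) where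
  G : MultiDigraph V E
  rot : E × Bool → E × Bool
  rot_vertex : ∀ d, G.dartVert (rot d) = G.dartVert d
  rot_bijective : Function.Bijective rot
  rot_cyclic : ∀ d d', G.dartVert d = G.dartVert d' → ∃ k : ℕ, rot^[k] d = d'
  euler : Nat.card V +
      Nat.card (Quot fun d d' : E × Bool => d' = rot (d.1, !d.2)) =
    Nat.card E + 2

/-- Incoming and outgoing edges alternate around each vertex of `P`. -/
def PlanarDigraph.Alternating {V E : Type} (P : PlanarDigraph V E) : Prop :=
  ∀ d : E × Bool, (P.rot d).2 = !d.2



namespace BK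
open MultiDigraph
open scoped Classical
variable {V E : Type}

/-- one step within edge set `S`, landing outside the avoided vertex set `A`. -/
def astep (G : MultiDigraph V E) (S : Set E) (A : Set V) (a b : V) : Prop :=
  b ∉ A ∧ ∃ e ∈ S, G.src e = a ∧ G.tgt e = b

/-- reachability within `S` avoiding vertices of `A` (except possibly the start). -/
def arch (G : MultiDigraph V E) (S : Set E) (A : Set V) : V → V → Prop :=
  Relation.ReflTransGen (astep G S A)

variable {G : MultiDigraph V E}

lemma arch.refl {S A} {a : V} : arch G S A a a := Relation.ReflTransGen.refl

lemma arch_mono_S {S S' : Set E} {A : Set V} (h : S ⊆ S') {a b : V}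
    (hab : arch G S A a b) : arch G S' A a b :=
  Relation.ReflTransGen.mono (fun _ _ hx => ⟨hx.1, hx.2.imp (fun e he => ⟨h he.1, he.2⟩)⟩) _ _ hab

lemma arch_mono_A {S : Set E} {A A' : Set V} (h : A' ⊆ A) {a b : V}
    (hab : arch G S A a b) : arch G S A' a b :=
  Relation.ReflTransGen.mono (fun _ _ hx => ⟨fun hc => hx.1 (h hc), hx.2⟩) _ _ hab

lemma arch.tail {S A} {a b c : V} (h : arch G S A a b) (h' : astep G S A b c) :
    arch G S A a c := Relation.ReflTransGen.tail h h'

lemma arch.trans {S A} {a b c : V} (h : arch G S A a b) (h' : arch G S A b c) :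
    arch G S A a c := Relation.ReflTransGen.trans h h'

lemma reach_iff_arch {T : Set E} {a b : V} : G.reach T a b ↔ arch G T ∅ a b := by
  constructor
  · exact Relation.ReflTransGen.mono (fun x y hx => ⟨by simp, hx⟩) _ _
  · exact Relation.ReflTransGen.mono (fun x y hx => hx.2) _ _

/-- a path avoiding the endpoint of `f` never uses `f`. -/
lemma arch_avoid_tgt_mem {S : Set E} {A : Set V} {f : E} (hf : G.tgt f ∈ A) {a b : V}
    (h : arch G S A a b) : arch G (S \ {f}) A a b := by
  induction h with
  | refl => exact arch.refl
  | tail h' st ih =>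
      obtain ⟨hb, e, heS, hsrc, htgt⟩ := st
      refine ih.tail ⟨hb, e, ⟨heS, ?_⟩, hsrc, htgt⟩
      rintro rfl; exact hb (htgt ▸ hf)

/-- if `t` is unreachable, reachable vertices are reachable avoiding `t`. -/
lemma arch_insert_of_not_reach {S : Set E} {A : Set V} {t : V} {a b : V}
    (ht : ¬ arch G S A a t) (h : arch G S A a b) : arch G S (insert t A) a b := by
  induction h with
  | refl => exact arch.refl
  | tail h' st ih =>
      obtain ⟨hb, e, heS, hsrc, htgt⟩ := st
      refine ih.tail ⟨?_, e, heS, hsrc, htgt⟩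
      · intro hc
        rcases Set.mem_insert_iff.1 hc with rfl | hc
        · exact ht (h'.tail ⟨hb, e, heS, hsrc, htgt⟩)
        · exact hb hc

lemma arch_endpoint_not_mem {S : Set E} {A : Set V} {a b : V}
    (h : arch G S A a b) (hb : b ∈ A) : b = a := by
  induction h with
  | refl => rfl
  | tail h' st ih => exact absurd hb st.1
/-- every reachable vertex `y ≠ a` has an in-edge whose source is reachable avoiding `y`. -/
lemma arch_witness {S : Set E} {A : Set V} {a y : V} (h : arch G S A a y) (hy : y ≠ a)
    (hyA : y ∉ A) :
    ∃ e ∈ S, G.tgt e = y ∧ arch G S (insert y A) a (G.src e) := by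
  suffices H : ∀ z, arch G S A a z →
      (arch G S (insert y A) a z ∨ ∃ e ∈ S, G.tgt e = y ∧ arch G S (insert y A) a (G.src e)) by
    rcases H y h with h' | h'
    · rcases (arch_endpoint_not_mem h' (Set.mem_insert _ _)) with rfl; exact absurd rfl hy
    · exact h'
  intro z hz
  induction hz with
  | refl => exact Or.inl arch.refl
  | tail h' st ih =>
      obtain ⟨hb, e, heS, hsrc, htgt⟩ := st
      rcases ih with hx | hx
      · by_cases hzy : _root_.Eq (G.tgt e) y
        · exact Or.inr ⟨e, heS, hzy, hsrc ▸ hx⟩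
        · left
          refine hx.tail ⟨?_, e, heS, hsrc, htgt⟩
          intro hc
          rcases Set.mem_insert_iff.1 hc with rfl | hc
          · exact hzy htgt
          · exact hb hc
      · exact Or.inr hx

/-- Key lemma: if `s` is reachable avoiding `A` but not without the edge `g`,
then the source of `g` is reachable (without `g`) avoiding the target of `g`. -/
lemma arch_key {S : Set E} {A : Set V} {g : E} {a s : V}
    (h1 : arch G S A a s) (h2 : ¬ arch G (S \ {g}) A a s) :
    arch G (S \ {g}) (insert (G.tgt g) A) a (G.src g) := by
  have claim1 : ∀ z, arch G S A a z →
      (arch G (S \ {g}) A a z ∨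
        (arch G (S \ {g}) A a (G.src g) ∧ arch G (S \ {g}) A (G.tgt g) z)) := by
    intro z hz
    induction hz with
    | refl => exact Or.inl arch.refl
    | tail h' st ih =>
        obtain ⟨hb, e, heS, hsrc, htgt⟩ := st
        by_cases heg : e = g
        · subst heg
          rcases ih with hx | hx
          · exact Or.inr ⟨hsrc ▸ hx, htgt ▸ arch.refl⟩
          · exact Or.inr ⟨hx.1, htgt ▸ arch.refl⟩
        · rcases ih with hx | hx
          · exact Or.inl (hx.tail ⟨hb, e, ⟨heS, heg⟩, hsrc, htgt⟩)
          · exact Or.inr ⟨hx.1, hx.2.tail ⟨hb, e, ⟨heS, heg⟩, hsrc, htgt⟩⟩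
  rcases claim1 s h1 with hx | hx
  · exact absurd hx h2
  have htg : ¬ arch G (S \ {g}) A a (G.tgt g) := fun hc => h2 (hc.trans hx.2)
  exact arch_insert_of_not_reach htg hx.1

/-- crossing lemma: a path from inside `W` to outside `W` uses an edge leaving `W`. -/
lemma arch_crossing {S : Set E} {A : Set V} {W : Set V} {a y : V}
    (h : arch G S A a y) (ha : a ∈ W) (hy : y ∉ W) :
    ∃ e ∈ S, G.src e ∈ W ∧ G.tgt e ∉ W ∧ G.tgt e ∉ A := by
  induction h with
  | refl => exact absurd ha hy
  | @tail b c h' st ih =>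
      obtain ⟨hb, e, heS, hsrc, htgt⟩ := st
      by_cases hbW : b ∈ W
      · exact ⟨e, heS, hsrc ▸ hbW, htgt ▸ hy, htgt ▸ hb⟩
      · exact ih hbW

lemma reach_mono {T T' : Set E} (h : T ⊆ T') {a b : V} (hab : G.reach T a b) :
    G.reach T' a b :=
  Relation.ReflTransGen.mono (fun _ _ hx => hx.imp (fun e he => ⟨h he.1, he.2⟩)) _ _ hab

/-- spanning trees of the subgraph with edge set `S`. -/
def Trees (G : MultiDigraph V E) (S : Set E) (v : V) : Set (Set E) :=
  {T | G.IsSpanTree v T ∧ T ⊆ S}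

variable [Fintype V] [Fintype E]

private def Part (G : MultiDigraph V E) (S : Set E) (v : V) (A : Set V) (T : Set E) : Prop :=
  v ∈ A ∧ T ⊆ S ∧ (∀ e ∈ T, G.tgt e ≠ v ∧ G.tgt e ∈ A ∧ G.src e ∈ A) ∧
  (∀ y ∈ A, y ≠ v → ∃! e, e ∈ T ∧ G.tgt e = y) ∧ (∀ y ∈ A, G.reach T v y)

lemma tree_exists {S : Set E} {v : V} (hconn : ∀ y, arch G S ∅ v y) :
    ∃ T, T ∈ Trees G S v := by
  suffices H : ∀ n (A : Set V) (T : Set E), (Set.univ \ A).ncard = n →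
      Part G S v A T → ∃ T', T' ∈ Trees G S v by
    refine H (Set.univ \ {v}).ncard {v} ∅ rfl ⟨rfl, by simp, by simp, ?_, ?_⟩
    · intro y hy hy'; exact absurd (Set.eq_of_mem_singleton hy) hy'
    · intro y hy; rw [Set.eq_of_mem_singleton hy]; exact Relation.ReflTransGen.refl
  intro n
  induction n using Nat.strong_induction_on with
  | _ n ih =>
    intro A T hn hPart
    obtain ⟨hvA, hTS, hT, huniq, hreach⟩ := hPart
    by_cases hA : A = Set.univ
    · refine ⟨T, ⟨fun e he => (hT e he).1, fun y hy => huniq y (hA ▸ Set.mem_univ y) hy, 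
        fun y => hreach y (hA ▸ Set.mem_univ y)⟩, hTS⟩
    · obtain ⟨y, hy⟩ : ∃ y, y ∉ A := by
        by_contra hc; push_neg at hc; exact hA (Set.eq_univ_of_forall hc)
      obtain ⟨e, heS, hsrcA, htgtA, -⟩ := arch_crossing (hconn y) hvA hy
      have htgtv : G.tgt e ≠ v := fun hc => htgtA (hc ▸ hvA)
      refine ih (Set.univ \ insert (G.tgt e) A).ncard ?_ (insert (G.tgt e) A) (insert e T) rfl
        ⟨Set.mem_insert_of_mem _ hvA, ?_, ?_, ?_, ?_⟩
      · rw [← hn]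
        apply Set.ncard_lt_ncard
        · constructor
          · intro z hz
            exact ⟨Set.mem_univ _, fun hc => hz.2 (Set.mem_insert_of_mem _ hc)⟩
          · intro hsub
            exact (hsub ⟨Set.mem_univ _, htgtA⟩).2 (Set.mem_insert _ _)
        · exact Set.toFinite _
      · exact Set.insert_subset heS hTS
      · rintro f (rfl | hf)
        · exact ⟨htgtv, Set.mem_insert _ _, Set.mem_insert_of_mem _ hsrcA⟩
        · exact ⟨(hT f hf).1, Set.mem_insert_of_mem _ (hT f hf).2.1,
            Set.mem_insert_of_mem _ (hT f hf).2.2⟩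
      · rintro z (rfl | hz) hzv
        · refine ⟨e, ⟨Set.mem_insert _ _, rfl⟩, ?_⟩
          rintro f ⟨(rfl | hf), htf⟩
          · rfl
          · exact absurd (htf ▸ (hT f hf).2.1) htgtA
        · obtain ⟨f, hf, hfuniq⟩ := huniq z hz hzv
          refine ⟨f, ⟨Set.mem_insert_of_mem _ hf.1, hf.2⟩, ?_⟩
          rintro f' ⟨(rfl | hf'), htf'⟩
          · exact absurd (htf' ▸ hz) htgtA
          · exact hfuniq f' ⟨hf', htf'⟩
      · rintro z (rfl | hz)
        · exact (reach_mono (Set.subset_insert _ _) (hreach _ hsrcA)).tail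
            ⟨e, Set.mem_insert _ _, rfl, rfl⟩
        · exact reach_mono (Set.subset_insert _ _) (hreach z hz)

open scoped Classical in
lemma ncard_fiber_sum (P : E → Prop) (g : E → V) (A : Set V) :
    {e : E | P e ∧ g e ∈ A}.ncard = ∑ x ∈ A.toFinset, {e : E | P e ∧ g e = x}.ncard := by
  rw [Set.ncard_eq_toFinset_card', Set.toFinset_setOf]
  rw [Finset.card_eq_sum_card_fiberwise (f := g) (t := A.toFinset)
    (fun e he => by simp only [Finset.mem_coe, Finset.mem_filter] at he; exact Set.mem_toFinset.2 he.2.2)]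
  refine Finset.sum_congr rfl (fun x hx => ?_)
  rw [Set.ncard_eq_toFinset_card', Set.toFinset_setOf]
  congr 1
  ext e
  simp only [Finset.mem_filter, Finset.mem_univ, true_and]
  constructor
  · rintro ⟨⟨hP, -⟩, h⟩; exact ⟨hP, h⟩
  · rintro ⟨hP, h⟩; exact ⟨⟨hP, h ▸ Set.mem_toFinset.1 hx⟩, h⟩

lemma sum_ncard_le_ncard {α β : Type} [DecidableEq α] [Fintype β] (s : Finset α) (C : α → Set β) (Y : Set β)
    (hsub : ∀ f ∈ s, C f ⊆ Y)
    (hdisj : ∀ f ∈ s, ∀ g ∈ s, f ≠ g → Disjoint (C f) (C g)) :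
    ∑ f ∈ s, (C f).ncard ≤ Y.ncard := by
  induction s using Finset.induction_on generalizing Y with
  | empty => simp
  | @insert f s hf ih =>
      rw [Finset.sum_insert hf]
      have h1 : ∑ g ∈ s, (C g).ncard ≤ (Y \ C f).ncard := by
        refine ih (Y \ C f) (fun g hg => ?_) (fun g hg g' hg' hne => ?_) 
        · intro x hx
          refine ⟨hsub g (Finset.mem_insert_of_mem hg) hx, ?_⟩
          have := hdisj f (Finset.mem_insert_self _ _) g (Finset.mem_insert_of_mem hg)
            (fun hc => hf (hc ▸ hg))
          exact fun hc => (Set.disjoint_left.1 this hc) hx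
        · exact hdisj g (Finset.mem_insert_of_mem hg) g' (Finset.mem_insert_of_mem hg') hne
      have h2 : (C f).ncard + (Y \ C f).ncard = Y.ncard := by
        rw [← Set.ncard_union_eq (Set.disjoint_sdiff_right) (Set.toFinite _) (Set.toFinite _)]
        rw [Set.union_diff_cancel (hsub f (Finset.mem_insert_self _ _))]
      omega

open scoped Classical in
lemma ncard_fiber_sum2 (Q : E → Prop) (g : E → V) (t : Finset V)
    (h : ∀ e, Q e → g e ∈ t) :
    {e : E | Q e}.ncard = ∑ x ∈ t, {e : E | Q e ∧ g e = x}.ncard := by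
  rw [Set.ncard_eq_toFinset_card', Set.toFinset_setOf]
  rw [Finset.card_eq_sum_card_fiberwise (f := g) (t := t)
    (fun e he => h e (by simpa using he))]
  refine Finset.sum_congr rfl (fun x hx => ?_)
  rw [Set.ncard_eq_toFinset_card', Set.toFinset_setOf, Finset.filter_filter]

/-- realizable parent slots of `y`. -/
def slotSet (G : MultiDigraph V E) (S : Set E) (v y : V) : Set E :=
  {f | f ∈ S ∧ G.tgt f = y ∧ arch G S {y} v (G.src f)}

noncomputable def rho (G : MultiDigraph V E) [Fintype E] (S : Set E) (v y : V) : ℕ :=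
  (slotSet G S v y).ncard

lemma slot_of_arch {S : Set E} {v y : V} (h : arch G S ∅ v y) (hy : y ≠ v) :
    ∃ e, e ∈ slotSet G S v y := by
  obtain ⟨e, heS, htgt, hsrc⟩ := arch_witness h hy (Set.notMem_empty y)
  exact ⟨e, heS, htgt, arch_mono_A (by simp) hsrc⟩

lemma rho_pos {S : Set E} {v y : V} (h : arch G S ∅ v y) (hy : y ≠ v) :
    1 ≤ rho G S v y := by
  obtain ⟨e, he⟩ := slot_of_arch h hy
  exact (Set.ncard_pos (Set.toFinite _)).2 ⟨e, he⟩

lemma exists_sink {α : Type} [Fintype α] (R : α → α → Prop)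
    (htrans : ∀ {f g h}, R f g → R g h → R f h) :
    ∀ (n : ℕ) (F : Set α), F.ncard = n → F.Nonempty → (∀ f ∈ F, ¬ R f f) →
      ∃ f ∈ F, ∀ g ∈ F, ¬ R f g := by
  intro n
  induction n using Nat.strong_induction_on with
  | _ n ih =>
    intro F hn hF hirr
    obtain ⟨f, hf⟩ := hF
    by_cases hsink : ∀ g ∈ F, ¬ R f g
    · exact ⟨f, hf, hsink⟩
    push_neg at hsink
    obtain ⟨g, hgF, hRg⟩ := hsink
    have hfF' : f ∉ {h | h ∈ F ∧ R f h} := fun hc => hirr f hf hc.2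
    have hlt : ({h | h ∈ F ∧ R f h} : Set α).ncard < n := by
      rw [← hn]
      exact Set.ncard_lt_ncard ⟨fun h hh => hh.1, fun hc => hfF' (hc hf)⟩ (Set.toFinite _)
    obtain ⟨h₀, hh₀, hsink'⟩ := ih _ hlt _ rfl ⟨g, hgF, hRg⟩ (fun a ha => hirr a ha.1)
    refine ⟨h₀, hh₀.1, fun g' hg' hRg' => ?_⟩
    exact hsink' g' ⟨hg', htrans hh₀.2 hRg'⟩ hRg'

lemma mem_trees_diff_iff {S : Set E} {v : V} {f : E} {T : Set E} :
    T ∈ Trees G (S \ {f}) v ↔ T ∈ Trees G S v ∧ f ∉ T := by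
  constructor
  · rintro ⟨hTree, hsub⟩
    exact ⟨⟨hTree, fun e he => (hsub he).1⟩, fun hc => (hsub hc).2 rfl⟩
  · rintro ⟨⟨hTree, hsub⟩, hf⟩
    exact ⟨hTree, fun e he => ⟨hsub he, fun hc => hf ((Set.eq_of_mem_singleton hc) ▸ he)⟩⟩

lemma mem_trees_forced_iff {S : Set E} {v : V} {f : E} (hfv : G.tgt f ≠ v) {T : Set E} :
    T ∈ Trees G (S \ ({e | G.tgt e = G.tgt f} \ {f})) v ↔ T ∈ Trees G S v ∧ f ∈ T := by
  constructor
  · rintro ⟨hTree, hsub⟩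
    obtain ⟨e, ⟨heT, hetgt⟩, -⟩ := hTree.2.1 (G.tgt f) hfv
    have : e = f := by
      by_contra hc
      exact (hsub heT).2 ⟨hetgt, hc⟩
    exact ⟨⟨hTree, fun e' he' => (hsub he').1⟩, this ▸ heT⟩
  · rintro ⟨⟨hTree, hsub⟩, hf⟩
    refine ⟨hTree, fun e he => ⟨hsub he, ?_⟩⟩
    rintro ⟨hetgt, hef⟩
    obtain ⟨e', -, huniq⟩ := hTree.2.1 (G.tgt f) hfv
    exact hef ((huniq e ⟨he, hetgt⟩).trans (huniq f ⟨hf, rfl⟩).symm)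

lemma trees_ncard_split {S : Set E} {v : V} {f : E} (hfv : G.tgt f ≠ v) :
    (Trees G S v).ncard = (Trees G (S \ {f}) v).ncard +
      (Trees G (S \ ({e | G.tgt e = G.tgt f} \ {f})) v).ncard := by
  have hunion : Trees G S v =
      Trees G (S \ {f}) v ∪ Trees G (S \ ({e | G.tgt e = G.tgt f} \ {f})) v := by
    ext T
    constructor
    · intro hT
      by_cases hf : f ∈ T
      · exact Or.inr ((mem_trees_forced_iff hfv).2 ⟨hT, hf⟩)
      · exact Or.inl (mem_trees_diff_iff.2 ⟨hT, hf⟩)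
    · rintro (hT | hT)
      · exact (mem_trees_diff_iff.1 hT).1
      · exact ((mem_trees_forced_iff hfv).1 hT).1
  rw [hunion]
  refine Set.ncard_union_eq ?_ (Set.toFinite _) (Set.toFinite _)
  rw [Set.disjoint_left]
  intro T hT1 hT2
  exact (mem_trees_diff_iff.1 hT1).2 ((mem_trees_forced_iff hfv).1 hT2).2

lemma dam_trans {S : Set E} {v : V} {f g h : E}
    (hfg : ¬ arch G (S \ {f}) {G.tgt g} v (G.src g))
    (hgh : ¬ arch G (S \ {g}) {G.tgt h} v (G.src h)) :
    ¬ arch G (S \ {f}) {G.tgt h} v (G.src h) := by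
  intro h1
  have h2 : ¬ arch G ((S \ {f}) \ {g}) {G.tgt h} v (G.src h) := by
    intro hc
    exact hgh (arch_mono_S (Set.diff_subset_diff_left Set.diff_subset) hc)
  have h3 := arch_key h1 h2
  exact hfg (arch_mono_S Set.diff_subset (arch_mono_A (by simp) h3))

theorem lemT {v : V} : ∀ (n : ℕ) (S : Set E), S.ncard = n → (∀ y, arch G S ∅ v y) →
    1 + ∑ y ∈ Finset.univ.erase v, (rho G S v y - 1) ≤ (Trees G S v).ncard := by
  intro n
  induction n using Nat.strong_induction_on with
  | _ n ih =>
    intro S hn hconn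
    obtain ⟨T₀, hT₀⟩ := tree_exists hconn
    by_cases hF : ∃ f, G.tgt f ≠ v ∧ f ∈ slotSet G S v (G.tgt f) ∧ f ∉ T₀
    · -- main case: find a damage-free deletable slot edge
      obtain ⟨f₀, hf₀F, hsink⟩ := exists_sink
        (fun f g => ¬ arch G (S \ {f}) {G.tgt g} v (G.src g))
        (fun {f g h} => dam_trans)
        _ {f | G.tgt f ≠ v ∧ f ∈ slotSet G S v (G.tgt f) ∧ f ∉ T₀} rfl hF
        (fun f hf hDam => hDam (arch_avoid_tgt_mem
          (show G.tgt f ∈ ({G.tgt f} : Set V) from rfl) hf.2.1.2.2))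
      obtain ⟨hx₀v, hf₀slot, hf₀T₀⟩ := hf₀F
      have hf₀S : f₀ ∈ S := hf₀slot.1
      obtain ⟨g₀, ⟨hg₀T₀, hg₀tgt⟩, -⟩ := hT₀.1.2.1 (G.tgt f₀) hx₀v
      have hg₀ne : g₀ ≠ f₀ := fun hc => hf₀T₀ (hc ▸ hg₀T₀)
      have hTA : T₀ ⊆ S \ {f₀} :=
        fun e he => show e ∈ S \ {f₀} from ⟨hT₀.2 he, fun hc => hf₀T₀ (hc ▸ he)⟩
      have hAconn : ∀ y, arch G (S \ {f₀}) ∅ v y :=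
        fun y => arch_mono_S hTA (reach_iff_arch.1 (hT₀.1.2.2 y))
      have hf₀B : f₀ ∈ S \ ({e | G.tgt e = G.tgt f₀} \ {f₀}) := ⟨hf₀S, fun hc => hc.2 rfl⟩
      have hBx₀pre : arch G (S \ ({e | G.tgt e = G.tgt f₀} \ {f₀})) {G.tgt f₀} v (G.src f₀) := by
        refine Relation.ReflTransGen.mono ?_ _ _ hf₀slot.2.2
        rintro a b ⟨hb, e, heS, hsrc, htgt⟩
        subst htgt
        exact ⟨hb, e, show e ∈ S \ _ from ⟨heS, fun hc => hb hc.1⟩, hsrc, rfl⟩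
      have hBx₀ : arch G (S \ ({e | G.tgt e = G.tgt f₀} \ {f₀})) ∅ v (G.tgt f₀) :=
        (arch_mono_A (Set.empty_subset _) hBx₀pre).tail
          ⟨Set.notMem_empty _, f₀, hf₀B, rfl, rfl⟩
      have hBconn : ∀ y, arch G (S \ ({e | G.tgt e = G.tgt f₀} \ {f₀})) ∅ v y := by
        intro y
        have h := hconn y
        induction h with
        | refl => exact arch.refl
        | tail h' st ih' =>
            obtain ⟨hb, e, heS, hsrc, htgt⟩ := st
            by_cases heB : e ∈ S \ ({e | G.tgt e = G.tgt f₀} \ {f₀})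
            · exact ih'.tail ⟨hb, e, heB, hsrc, htgt⟩
            · have hex₀ : G.tgt e = G.tgt f₀ := by
                by_contra hc
                exact heB (show e ∈ S \ _ from ⟨heS, fun hc' => hc hc'.1⟩)
              exact htgt ▸ hex₀ ▸ hBx₀
      have hnA : (S \ {f₀}).ncard < n := by
        rw [← hn]
        exact Set.ncard_lt_ncard (Set.sdiff_singleton_ssubset.2 hf₀S) (Set.toFinite _)
      have hnB : (S \ ({e | G.tgt e = G.tgt f₀} \ {f₀})).ncard < n := by
        rw [← hn]
        refine Set.ncard_lt_ncard ⟨Set.diff_subset, fun hc => ?_⟩ (Set.toFinite _)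
        exact (hc (hT₀.2 hg₀T₀)).2 ⟨hg₀tgt, hg₀ne⟩
      have B₁ := ih _ hnA (S \ {f₀}) rfl hAconn
      have B₂ := ih _ hnB (S \ ({e | G.tgt e = G.tgt f₀} \ {f₀})) rfl hBconn
      have hcomp₁ : ∀ y, y ≠ v → y ≠ G.tgt f₀ → rho G S v y ≤ rho G (S \ {f₀}) v y := by
        intro y hyv hyx₀
        refine Set.ncard_le_ncard ?_ (Set.toFinite _)
        rintro f ⟨hfS, hftgt, hfreach⟩
        have hfSA : f ∈ S \ {f₀} :=
          ⟨hfS, fun hc => hyx₀ (hftgt ▸ (hc ▸ rfl : G.tgt f = G.tgt f₀))⟩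
        refine ⟨hfSA, hftgt, ?_⟩
        by_cases hfT₀ : f ∈ T₀
        · obtain ⟨e, heT, hetgt, hesrc⟩ :=
            arch_witness (reach_iff_arch.1 (hT₀.1.2.2 y)) hyv (Set.notMem_empty y)
          obtain ⟨p, -, hpuniq⟩ := hT₀.1.2.1 y hyv
          have hef : e = f := (hpuniq e ⟨heT, hetgt⟩).trans (hpuniq f ⟨hfT₀, hftgt⟩).symm
          exact hef ▸ arch_mono_S hTA (arch_mono_A (by simp) hesrc)
        · have hfFmem : f ∈ {f | G.tgt f ≠ v ∧ f ∈ slotSet G S v (G.tgt f) ∧ f ∉ T₀} :=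
            ⟨hftgt ▸ hyv, ⟨hfS, rfl, hftgt ▸ hfreach⟩, hfT₀⟩
          have hnd := not_not.1 (hsink f hfFmem)
          exact hftgt ▸ hnd
      have hcomp₂ : rho G S v (G.tgt f₀) ≤ rho G (S \ {f₀}) v (G.tgt f₀) + 1 := by
        have hsub : slotSet G S v (G.tgt f₀) \ {f₀} ⊆ slotSet G (S \ {f₀}) v (G.tgt f₀) := by
          rintro f ⟨⟨hfS, hftgt, hfreach⟩, hff₀⟩
          exact ⟨⟨hfS, hff₀⟩, hftgt, arch_avoid_tgt_mem
            (show G.tgt f₀ ∈ ({G.tgt f₀} : Set V) from rfl) hfreach⟩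
        have h1 := Set.ncard_diff_singleton_add_one hf₀slot (Set.toFinite _)
        have h2 := Set.ncard_le_ncard hsub (Set.toFinite _)
        unfold rho
        omega
      have hrhoB : 1 ≤ rho G (S \ ({e | G.tgt e = G.tgt f₀} \ {f₀})) v (G.tgt f₀) :=
        rho_pos (hBconn _) hx₀v
      have hx₀mem : G.tgt f₀ ∈ Finset.univ.erase v :=
        Finset.mem_erase.2 ⟨hx₀v, Finset.mem_univ _⟩
      have hsplit : ∀ (r : V → ℕ), ∑ y ∈ Finset.univ.erase v, r y
          = r (G.tgt f₀) + ∑ y ∈ (Finset.univ.erase v).erase (G.tgt f₀), r y :=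
        fun r => (Finset.add_sum_erase _ r hx₀mem).symm
      rw [trees_ncard_split hx₀v]
      rw [hsplit] at B₁ B₂ ⊢
      have hA : ∑ y ∈ (Finset.univ.erase v).erase (G.tgt f₀), (rho G S v y - 1)
          ≤ ∑ y ∈ (Finset.univ.erase v).erase (G.tgt f₀), (rho G (S \ {f₀}) v y - 1) := by
        refine Finset.sum_le_sum (fun y hy => ?_)
        have hy1 := (Finset.mem_erase.1 hy).1
        have hy2 := (Finset.mem_erase.1 ((Finset.mem_erase.1 hy).2)).1
        have := hcomp₁ y hy2 hy1
        omega
      omega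
    · -- degenerate case: all slots canonical
      push_neg at hF
      have hsum : ∑ y ∈ Finset.univ.erase v, (rho G S v y - 1) = 0 := by
        refine Finset.sum_eq_zero (fun y hy => ?_)
        have hyv : y ≠ v := (Finset.mem_erase.1 hy).1
        obtain ⟨p, -, hpuniq⟩ := hT₀.1.2.1 y hyv
        have hsub : slotSet G S v y ⊆ {p} := by
          rintro f ⟨hfS, hftgt, hfreach⟩
          have hfT₀ : f ∈ T₀ := by
            by_contra hc
            exact hc (hF f (hftgt ▸ hyv) ⟨hfS, rfl, hftgt ▸ hfreach⟩)
          exact Set.mem_singleton_iff.2 (hpuniq f ⟨hfT₀, hftgt⟩)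
        have h1 := Set.ncard_le_ncard hsub (Set.toFinite _)
        rw [Set.ncard_singleton] at h1
        unfold rho
        omega
      rw [hsum]
      have h1 : 1 ≤ (Trees G S v).ncard := (Set.ncard_pos (Set.toFinite _)).2 ⟨T₀, hT₀⟩
      omega

/-- fiberwise decomposition of an edge count. -/
lemma ncard_fiber_sum' (P : E → Prop) (g : E → V) (A : Set V) :
    {e : E | P e ∧ g e ∈ A}.ncard = ∑ x ∈ A.toFinset, {e : E | P e ∧ g e = x}.ncard :=
  ncard_fiber_sum P g A

/-- In an alternating planar digraph, in-degree equals out-degree at every vertex. -/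
lemma indeg_eq_outdeg (P : PlanarDigraph V E) (halt : P.Alternating) (u : V) :
    {e : E | P.G.tgt e = u}.ncard = {e : E | P.G.src e = u}.ncard := by
  have himg : (fun e => (P.rot (e, true)).1) '' {e : E | P.G.tgt e = u}
      = {e : E | P.G.src e = u} := by
    ext f
    constructor
    · rintro ⟨e, he, rfl⟩
      have h2 : (P.rot (e, true)).2 = false := by
        have := halt (e, true); simpa using this
      have h1 : P.G.dartVert (P.rot (e, true)) = P.G.dartVert (e, true) := P.rot_vertex _
      simp only [MultiDigraph.dartVert] at h1
      rw [h2] at h1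
      simpa using h1.trans he
    · intro hf
      obtain ⟨d, hd⟩ := P.rot_bijective.2 (f, false)
      have h2 : d.2 = true := by
        have := halt d
        rw [hd] at this
        simpa using this
      have hd' : d = (d.1, true) := by rw [← h2]
      refine ⟨d.1, ?_, ?_⟩
      · have h1 := P.rot_vertex d
        rw [hd] at h1
        simp only [MultiDigraph.dartVert] at h1
        rw [h2] at h1
        exact (by simpa using h1.symm : P.G.tgt d.1 = P.G.src f).trans hf
      · have hrot : P.rot (d.1, true) = (f, false) := by rw [← hd']; exact hd
        show (P.rot (d.1, true)).1 = f
        rw [hrot]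
    
  have hinj : Set.InjOn (fun e => (P.rot (e, true)).1) {e : E | P.G.tgt e = u} := by
    intro e₁ h₁ e₂ h₂ hEq
    have hb₁ : (P.rot (e₁, true)).2 = false := by have := halt (e₁, true); simpa using this
    have hb₂ : (P.rot (e₂, true)).2 = false := by have := halt (e₂, true); simpa using this
    have : P.rot (e₁, true) = P.rot (e₂, true) := by
      have := Prod.ext_iff.2 ⟨hEq, hb₁.trans hb₂.symm⟩
      exact this
    have := P.rot_bijective.1 this
    exact (Prod.ext_iff.1 this).1
  rw [← himg, Set.ncard_image_of_injOn hinj]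

/-- balance over vertex subsets. -/
lemma cut_balance (P : PlanarDigraph V E) (halt : P.Alternating) (A : Set V) :
    {e : E | P.G.tgt e ∈ A}.ncard = {e : E | P.G.src e ∈ A}.ncard := by
  have h1 : {e : E | P.G.tgt e ∈ A}.ncard = {e : E | True ∧ P.G.tgt e ∈ A}.ncard := by
    congr 1; ext e; simp
  have h2 : {e : E | P.G.src e ∈ A}.ncard = {e : E | True ∧ P.G.src e ∈ A}.ncard := by
    congr 1; ext e; simp
  rw [h1, h2, ncard_fiber_sum (fun _ => True) (P.G.tgt) A,
    ncard_fiber_sum (fun _ => True) (P.G.src) A]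
  refine Finset.sum_congr rfl (fun x _ => ?_)
  have := indeg_eq_outdeg P halt x
  have e1 : {e : E | True ∧ P.G.tgt e = x} = {e : E | P.G.tgt e = x} := by ext e; simp
  have e2 : {e : E | True ∧ P.G.src e = x} = {e : E | P.G.src e = x} := by ext e; simp
  rw [e1, e2, this]

lemma ncard_split (A B : E → Prop) :
    {e : E | A e}.ncard = {e : E | A e ∧ B e}.ncard + {e : E | A e ∧ ¬ B e}.ncard := by
  rw [← Set.ncard_union_eq ?_ (Set.toFinite _) (Set.toFinite _)]
  · congr 1
    ext e
    by_cases hB : B e <;> simp [hB]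
  · rw [Set.disjoint_left]
    rintro e ⟨-, hB⟩ ⟨-, hB'⟩
    exact hB' hB

lemma set_congr_ncard {A B : E → Prop} (h : ∀ e, A e ↔ B e) :
    {e : E | A e}.ncard = {e : E | B e}.ncard := by
  congr 1; ext e; exact h e

/-- every vertex reaches every vertex (strong connectivity). -/
lemma strong_conn (P : PlanarDigraph V E) (halt : P.Alternating)
    (hconn3 : ∀ e₁ e₂ : E, ∀ a b : V,
      Relation.ReflTransGen (P.G.ustep {e | e ≠ e₁ ∧ e ≠ e₂}) a b)
    (edum : E) (a b : V) : arch P.G Set.univ ∅ a b := by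
  have hout : ∀ e : E, P.G.src e ∈ {z | arch P.G Set.univ ∅ a z} →
      P.G.tgt e ∈ {z | arch P.G Set.univ ∅ a z} := by
    intro e he
    exact Relation.ReflTransGen.tail he ⟨Set.notMem_empty _, e, Set.mem_univ _, rfl, rfl⟩
  have hsub : {e : E | P.G.src e ∈ {z | arch P.G Set.univ ∅ a z}} ⊆
      {e : E | P.G.tgt e ∈ {z | arch P.G Set.univ ∅ a z}} := fun e he => hout e he
  have hcard := cut_balance P halt {z | arch P.G Set.univ ∅ a z}
  have heq := Set.eq_of_subset_of_ncard_le hsub (le_of_eq hcard) (Set.toFinite _)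
  have hin : ∀ e : E, P.G.tgt e ∈ {z | arch P.G Set.univ ∅ a z} →
      P.G.src e ∈ {z | arch P.G Set.univ ∅ a z} := by
    intro e he
    have : e ∈ {e : E | P.G.src e ∈ {z | arch P.G Set.univ ∅ a z}} := heq ▸ he
    exact this
  have h := hconn3 edum edum a b
  induction h with
  | refl => exact arch.refl
  | tail h' st ih =>
      obtain ⟨e, -, hor⟩ := st
      rcases hor with ⟨hsrc, htgt⟩ | ⟨hsrc, htgt⟩
      · exact htgt ▸ hout e (hsrc ▸ ih)
      · exact hsrc ▸ hin e (htgt ▸ ih)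

/-- a set of size ≤ 2 is covered by a pair. -/
lemma cover_pair {C : Set E} (hC : C.ncard ≤ 2) (edum : E) :
    ∃ e₁ e₂, C ⊆ {e₁, e₂} := by
  rcases Set.eq_empty_or_nonempty C with rfl | ⟨a, ha⟩
  · exact ⟨edum, edum, Set.empty_subset _⟩
  rcases Set.eq_empty_or_nonempty (C \ {a}) with hCa | ⟨b, hb⟩
  · refine ⟨a, a, fun c hc => ?_⟩
    have : c ∈ C \ {a} ∨ c = a := by
      by_cases h : c = a
      · exact Or.inr h
      · exact Or.inl ⟨hc, h⟩
    rcases this with h | h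
    · rw [hCa] at h; exact absurd h (Set.notMem_empty _)
    · simp [h]
  refine ⟨a, b, fun c hc => ?_⟩
  by_contra hcon
  simp only [Set.mem_insert_iff, Set.mem_singleton_iff, not_or] at hcon
  have hab : a ≠ b := fun h => hb.2 (Set.mem_singleton_iff.2 h.symm)
  have h3 : ({a, b, c} : Set E) ⊆ C := by
    rintro z (rfl | rfl | rfl)
    · exact ha
    · exact hb.1
    · exact hc
  have hcount : ({a, b, c} : Set E).ncard = 3 := by
    rw [Set.ncard_insert_of_notMem (by simp [hab, Ne.symm hcon.1]),
      Set.ncard_insert_of_notMem (by simp [Ne.symm hcon.2]), Set.ncard_singleton]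
  have := Set.ncard_le_ncard h3 (Set.toFinite _)
  omega

/-- If some vertex lies outside `R := reach avoiding w`, then at least two edges
run from `R` into `w`. -/
lemma r_ge_two (P : PlanarDigraph V E) (halt : P.Alternating)
    (hcond3 : ∀ e₁ e₂ : E, ∀ a b : V,
      Relation.ReflTransGen (P.G.ustep {e | e ≠ e₁ ∧ e ≠ e₂}) a b)
    (v w : V) (hvw : v ≠ w) (edum : E)
    (hU : ∃ x, ¬ arch P.G Set.univ {w} v x ∧ x ≠ w) :
    2 ≤ {e : E | P.G.tgt e = w ∧ P.G.src e ∈ {z | arch P.G Set.univ {w} v z}}.ncard := by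
  set R : Set V := {z | arch P.G Set.univ {w} v z} with hRdef
  have hvR : v ∈ R := Relation.ReflTransGen.refl
  have hwR : w ∉ R := fun hc => hvw ((arch_endpoint_not_mem hc rfl).symm)
  have hclos : ∀ e : E, P.G.src e ∈ R → P.G.tgt e = w ∨ P.G.tgt e ∈ R := by
    intro e he
    by_cases htw : P.G.tgt e = w
    · exact Or.inl htw
    · exact Or.inr (Relation.ReflTransGen.tail he
        ⟨by simpa using htw, e, Set.mem_univ _, rfl, rfl⟩)
  have hbal := cut_balance P halt R
  have hsplit1 := ncard_split (fun e => P.G.tgt e ∈ R) (fun e => P.G.src e ∈ R)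
  have hsplit2 := ncard_split (fun e => P.G.src e ∈ R) (fun e => P.G.tgt e ∈ R)
  have hcomm : {e : E | P.G.tgt e ∈ R ∧ P.G.src e ∈ R}.ncard
      = {e : E | P.G.src e ∈ R ∧ P.G.tgt e ∈ R}.ncard :=
    set_congr_ncard (fun e => and_comm)
  have hout_eq : {e : E | P.G.src e ∈ R ∧ ¬ P.G.tgt e ∈ R}.ncard
      = {e : E | P.G.tgt e = w ∧ P.G.src e ∈ R}.ncard := by
    refine set_congr_ncard (fun e => ⟨?_, ?_⟩)
    · rintro ⟨hs, ht⟩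
      rcases hclos e hs with h | h
      · exact ⟨h, hs⟩
      · exact absurd h ht
    · rintro ⟨ht, hs⟩
      exact ⟨hs, fun hc => hwR (ht ▸ hc)⟩
  by_contra hcon
  push_neg at hcon
  -- the crossing set has at most 2 elements
  have hC : ({e : E | P.G.tgt e ∈ R ∧ ¬ P.G.src e ∈ R} ∪
      {e : E | P.G.src e ∈ R ∧ ¬ P.G.tgt e ∈ R}).ncard ≤ 2 := by
    rw [Set.ncard_union_eq ?_ (Set.toFinite _) (Set.toFinite _)]
    · omega
    · rw [Set.disjoint_left]
      rintro e ⟨-, h1⟩ ⟨h2, -⟩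
      exact h1 h2
  obtain ⟨e₁, e₂, hcover⟩ := cover_pair hC edum
  have hpath := hcond3 e₁ e₂ v w
  have hstay : ∀ b, Relation.ReflTransGen (P.G.ustep {e | e ≠ e₁ ∧ e ≠ e₂}) v b → b ∈ R := by
    intro b hb
    induction hb with
    | refl => exact hvR
    | tail h' st ih =>
        obtain ⟨e, heM, hor⟩ := st
        have heC : e ∉ ({e : E | P.G.tgt e ∈ R ∧ ¬ P.G.src e ∈ R} ∪
            {e : E | P.G.src e ∈ R ∧ ¬ P.G.tgt e ∈ R}) := by
          intro hc
          rcases hcover hc with h | h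
          · exact heM.1 h
          · exact heM.2 h
        rcases hor with ⟨hsrc, htgt⟩ | ⟨hsrc, htgt⟩
        · by_contra hbR
          exact heC (Or.inr ⟨hsrc ▸ ih, htgt ▸ hbR⟩)
        · by_contra hbR
          exact heC (Or.inl ⟨htgt ▸ ih, hsrc ▸ hbR⟩)
  exact hwR (hstay w hpath)

/-- Pocket-balance: lower bounds for the number of realizable parent slots of an
unreachable vertex `x`, in the graph where `w`'s in-edges are cut down to `e₀`. -/
lemma pocket (P : PlanarDigraph V E) (halt : P.Alternating)
    (hnoloop : ∀ e : E, P.G.src e ≠ P.G.tgt e)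
    (hcond3 : ∀ e₁ e₂ : E, ∀ a b : V,
      Relation.ReflTransGen (P.G.ustep {e | e ≠ e₁ ∧ e ≠ e₂}) a b)
    (v w x : V) (e₀ : E) (hvw : v ≠ w)
    (hxR : ¬ arch P.G Set.univ {w} v x) (hxw : x ≠ w)
    (he₀t : P.G.tgt e₀ = w) (he₀s : arch P.G Set.univ {w} v (P.G.src e₀)) :
    ({e : E | P.G.src e = x ∧ P.G.tgt e = w}.ncard ≤
      rho P.G (Set.univ \ ({e | P.G.tgt e = w} \ {e₀})) v x) ∧
    ({e : E | P.G.src e = x ∧ P.G.tgt e = w}.ncard = 1 →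
      2 ≤ rho P.G (Set.univ \ ({e | P.G.tgt e = w} \ {e₀})) v x) := by
  have hxv : x ≠ v := fun h => hxR (h ▸ Relation.ReflTransGen.refl)
  have hxA : x ∉ {z | arch P.G (Set.univ \ ({e | P.G.tgt e = w} \ {e₀})) {x} v z} :=
    fun hc => hxv (arch_endpoint_not_mem hc rfl)
  have hRsub : ∀ z, arch P.G Set.univ {w} v z →
      z ∈ {z | arch P.G (Set.univ \ ({e | P.G.tgt e = w} \ {e₀})) {x} v z} := by
    intro z hz
    have h1 := arch_insert_of_not_reach hxR hz
    have h2 : arch P.G (Set.univ \ ({e | P.G.tgt e = w} \ {e₀})) (insert x {w}) v z := by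
      refine Relation.ReflTransGen.mono ?_ _ _ h1
      rintro a b ⟨hb, e, -, hsrc, htgt⟩
      subst htgt
      refine ⟨hb, e, show e ∈ Set.univ \ _ from ⟨Set.mem_univ _, fun hc => ?_⟩, hsrc, rfl⟩
      exact hb (hc.1 ▸ Set.mem_insert_of_mem _ rfl)
    exact arch_mono_A (Set.singleton_subset_iff.2 (Set.mem_insert _ _)) h2
  have he₀S₂ : e₀ ∈ Set.univ \ ({e : E | P.G.tgt e = w} \ {e₀}) :=
    ⟨Set.mem_univ _, fun hc => hc.2 rfl⟩
  have hwA : w ∈ {z | arch P.G (Set.univ \ ({e | P.G.tgt e = w} \ {e₀})) {x} v z} :=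
    (hRsub _ he₀s).tail ⟨by simp [Ne.symm hxw], e₀, he₀S₂, rfl, he₀t⟩
  set AA : Set V := {z | arch P.G (Set.univ \ ({e | P.G.tgt e = w} \ {e₀})) {x} v z}
    with hAAdef
  have hclos : ∀ e : E, P.G.src e ∈ AA → P.G.tgt e ∈ AA ∨ P.G.tgt e = x := by
    intro e he
    by_cases htx : P.G.tgt e = x
    · exact Or.inr htx
    by_cases htw : P.G.tgt e = w
    · exact Or.inl (htw ▸ hwA)
    · refine Or.inl (Relation.ReflTransGen.tail he
        ⟨by simpa using htx, e, show e ∈ Set.univ \ _ from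
          ⟨Set.mem_univ _, fun hc => htw hc.1⟩, rfl, rfl⟩)
  -- slot set identification
  have hslot : rho P.G (Set.univ \ ({e | P.G.tgt e = w} \ {e₀})) v x
      = {e : E | P.G.tgt e = x ∧ P.G.src e ∈ AA}.ncard := by
    refine set_congr_ncard (fun e => ⟨?_, ?_⟩)
    · rintro ⟨-, htgt, hreach⟩
      exact ⟨htgt, hreach⟩
    · rintro ⟨htgt, hreach⟩
      exact ⟨show e ∈ Set.univ \ _ from
        ⟨Set.mem_univ _, fun hc => hxw (htgt.symm.trans hc.1)⟩, htgt, hreach⟩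
  -- counting
  have hinx := ncard_split (fun e => P.G.tgt e = x) (fun e => P.G.src e ∈ AA)
  have houtx := ncard_split (fun e => P.G.src e = x) (fun e => P.G.tgt e ∈ AA)
  have hbalx := indeg_eq_outdeg P halt x
  have hbalZ := cut_balance P halt {z | z ∉ AA ∧ z ≠ x}
  have hsplZ1 := ncard_split (fun e => P.G.tgt e ∈ {z | z ∉ AA ∧ z ≠ x})
    (fun e => P.G.src e = x)
  have hsplZ2 := ncard_split (fun e => P.G.src e ∈ {z | z ∉ AA ∧ z ≠ x})
    (fun e => P.G.tgt e = x)
  have hsplZ3 := ncard_split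
    (fun e => P.G.src e ∈ {z | z ∉ AA ∧ z ≠ x} ∧ ¬ P.G.tgt e = x)
    (fun e => P.G.tgt e ∈ AA)
  have idA : {e : E | P.G.tgt e ∈ {z | z ∉ AA ∧ z ≠ x} ∧ P.G.src e = x}.ncard
      = {e : E | P.G.src e = x ∧ ¬ P.G.tgt e ∈ AA}.ncard := by
    refine set_congr_ncard (fun e => ⟨?_, ?_⟩)
    · rintro ⟨ht, hs⟩; exact ⟨hs, ht.1⟩
    · rintro ⟨hs, ht⟩; exact ⟨⟨ht, fun hc => hnoloop e (hs.trans hc.symm)⟩, hs⟩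
  have idB : {e : E | P.G.src e ∈ {z | z ∉ AA ∧ z ≠ x} ∧ P.G.tgt e = x}.ncard
      = {e : E | P.G.tgt e = x ∧ ¬ P.G.src e ∈ AA}.ncard := by
    refine set_congr_ncard (fun e => ⟨?_, ?_⟩)
    · rintro ⟨hs, ht⟩; exact ⟨ht, hs.1⟩
    · rintro ⟨ht, hs⟩; exact ⟨⟨hs, fun hc => hnoloop e (hc.trans ht.symm)⟩, ht⟩
  have idC : {e : E | P.G.tgt e ∈ {z | z ∉ AA ∧ z ≠ x} ∧ ¬ P.G.src e = x}.ncard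
      = {e : E | (P.G.src e ∈ {z | z ∉ AA ∧ z ≠ x} ∧ ¬ P.G.tgt e = x) ∧
          ¬ P.G.tgt e ∈ AA}.ncard := by
    refine set_congr_ncard (fun e => ⟨?_, ?_⟩)
    · rintro ⟨⟨htA, htx⟩, hsx⟩
      have hsA : P.G.src e ∉ AA := by
        intro hc
        rcases hclos e hc with h | h
        · exact htA h
        · exact htx h
      exact ⟨⟨⟨hsA, hsx⟩, htx⟩, htA⟩
    · rintro ⟨⟨⟨hsA, hsx⟩, htx⟩, htA⟩
      exact ⟨⟨htA, htx⟩, hsx⟩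
  have keyq : {e : E | P.G.tgt e = x ∧ P.G.src e ∈ AA}.ncard
      = {e : E | P.G.src e = x ∧ P.G.tgt e ∈ AA}.ncard +
        {e : E | (P.G.src e ∈ {z | z ∉ AA ∧ z ≠ x} ∧ ¬ P.G.tgt e = x) ∧
          P.G.tgt e ∈ AA}.ncard := by
    omega
  have husub : {e : E | P.G.src e = x ∧ P.G.tgt e = w} ⊆
      {e : E | P.G.src e = x ∧ P.G.tgt e ∈ AA} := by
    rintro e ⟨hs, ht⟩
    exact ⟨hs, ht ▸ hwA⟩
  have hule := Set.ncard_le_ncard husub (Set.toFinite _)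
  constructor
  · omega
  · intro hu1
    by_contra hrho
    push_neg at hrho
    have hb1 : {e : E | P.G.src e = x ∧ P.G.tgt e ∈ AA}.ncard = 1 := by omega
    have hq0 : {e : E | (P.G.src e ∈ {z | z ∉ AA ∧ z ≠ x} ∧ ¬ P.G.tgt e = x) ∧
        P.G.tgt e ∈ AA}.ncard = 0 := by omega
    have ha1 : {e : E | P.G.tgt e = x ∧ P.G.src e ∈ AA}.ncard = 1 := by omega
    have hBeq : {e : E | P.G.src e = x ∧ P.G.tgt e ∈ AA}
        = {e : E | P.G.src e = x ∧ P.G.tgt e = w} :=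
      (Set.eq_of_subset_of_ncard_le husub (by omega) (Set.toFinite _)).symm
    obtain ⟨e₂, he₂⟩ := Set.ncard_eq_one.1 hb1
    obtain ⟨e₁, he₁⟩ := Set.ncard_eq_one.1 ha1
    have hQempty := (Set.ncard_eq_zero (Set.toFinite _)).1 hq0
    -- crossing property
    have hcross : ∀ e : E, e ≠ e₁ → e ≠ e₂ → (P.G.src e ∈ AA ↔ P.G.tgt e ∈ AA) := by
      intro e hee₁ hee₂
      constructor
      · intro hs
        rcases hclos e hs with h | h
        · exact h
        · exact absurd (show e ∈ {e : E | P.G.tgt e = x ∧ P.G.src e ∈ AA} from ⟨h, hs⟩)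
            (by rw [he₁]; simpa using hee₁)
      · intro ht
        by_cases hsx : P.G.src e = x
        · exact absurd (show e ∈ {e : E | P.G.src e = x ∧ P.G.tgt e ∈ AA} from ⟨hsx, ht⟩)
            (by rw [he₂]; simpa using hee₂)
        by_cases hsA : P.G.src e ∈ AA
        · exact hsA
        · exact absurd (show e ∈ {e : E |
              (P.G.src e ∈ {z | z ∉ AA ∧ z ≠ x} ∧ ¬ P.G.tgt e = x) ∧ P.G.tgt e ∈ AA} from
              ⟨⟨⟨hsA, hsx⟩, fun hc => hxA (hc ▸ ht)⟩, ht⟩)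
            (by rw [hQempty]; exact Set.notMem_empty e)
    have hpath := hcond3 e₁ e₂ x v
    have hstay : ∀ b, Relation.ReflTransGen (P.G.ustep {e | e ≠ e₁ ∧ e ≠ e₂}) x b →
        b ∉ AA := by
      intro b hb
      induction hb with
      | refl => exact hxA
      | tail h' st ih =>
          obtain ⟨e, heM, hor⟩ := st
          have hiff := hcross e heM.1 heM.2
          rcases hor with ⟨hsrc, htgt⟩ | ⟨hsrc, htgt⟩
          · exact fun hc => ih (hsrc ▸ hiff.2 (htgt ▸ hc))
          · exact fun hc => ih (htgt ▸ hiff.1 (hsrc ▸ hc))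
    exact hstay v hpath Relation.ReflTransGen.refl

lemma treeCount_eq (G : MultiDigraph V E) (v : V) :
    G.treeCount v = (Trees G Set.univ v).ncard := by
  unfold MultiDigraph.treeCount Trees
  congr 1
  ext T
  simp only [Set.mem_setOf_eq, Set.subset_univ, and_true]

lemma exists_ne_of_planar (P : PlanarDigraph V E) (hnoloop : ∀ e : E, P.G.src e ≠ P.G.tgt e)
    (w : V) : ∃ v : V, v ≠ w := by
  by_contra hc
  push_neg at hc
  have hE : IsEmpty E := ⟨fun e => hnoloop e ((hc (P.G.src e)).trans (hc (P.G.tgt e)).symm)⟩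
  haveI : Unique V := ⟨⟨w⟩, hc⟩
  have h1 : Nat.card V = 1 := Nat.card_unique
  have h2 : Nat.card E = 0 := by simp
  haveI : IsEmpty (E × Bool) := by infer_instance
  haveI : IsEmpty (Quot fun d d' : E × Bool => d' = P.rot (d.1, !d.2)) := by
    constructor
    intro q
    obtain ⟨d, -⟩ := Quot.exists_rep q
    exact IsEmpty.false d
  have h3 : Nat.card (Quot fun d d' : E × Bool => d' = P.rot (d.1, !d.2)) = 0 := by simp
  have := P.euler
  omega

end BK

/-- **The in-degree of any vertex bounds some spanning-tree count from
below.**  Let `G` be a prime planar digraph in which incoming and outgoing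
edges alternate at every vertex, and let `w` be a vertex of in-degree `n`.
Then there is a vertex `v ≠ w` such that `G` has at least `n` directed
spanning subtrees with origin `v`. -/
theorem indegree_le_treeCount_of_prime {V E : Type} [Fintype V] [Fintype E]
    (P : PlanarDigraph V E) (halt : P.Alternating) (hprime : P.G.Prime)
    (w : V) :
    ∃ v : V, v ≠ w ∧ {e : E | P.G.tgt e = w}.ncard ≤ P.G.treeCount v := by
  classical
  open BK in
  obtain ⟨hnoloop, hcond2, hcond3⟩ := hprime
  by_cases hn0 : {e : E | P.G.tgt e = w}.ncard = 0
  · obtain ⟨v, hv⟩ := BK.exists_ne_of_planar P hnoloop w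
    exact ⟨v, hv, hn0 ▸ Nat.zero_le _⟩
  have hne : {e : E | P.G.tgt e = w}.Nonempty := by
    rcases Set.eq_empty_or_nonempty {e : E | P.G.tgt e = w} with h | h
    · exact absurd (by rw [h]; simp) hn0
    · exact h
  obtain ⟨estar, hestar⟩ := hne
  have hvw : P.G.src estar ≠ w := fun h => hnoloop estar (h.trans hestar.symm)
  set v : V := P.G.src estar with hvdef
  refine ⟨v, hvw, ?_⟩
  have hwv : w ≠ v := Ne.symm hvw
  have hstrong : ∀ a b, BK.arch P.G Set.univ ∅ a b :=
    BK.strong_conn P halt hcond3 estar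
  -- reachability set avoiding w
  set R : Set V := {z | BK.arch P.G Set.univ {w} v z} with hRdef
  set USet : Set V := {x | ¬ BK.arch P.G Set.univ {w} v x ∧ x ≠ w} with hUdef
  set InR : Set E := {e | P.G.tgt e = w ∧ P.G.src e ∈ R} with hInRdef
  -- the count of in-edges decomposes as r + u
  have hsplitn := BK.ncard_split (E := E) (fun e => P.G.tgt e = w)
    (fun e => P.G.src e ∈ R)
  have hwR : w ∉ R := fun hc =>
    hvw ((BK.arch_endpoint_not_mem hc rfl) ▸ rfl)
  have huid : {e : E | P.G.tgt e = w ∧ ¬ P.G.src e ∈ R}.ncard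
      = {e : E | P.G.tgt e = w ∧ P.G.src e ∈ USet}.ncard := by
    refine BK.set_congr_ncard (fun e => ⟨?_, ?_⟩)
    · rintro ⟨ht, hs⟩
      exact ⟨ht, hs, fun hc => hnoloop e (hc.trans ht.symm)⟩
    · rintro ⟨ht, hs, -⟩
      exact ⟨ht, hs⟩
  have hufib : {e : E | P.G.tgt e = w ∧ P.G.src e ∈ USet}.ncard
      = ∑ x ∈ Finset.univ.erase v,
        {e : E | (P.G.tgt e = w ∧ P.G.src e ∈ USet) ∧ P.G.src e = x}.ncard :=
    BK.ncard_fiber_sum2 _ _ _ (fun e he => Finset.mem_erase.2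
      ⟨fun hc => he.2.1 (hc ▸ Relation.ReflTransGen.refl), Finset.mem_univ _⟩)
  -- per-class analysis
  have hclass : ∀ e₀ ∈ InR,
      2 + {e : E | P.G.tgt e = w ∧ ¬ P.G.src e ∈ R}.ncard ≤
        2 * (BK.Trees P.G (Set.univ \ ({e | P.G.tgt e = w} \ {e₀})) v).ncard := by
    rintro e₀ ⟨he₀t, he₀s⟩
    -- root-connectivity of the restricted edge set
    have htransfer : ∀ z, BK.arch P.G Set.univ {w} v z →
        BK.arch P.G (Set.univ \ ({e | P.G.tgt e = w} \ {e₀})) {w} v z := by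
      intro z hz
      refine Relation.ReflTransGen.mono ?_ _ _ hz
      rintro a b ⟨hb, e, -, hsrc, htgt⟩
      subst htgt
      exact ⟨hb, e, ⟨Set.mem_univ _, fun hc => hb hc.1⟩, hsrc, rfl⟩
    have he₀S₂ : e₀ ∈ Set.univ \ ({e : E | P.G.tgt e = w} \ {e₀}) :=
      ⟨Set.mem_univ _, fun hc => hc.2 rfl⟩
    have hw2 : BK.arch P.G (Set.univ \ ({e | P.G.tgt e = w} \ {e₀})) ∅ v w :=
      (BK.arch_mono_A (Set.empty_subset _) (htransfer _ he₀s)).tail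
        ⟨Set.notMem_empty _, e₀, he₀S₂, rfl, he₀t⟩
    have hS₂conn : ∀ y, BK.arch P.G (Set.univ \ ({e | P.G.tgt e = w} \ {e₀})) ∅ v y := by
      intro y
      have h := hstrong w y
      induction h with
      | refl => exact hw2
      | tail h' st ih =>
          obtain ⟨-, e, -, hsrc, htgt⟩ := st
          by_cases heS₂ : e ∈ Set.univ \ ({e : E | P.G.tgt e = w} \ {e₀})
          · exact ih.tail ⟨Set.notMem_empty _, e, heS₂, hsrc, htgt⟩
          · have hew : P.G.tgt e = w := by
              by_contra hc
              exact heS₂ ⟨Set.mem_univ _, fun hc' => hc hc'.1⟩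
            exact htgt ▸ hew ▸ hw2
    have hlemT := BK.lemT (v := v) _ (Set.univ \ ({e | P.G.tgt e = w} \ {e₀})) rfl hS₂conn
    -- lower bound the slot sum by the U-fibres
    have hperx : ∀ x ∈ Finset.univ.erase v,
        {e : E | (P.G.tgt e = w ∧ P.G.src e ∈ USet) ∧ P.G.src e = x}.ncard ≤
          2 * (BK.rho P.G (Set.univ \ ({e | P.G.tgt e = w} \ {e₀})) v x - 1) := by
      intro x hx
      by_cases hxU : x ∈ USet
      · have hcomm : {e : E | (P.G.tgt e = w ∧ P.G.src e ∈ USet) ∧ P.G.src e = x}.ncard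
            = {e : E | P.G.src e = x ∧ P.G.tgt e = w}.ncard := by
          refine BK.set_congr_ncard (fun e => ⟨?_, ?_⟩)
          · rintro ⟨⟨ht, -⟩, hs⟩; exact ⟨hs, ht⟩
          · rintro ⟨hs, ht⟩; exact ⟨⟨ht, hs ▸ hxU⟩, hs⟩
        rw [hcomm]
        have hpock := BK.pocket P halt hnoloop hcond3 v w x e₀ hvw hxU.1 hxU.2 he₀t he₀s
        obtain ⟨hp1, hp2⟩ := hpock
        by_cases hu1 : {e : E | P.G.src e = x ∧ P.G.tgt e = w}.ncard = 1
        · have := hp2 hu1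
          omega
        · omega
      · have hz : {e : E | (P.G.tgt e = w ∧ P.G.src e ∈ USet) ∧ P.G.src e = x} = ∅ := by
          ext e
          simp only [Set.mem_setOf_eq, Set.mem_empty_iff_false, iff_false]
          rintro ⟨⟨-, hU⟩, hs⟩
          exact hxU (hs ▸ hU)
        rw [hz]
        simp
    have husum : {e : E | P.G.tgt e = w ∧ ¬ P.G.src e ∈ R}.ncard ≤
        2 * ∑ y ∈ Finset.univ.erase v,
          (BK.rho P.G (Set.univ \ ({e | P.G.tgt e = w} \ {e₀})) v y - 1) := by
      rw [huid, hufib]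
      refine le_trans (Finset.sum_le_sum hperx) ?_
      rw [Finset.mul_sum]
    omega
  -- assemble: sum over the classes
  have hclasses_le : ∑ e₀ ∈ InR.toFinset,
      (BK.Trees P.G (Set.univ \ ({e | P.G.tgt e = w} \ {e₀})) v).ncard ≤
      (BK.Trees P.G Set.univ v).ncard := by
    refine BK.sum_ncard_le_ncard _ _ _ (fun f hf => ?_) (fun f hf g hg hfg => ?_)
    · rintro T ⟨hTree, -⟩
      exact ⟨hTree, Set.subset_univ _⟩
    · rw [Set.mem_toFinset] at hf hg
      rw [Set.disjoint_left]
      rintro T ⟨hTree1, hsub1⟩ ⟨-, hsub2⟩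
      obtain ⟨p, ⟨hpT, hpt⟩, -⟩ := hTree1.2.1 w hwv
      have h1 : p = f := by
        have := hsub1 hpT
        by_contra hc
        exact this.2 ⟨hpt, hc⟩
      have h2 : p = g := by
        have := hsub2 hpT
        by_contra hc
        exact this.2 ⟨hpt, hc⟩
      exact hfg (h1 ▸ h2)
  have hInRcard : InR.toFinset.card = {e : E | P.G.tgt e = w ∧ P.G.src e ∈ R}.ncard := by
    rw [Set.ncard_eq_toFinset_card']
  -- constant lower bound inside the sum
  have hconst : InR.toFinset.card * (2 + {e : E | P.G.tgt e = w ∧ ¬ P.G.src e ∈ R}.ncard)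
      ≤ 2 * ∑ e₀ ∈ InR.toFinset,
        (BK.Trees P.G (Set.univ \ ({e | P.G.tgt e = w} \ {e₀})) v).ncard := by
    rw [Finset.mul_sum]
    calc InR.toFinset.card * (2 + _)
        = ∑ _e₀ ∈ InR.toFinset, (2 + {e : E | P.G.tgt e = w ∧ ¬ P.G.src e ∈ R}.ncard) := by
          rw [Finset.sum_const, smul_eq_mul]
      _ ≤ _ := Finset.sum_le_sum (fun e₀ he₀ => hclass e₀ (Set.mem_toFinset.1 he₀))
  -- case split on u
  rw [BK.treeCount_eq]
  set r : ℕ := {e : E | P.G.tgt e = w ∧ P.G.src e ∈ R}.ncard with hrdef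
  set u : ℕ := {e : E | P.G.tgt e = w ∧ ¬ P.G.src e ∈ R}.ncard with hudef
  by_cases hu0 : u = 0
  · -- here r alone suffices
    have hkey : r * 2 ≤ 2 * (BK.Trees P.G Set.univ v).ncard := by
      calc r * 2 = InR.toFinset.card * (2 + u) := by rw [hInRcard, hu0]
        _ ≤ 2 * ∑ e₀ ∈ InR.toFinset, _ := hconst
        _ ≤ 2 * (BK.Trees P.G Set.univ v).ncard := Nat.mul_le_mul_left 2 hclasses_le
    omega
  · -- here r ≥ 2 and the compensation kicks in
    have hUex : ∃ x, ¬ BK.arch P.G Set.univ {w} v x ∧ x ≠ w := by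
      have : {e : E | P.G.tgt e = w ∧ ¬ P.G.src e ∈ R}.Nonempty := by
        rcases Set.eq_empty_or_nonempty {e : E | P.G.tgt e = w ∧ ¬ P.G.src e ∈ R}
          with h | h
        · exact absurd (by rw [hudef, h]; simp) hu0
        · exact h
      obtain ⟨e, he⟩ := this
      exact ⟨P.G.src e, he.2, fun hc => hnoloop e (hc.trans he.1.symm)⟩
    have hr2 : 2 ≤ r := BK.r_ge_two P halt hcond3 v w hvw estar hUex
    have hkey : r * (2 + u) ≤ 2 * (BK.Trees P.G Set.univ v).ncard := by
      calc r * (2 + u) = InR.toFinset.card * (2 + u) := by rw [hInRcard]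
        _ ≤ 2 * ∑ e₀ ∈ InR.toFinset, _ := hconst
        _ ≤ 2 * (BK.Trees P.G Set.univ v).ncard := Nat.mul_le_mul_left 2 hclasses_le
    have hexp : r * (2 + u) = 2 * r + r * u := by ring
    have hru : 2 * u ≤ r * u := Nat.mul_le_mul_right u hr2
    omega
end
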